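/- arXiv:1205.1627 — 9 statements merged into one kernel-verified Lean document; each statement's English description precedes it below -/
import Mathlib

section
/- Every graph with maximum degree Δ admits a decomposition of its edge set into at most ⌈(Δ+1)/2⌉ closed or open walks such that every vertex appears at most ⌈(Δ+1)/2⌉ times in total among the walks. That is, the folded linear arboricity of a graph with maximum degree Δ is at most ⌈(Δ+1)/2⌉. -/
open SimpleGraph

namespace FLAaux

variable {V : Type*} [DecidableEq V] {G : SimpleGraph V}

/-- count of `v` in support via darts' second coordinates. -/
lemma count_support_snd {u z : V} (W : G.Walk u z) (v : V) :
    W.support.count v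
      = W.darts.countP (fun d => d.toProd.2 = v) + (if u = v then 1 else 0) := by
  induction W with
  | nil => simp [List.count_cons]
  | @cons a b c h p ih =>
      simp only [SimpleGraph.Walk.support_cons, SimpleGraph.Walk.darts_cons,
        List.count_cons, List.countP_cons, ih]
      by_cases hav : a = v <;> by_cases hbv : b = v <;> simp [hav, hbv] <;> omega

/-- count of `v` in support via darts' first coordinates. -/
lemma count_support_fst {u z : V} (W : G.Walk u z) (v : V) :
    W.support.count v
      = W.darts.countP (fun d => d.toProd.1 = v) + (if z = v then 1 else 0) := by
  induction W with
  | nil => simp [List.count_cons]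
  | @cons a b c h p ih =>
      simp only [SimpleGraph.Walk.support_cons, SimpleGraph.Walk.darts_cons,
        List.count_cons, List.countP_cons, ih]
      by_cases hav : a = v <;> simp [hav] <;> omega

/-- number of edges of the walk incident to `v` counted with multiplicity. -/
lemma countP_edges {u z : V} (W : G.Walk u z) (v : V) :
    W.edges.countP (fun e => v ∈ e)
      = W.darts.countP (fun d => d.toProd.1 = v)
        + W.darts.countP (fun d => d.toProd.2 = v) := by
  induction W with
  | nil => simp
  | @cons a b c h p ih =>
      simp only [SimpleGraph.Walk.edges_cons, SimpleGraph.Walk.darts_cons,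
        List.countP_cons, ih]
      have hne : a ≠ b := h.ne
      by_cases hav : a = v
      · by_cases hbv : b = v
        · exact absurd (hav.trans hbv.symm) hne
        · simp [hav, hbv, Sym2.mem_iff]; omega
      · have hav' : ¬ (v = a) := fun h' => hav h'.symm
        by_cases hbv : b = v
        · simp [hav, hav', hbv, Sym2.mem_iff]; omega
        · have hbv' : ¬ (v = b) := fun h' => hbv h'.symm
          simp [hav, hav', hbv, hbv', Sym2.mem_iff]

lemma first_dart_fst {u z : V} (W : G.Walk u z) (h : W.length ≠ 0) :
    1 ≤ W.darts.countP (fun d => d.toProd.1 = u) := by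
  cases W with
  | nil => simp at h
  | cons h p => simp [List.countP_cons]

/-- the bound function. -/
def g (n : ℕ) : ℕ := if n = 0 then 0 else (n + 2) / 2

lemma arith_key (A B c D D' iu iz : ℕ) (hiu : iu ≤ 1) (hiz : iz ≤ 1)
    (hcA : c = A + iz) (hcB : c = B + iu)
    (hDD' : D = D' + (A + B)) (hD'0 : 1 ≤ iu + iz → D' = 0) (hA1 : iu = 1 → 1 ≤ A) :
    c + g D' ≤ g D := by
  unfold g; split_ifs <;> omega

lemma g_mono {m n : ℕ} (h : m ≤ n) : g m ≤ g n := by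
  unfold g; split_ifs <;> omega

/-- Main inductive lemma: edges in `s` can be covered by walks with each vertex `v`
appearing at most `g (deg_s v)` times. -/
lemma exists_cover (G : SimpleGraph V) [Fintype V] [DecidableRel G.Adj] :
    ∀ (n : ℕ) (s : Finset (Sym2 V)), s.card ≤ n → ↑s ⊆ G.edgeSet →
    ∃ ws : List ((u : V) × (v : V) × G.Walk u v),
      (∀ e ∈ s, ∃ w ∈ ws, e ∈ w.2.2.edges) ∧
      ∀ v : V, (ws.map fun w => w.2.2.support.count v).sum
            ≤ g ((s.filter (fun e => v ∈ e)).card) := by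
  intro n
  induction n with
  | zero =>
      intro s hcard _
      have : s = ∅ := Finset.card_eq_zero.mp (Nat.le_zero.mp hcard)
      subst this
      exact ⟨[], by simp, by simp⟩
  | succ n ih =>
      intro s hcard hsub
      rcases s.eq_empty_or_nonempty with rfl | hne
      · exact ⟨[], by simp, by simp⟩
      classical
      -- property: there is a trail of length k with edges in s
      set P : ℕ → Prop := fun k => ∃ (u z : V) (W : G.Walk u z),
        W.IsTrail ∧ (∀ e ∈ W.edges, e ∈ s) ∧ W.length = k with hP
      -- any trail with edges in s has length ≤ s.card
      have hbdd : ∀ (u z : V) (W : G.Walk u z), W.IsTrail → (∀ e ∈ W.edges, e ∈ s) →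
          W.length ≤ s.card := by
        intro u z W hW hWs
        have h1 : W.edges.toFinset ⊆ s := fun e he => hWs e (List.mem_toFinset.mp he)
        have h2 : W.edges.toFinset.card = W.edges.length :=
          List.toFinset_card_of_nodup hW.edges_nodup
        have := Finset.card_le_card h1
        rw [h2, SimpleGraph.Walk.length_edges] at this
        exact this
      have hP1 : P 1 := by
        obtain ⟨e, he⟩ := hne
        have heG : e ∈ G.edgeSet := hsub he
        induction e with
        | h a b =>
          have hadj : G.Adj a b := (SimpleGraph.mem_edgeSet G).mp heG
          refine ⟨a, b, SimpleGraph.Walk.cons hadj SimpleGraph.Walk.nil, ?_, ?_, rfl⟩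
          · simp [SimpleGraph.Walk.isTrail_def]
          · intro e' he'
            simp only [SimpleGraph.Walk.edges_cons, SimpleGraph.Walk.edges_nil,
              List.mem_singleton] at he'
            subst he'; exact he
      have hscard1 : 1 ≤ s.card := Finset.card_pos.mpr hne
      set N := Nat.findGreatest P s.card with hN
      have hPN : P N := Nat.findGreatest_spec hscard1 hP1
      have hN1 : 1 ≤ N := Nat.le_findGreatest hscard1 hP1
      obtain ⟨u, z, W, hWt, hWs, hWl⟩ := hPN
      -- maximality
      have hmax : ∀ (u' z' : V) (W' : G.Walk u' z'), W'.IsTrail →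
          (∀ e ∈ W'.edges, e ∈ s) → W'.length ≤ N := by
        intro u' z' W' h1 h2
        by_contra hlt
        exact Nat.findGreatest_is_greatest (lt_of_not_ge hlt) (hbdd _ _ _ h1 h2)
          ⟨u', z', W', h1, h2, rfl⟩
      -- all s-edges at u are in W (else we could prepend)
      have hu_sat : ∀ e ∈ s, u ∈ e → e ∈ W.edges := by
        intro e he hue
        by_contra hnot
        obtain ⟨x, rfl⟩ := Sym2.mem_iff_exists.mp hue
        have hadj : G.Adj u x := (SimpleGraph.mem_edgeSet G).mp (hsub he)
        have htr : (SimpleGraph.Walk.cons hadj.symm W).IsTrail := by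
          rw [SimpleGraph.Walk.isTrail_cons]
          refine ⟨hWt, ?_⟩
          rwa [Sym2.eq_swap]
        have hle := hmax _ _ _ htr (by
          intro e' he'
          simp only [SimpleGraph.Walk.edges_cons, List.mem_cons] at he'
          rcases he' with rfl | he'
          · rwa [Sym2.eq_swap]
          · exact hWs e' he')
        simp [SimpleGraph.Walk.length_cons, hWl] at hle
      -- all s-edges at z are in W (else we could append)
      have hz_sat : ∀ e ∈ s, z ∈ e → e ∈ W.edges := by
        intro e he hze
        by_contra hnot
        obtain ⟨x, rfl⟩ := Sym2.mem_iff_exists.mp hze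
        have hadj : G.Adj z x := (SimpleGraph.mem_edgeSet G).mp (hsub he)
        have htr : (W.concat hadj).IsTrail := by
          rw [SimpleGraph.Walk.isTrail_def, SimpleGraph.Walk.edges_concat, List.concat_eq_append]
          simp [List.nodup_append, hWt.edges_nodup, hnot]
          exact fun a ha h => hnot (h ▸ ha)
        have hle := hmax _ _ _ htr (by
          intro e' he'
          rw [SimpleGraph.Walk.edges_concat, List.concat_eq_append, List.mem_append] at he'
          rcases he' with he' | he'
          · exact hWs e' he'
          · simp only [List.mem_singleton] at he'; subst he'; exact he)
        simp [SimpleGraph.Walk.length_concat, hWl] at hle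
      -- the reduced edge set
      set s' : Finset (Sym2 V) := s \ W.edges.toFinset with hs'
      have hWfin : W.edges.toFinset ⊆ s := fun e he => hWs e (List.mem_toFinset.mp he)
      have hWne : W.edges ≠ [] := by
        intro h
        have := SimpleGraph.Walk.length_edges W
        rw [h] at this
        simp at this
        omega
      have hs'card : s'.card ≤ n := by
        have h1 : s'.card < s.card := by
          apply Finset.card_lt_card
          constructor
          · exact Finset.sdiff_subset
          · intro hsub2
            obtain ⟨e, he⟩ := List.exists_mem_of_ne_nil _ hWne
            have heW : e ∈ W.edges.toFinset := List.mem_toFinset.mpr he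
            have := hsub2 (hWfin heW)
            rw [Finset.mem_sdiff] at this
            exact this.2 heW
        omega
      obtain ⟨ws', hcov', hcnt'⟩ := ih s' hs'card (fun e he => hsub (Finset.mem_sdiff.mp he).1)
      refine ⟨⟨u, z, W⟩ :: ws', ?_, ?_⟩
      · intro e he
        by_cases heW : e ∈ W.edges
        · exact ⟨⟨u, z, W⟩, by simp, heW⟩
        · obtain ⟨w, hw1, hw2⟩ := hcov' e (Finset.mem_sdiff.mpr ⟨he, fun h => heW (List.mem_toFinset.mp h)⟩)
          exact ⟨w, List.mem_cons_of_mem _ hw1, hw2⟩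
      · intro v
        simp only [List.map_cons, List.sum_cons]
        -- notation
        set A := W.darts.countP (fun d => d.toProd.1 = v) with hA
        set B := W.darts.countP (fun d => d.toProd.2 = v) with hB
        set D := (s.filter (fun e => v ∈ e)).card with hD
        set D' := (s'.filter (fun e => v ∈ e)).card with hD'
        have hcA : W.support.count v = A + (if z = v then 1 else 0) := count_support_fst W v
        have hcB : W.support.count v = B + (if u = v then 1 else 0) := count_support_snd W v
        have hE : W.edges.countP (fun e => v ∈ e) = A + B := countP_edges W v
        -- D = D' + (A + B)
        have hfilt : (s.filter (fun e => v ∈ e)) \ (W.edges.toFinset.filter (fun e => v ∈ e))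
            = s'.filter (fun e => v ∈ e) := by
          ext e
          simp only [Finset.mem_sdiff, Finset.mem_filter, hs', List.mem_toFinset]
          tauto
        have hWcard : (W.edges.toFinset.filter (fun e => v ∈ e)).card = A + B := by
          rw [← hE]
          rw [List.countP_eq_length_filter]
          have hnd : (W.edges.filter (fun e => decide (v ∈ e))).Nodup :=
            hWt.edges_nodup.filter _
          rw [← List.toFinset_card_of_nodup hnd]
          congr 1
          ext e
          simp [List.mem_filter]
        have hDD' : D = D' + (A + B) := by
          have hsubf : (W.edges.toFinset.filter (fun e => v ∈ e)) ⊆ (s.filter (fun e => v ∈ e)) :=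
            Finset.filter_subset_filter _ hWfin
          have hle := Finset.card_le_card hsubf
          have hcd := Finset.card_sdiff_of_subset hsubf
          rw [hfilt] at hcd
          omega
        -- if v is an endpoint, all its s-edges are used
        have hD'0 : (u = v ∨ z = v) → D' = 0 := by
          rintro h
          rw [hD', Finset.card_eq_zero]
          ext e
          simp only [Finset.mem_filter, Finset.mem_sdiff, List.mem_toFinset, hs',
            Finset.notMem_empty, iff_false, not_and, and_imp]
          intro hes hnW hve
          rcases h with rfl | rfl
          · exact hnW (hu_sat e hes hve)
          · exact hnW (hz_sat e hes hve)
        have hA1 : u = v → 1 ≤ A := by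
          rintro rfl
          exact first_dart_fst W (by omega)
        have hIH := hcnt' v
        -- final arithmetic
        have harith : W.support.count v + g D' ≤ g D := by
          refine arith_key A B _ D D' (if u = v then 1 else 0) (if z = v then 1 else 0)
            (by split_ifs <;> omega) (by split_ifs <;> omega) hcA hcB hDD' ?_ ?_
          · intro hh
            apply hD'0
            by_cases h1 : u = v
            · exact Or.inl h1
            · by_cases h2 : z = v
              · exact Or.inr h2
              · simp [h1, h2] at hh
          · intro hh
            by_cases h1 : u = v
            · exact hA1 h1
            · simp [h1] at hh
        calc W.support.count v + (List.map (fun w => List.count v w.snd.snd.support) ws').sum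
            ≤ W.support.count v + g D' := by
              rw [hD']; exact Nat.add_le_add_left hIH _
          _ ≤ g D := harith

end FLAaux

/-- The folded linear arboricity of a graph with maximum degree `Δ` is at
most `⌈(Δ+1)/2⌉ = (Δ+2)/2`: the edges can be covered by walks such that every vertex
appears at most `⌈(Δ+1)/2⌉` times in total among the walks. -/
theorem folded_linear_arboricity_le {V : Type*} [Fintype V] [DecidableEq V]
    (G : SimpleGraph V) [DecidableRel G.Adj] (Δ : ℕ) (hΔ : ∀ v, G.degree v ≤ Δ) :
    ∃ ws : List ((u : V) × (v : V) × G.Walk u v),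
      (∀ e ∈ G.edgeSet, ∃ w ∈ ws, e ∈ w.2.2.edges) ∧
      (∀ v : V, (ws.map fun w => w.2.2.support.count v).sum ≤ (Δ + 2) / 2) := by
  obtain ⟨ws, hcov, hcnt⟩ := FLAaux.exists_cover G G.edgeFinset.card G.edgeFinset le_rfl
    (by simp [SimpleGraph.edgeFinset])
  refine ⟨ws, ?_, ?_⟩
  · intro e he
    exact hcov e (SimpleGraph.mem_edgeFinset.mpr he)
  · intro v
    refine le_trans (hcnt v) ?_
    have h1 : (G.edgeFinset.filter (fun e => v ∈ e)).card = G.degree v := by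
      rw [← SimpleGraph.card_incidenceFinset_eq_degree]
      congr 1
      rw [SimpleGraph.incidenceFinset_eq_filter]
    rw [h1]
    have h2 := hΔ v
    unfold FLAaux.g
    split_ifs <;> omega
end

section
/- If G is a Δ-regular graph with Δ ≥ 1, then its folded linear arboricity is at least ⌈(Δ+1)/2⌉. -/
lemma walk_filter_aux {V : Type*} [DecidableEq V] {G : SimpleGraph V} {a b : V}
    (w : G.Walk a b) (v : V) :
    (w.edges.filter (fun e => v ∈ e)).length + (if v = a then 1 else 0)
      + (if v = b then 1 else 0) ≤ 2 * w.support.count v := by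
  induction w with
  | nil =>
    simp only [SimpleGraph.Walk.edges_nil, List.filter_nil, List.length_nil,
      SimpleGraph.Walk.support_nil, List.count_cons, List.count_nil]
    split_ifs with h1 h2 h2 <;> simp_all
  | @cons a b' c h p ih =>
    simp only [SimpleGraph.Walk.edges_cons, SimpleGraph.Walk.support_cons,
      List.filter_cons, List.count_cons, List.count_nil] at *
    by_cases hva : v = a
    · subst hva
      have : (v ∈ s(v, b')) := by simp
      simp only [this, if_pos] at *
      split_ifs at ih ⊢ <;> simp_all <;> omega
    · by_cases hvb : v = b'
      · subst hvb
        have : (v ∈ s(a, v)) := by simp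
        simp only [this] at *
        split_ifs at ih ⊢ <;> simp_all <;> omega
      · have : ¬ (v ∈ s(a, b')) := by simp [hva, hvb]
        simp only [this] at *
        split_ifs at ih ⊢ <;> simp_all <;> omega

lemma filter_flatMap_len {α β : Type*} (f : α → List β) (p : β → Bool) (l : List α) :
    ((l.flatMap f).filter p).length = (l.map fun a => ((f a).filter p).length).sum := by
  induction l with
  | nil => simp
  | cons a l ih => simp [List.flatMap_cons, List.filter_append, ih]

/-- If `G` is a `Δ`-regular graph with `Δ ≥ 1`, then its folded linear
arboricity is at least `⌈(Δ+1)/2⌉ = (Δ+2)/2`: in every cover of the edges of `G` by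
walks, some vertex appears at least `⌈(Δ+1)/2⌉` times in total among the walks. -/
theorem folded_linear_arboricity_ge_of_regular {V : Type*} [Fintype V] [DecidableEq V]
    [Nonempty V] (G : SimpleGraph V) [DecidableRel G.Adj] (Δ : ℕ)
    (hreg : G.IsRegularOfDegree Δ) (hΔ1 : 1 ≤ Δ) :
    ∀ ws : List ((u : V) × (v : V) × G.Walk u v),
      (∀ e ∈ G.edgeSet, ∃ w ∈ ws, e ∈ w.2.2.edges) →
      ∃ v : V, (Δ + 2) / 2 ≤ (ws.map fun w => w.2.2.support.count v).sum := by
  intro ws hcov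
  -- get some edge, hence some walk in ws
  obtain ⟨x⟩ := ‹Nonempty V›
  have hx : 0 < (G.neighborFinset x).card := by
    rw [G.card_neighborFinset_eq_degree, hreg x]; omega
  obtain ⟨u, hu⟩ := Finset.card_pos.mp hx
  rw [SimpleGraph.mem_neighborFinset] at hu
  obtain ⟨w0, hw0, _⟩ := hcov s(x, u) (G.mem_edgeSet.mpr hu)
  set v := w0.1 with hv
  refine ⟨v, ?_⟩
  -- L : all edges of all walks
  set L := ws.flatMap (fun w => w.2.2.edges) with hL
  -- Δ ≤ number of occurrences of edges at v in L
  have hΔL : Δ ≤ (L.filter (fun e => v ∈ e)).length := by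
    have hinj : Set.InjOn (fun u => s(v, u)) (G.neighborFinset v) := by
      intro a _ b _ hab
      simpa using (Sym2.congr_right).mp hab
    have hmaps : ∀ a ∈ G.neighborFinset v,
        s(v, a) ∈ (L.filter (fun e => v ∈ e)).toFinset := by
      intro a ha
      rw [SimpleGraph.mem_neighborFinset] at ha
      obtain ⟨w, hw, he⟩ := hcov s(v, a) (G.mem_edgeSet.mpr ha)
      rw [List.mem_toFinset, List.mem_filter]
      exact ⟨List.mem_flatMap.mpr ⟨w, hw, he⟩, by simp⟩
    calc Δ = (G.neighborFinset v).card := by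
              rw [G.card_neighborFinset_eq_degree, hreg v]
      _ ≤ (L.filter (fun e => v ∈ e)).toFinset.card :=
            Finset.card_le_card_of_injOn _ hmaps hinj
      _ ≤ (L.filter (fun e => v ∈ e)).length := L.filter _ |>.toFinset_card_le
  -- length of filter on flatMap = sum of per-walk filter lengths
  have hsplit : (L.filter (fun e => v ∈ e)).length
      = (ws.map (fun w => (w.2.2.edges.filter (fun e => v ∈ e)).length)).sum :=
    filter_flatMap_len _ _ _
  -- split ws at w0
  obtain ⟨l1, l2, rfl⟩ := List.append_of_mem hw0
  have key : ∀ w : (u : V) × (v : V) × G.Walk u v,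
      (w.2.2.edges.filter (fun e => v ∈ e)).length ≤ 2 * w.2.2.support.count v := by
    intro w
    have := walk_filter_aux w.2.2 v
    split_ifs at this <;> omega
  have key0 : (w0.2.2.edges.filter (fun e => v ∈ e)).length + 1
      ≤ 2 * w0.2.2.support.count v := by
    have := walk_filter_aux w0.2.2 v
    rw [if_pos rfl] at this
    split_ifs at this <;> omega
  have hsum1 : (l1.map (fun w => (w.2.2.edges.filter (fun e => v ∈ e)).length)).sum
      ≤ ((l1.map fun w => 2 * w.2.2.support.count v)).sum :=
    List.sum_le_sum (fun w _ => key w)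
  have hsum2 : (l2.map (fun w => (w.2.2.edges.filter (fun e => v ∈ e)).length)).sum
      ≤ ((l2.map fun w => 2 * w.2.2.support.count v)).sum :=
    List.sum_le_sum (fun w _ => key w)
  have htotal : Δ + 1 ≤ 2 * ((l1 ++ w0 :: l2).map fun w => w.2.2.support.count v).sum := by
    have e1 : ((l1 ++ w0 :: l2).map fun w => w.2.2.support.count v).sum
        = (l1.map fun w => w.2.2.support.count v).sum + w0.2.2.support.count v
          + (l2.map fun w => w.2.2.support.count v).sum := by
      simp [List.map_append]; ring
    rw [hsplit] at hΔL
    simp only [List.map_append, List.sum_append, List.map_cons, List.sum_cons] at hΔL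
    have t1 : ((l1.map fun w => 2 * w.2.2.support.count v)).sum
        = 2 * (l1.map fun w => w.2.2.support.count v).sum := by
      rw [← List.sum_map_mul_left]
    have t2 : ((l2.map fun w => 2 * w.2.2.support.count v)).sum
        = 2 * (l2.map fun w => w.2.2.support.count v).sum := by
      rw [← List.sum_map_mul_left]
    rw [e1]
    omega
  omega
end

section
/- The Petersen graph cannot be edge-covered by a collection of cycles such that every vertex lies on at most 2 of the cycles. That is, the local covering number of the Petersen graph with respect to disjoint unions of cycles is at least 3. -/
/-- Vertices of the Petersen graph: 2-element subsets of a 5-element set. -/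
def PetersenVertex : Type := {s : Finset (Fin 5) // s.card = 2}

instance : DecidableEq PetersenVertex := by unfold PetersenVertex; infer_instance

/-- The Petersen graph as the Kneser graph K(5,2). -/
def petersen : SimpleGraph PetersenVertex where
  Adj a b := Disjoint a.1 b.1
  symm := ⟨fun a b h => h.symm⟩
  loopless := by
    constructor
    intro a h
    rw [disjoint_self] at h
    have h2 := a.2
    rw [h] at h2
    simp at h2

section PetersenAuxSection
namespace PetersenAux
open SimpleGraph Walk

variable {V : Type*} {G : SimpleGraph V}

lemma edges_getElem {u v : V} (p : G.Walk u v) (i : ℕ) (hi : i < p.edges.length) :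
    p.edges[i] = s(p.getVert i, p.getVert (i+1)) := by
  induction p generalizing i with
  | nil => simp at hi
  | cons h q ih =>
    cases i with
    | zero => simp [Walk.getVert_cons_succ]
    | succ n =>
      simp only [Walk.edges_cons, Walk.getVert_cons_succ, List.getElem_cons_succ]
      exact ih n (by simpa using hi)

lemma support_getElem {u v : V} (p : G.Walk u v) (i : ℕ) (hi : i < p.support.length) :
    p.support[i] = p.getVert i := by
  induction p generalizing i with
  | nil =>
    rw [Walk.getVert_of_length_le _ (Nat.zero_le _)]
    simp only [Walk.support_nil] at hi ⊢
    simp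
  | cons h q ih =>
    cases i with
    | zero => simp
    | succ n =>
      simp only [Walk.support_cons, Walk.getVert_cons_succ, List.getElem_cons_succ]
      exact ih n (by simpa using hi)

/-- injectivity of getVert on [0, length) for a cycle -/
lemma cycle_getVert_inj {u : V} {c : G.Walk u u} (hc : c.IsCycle) {i j : ℕ}
    (hi : i < c.length) (hj : j < c.length) (h : c.getVert i = c.getVert j) : i = j := by
  have hnd : c.support.tail.Nodup := hc.2
  have hlt : c.support.tail.length = c.length := by
    have := c.length_support; simp [List.length_tail, this]
  have htail : ∀ k (hk : k < c.length), c.support.tail[k]'(by rw [hlt]; exact hk) = c.getVert (k+1) := by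
    intro k hk
    have h1 : c.support.tail[k]'(by rw [hlt]; exact hk) = c.support[k+1]'(by rw [c.length_support]; omega) := by
      rw [List.getElem_tail]
    rw [h1, support_getElem]
  have hlen3 := hc.three_le_length
  have gv : ∀ k (hk0 : 0 < k) (hk : k < c.length), c.getVert k = c.support.tail[k-1]'(by rw [hlt]; omega) := by
    intro k hk0 hk
    rw [htail (k-1) (by omega)]
    congr 1
    omega
  have gv0 : c.getVert 0 = c.support.tail[c.length - 1]'(by rw [hlt]; omega) := by
    rw [htail (c.length - 1) (by omega), c.getVert_zero]
    have h2 : c.length - 1 + 1 = c.length := by omega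
    rw [h2, c.getVert_length]
  rcases Nat.eq_zero_or_pos i with rfl | hipos <;> rcases Nat.eq_zero_or_pos j with rfl | hjpos
  · rfl
  · rw [gv0, gv j hjpos hj] at h
    have h2 := (List.Nodup.getElem_inj_iff hnd).mp h
    omega
  · rw [gv0, gv i hipos hi] at h
    have h2 := (List.Nodup.getElem_inj_iff hnd).mp h
    omega
  · rw [gv i hipos hi, gv j hjpos hj] at h
    have h2 := (List.Nodup.getElem_inj_iff hnd).mp h
    omega

lemma mem_edges_iff {u v : V} {c : G.Walk u v} {d : Sym2 V} :
    d ∈ c.edges ↔ ∃ i, ∃ (h : i < c.length), d = s(c.getVert i, c.getVert (i+1)) := by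
  rw [List.mem_iff_getElem]
  constructor
  · rintro ⟨i, hi, rfl⟩
    exact ⟨i, by rwa [c.length_edges] at hi, edges_getElem c i hi⟩
  · rintro ⟨i, hi, rfl⟩
    exact ⟨i, by rwa [c.length_edges], edges_getElem c i (by rwa [c.length_edges])⟩

lemma cycle_edge_at {u : V} {c : G.Walk u u} (hc : c.IsCycle) {j : ℕ} (hj : j < c.length) (w : V) :
    s(c.getVert j, w) ∈ c.edges ↔
      (w = c.getVert (j+1) ∨ w = c.getVert (if j = 0 then c.length - 1 else j - 1)) := by
  have hlen3 := hc.three_le_length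
  have hv0 : c.getVert c.length = c.getVert 0 := by rw [c.getVert_length, c.getVert_zero]
  constructor
  · intro h
    obtain ⟨i, hi, he⟩ := mem_edges_iff.mp h
    rw [Sym2.eq_iff] at he
    rcases he with ⟨h1, h2⟩ | ⟨h1, h2⟩
    · have hij : j = i := cycle_getVert_inj hc hj hi h1
      subst hij
      exact Or.inl h2
    · rcases Nat.lt_or_ge (i+1) c.length with hi1 | hi1
      · have hji : j = i + 1 := cycle_getVert_inj hc hj hi1 h1
        right
        rw [if_neg (by omega), h2]
        congr 1
        omega
      · have hieq : i + 1 = c.length := by omega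
        rw [hieq, hv0] at h1
        have hj0 : j = 0 := cycle_getVert_inj hc hj (by omega) h1
        right
        rw [if_pos hj0, h2]
        congr 1
        omega
  · rintro (rfl | rfl)
    · exact mem_edges_iff.mpr ⟨j, hj, rfl⟩
    · split_ifs with hj0
      · subst hj0
        refine mem_edges_iff.mpr ⟨c.length - 1, by omega, ?_⟩
        have h2 : c.length - 1 + 1 = c.length := by omega
        rw [h2, hv0, Sym2.eq_swap]
      · refine mem_edges_iff.mpr ⟨j - 1, by omega, ?_⟩
        have h2 : j - 1 + 1 = j := by omega
        rw [h2, Sym2.eq_swap]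

lemma cycle_nbrs_ne {u : V} {c : G.Walk u u} (hc : c.IsCycle) {j : ℕ} (hj : j < c.length) :
    c.getVert (j+1) ≠ c.getVert (if j = 0 then c.length - 1 else j - 1) := by
  have hlen3 := hc.three_le_length
  have hv0 : c.getVert c.length = c.getVert 0 := by rw [c.getVert_length, c.getVert_zero]
  intro h
  split_ifs at h with hj0
  · subst hj0
    have := cycle_getVert_inj hc (by omega) (by omega) h
    omega
  · rcases Nat.lt_or_ge (j+1) c.length with hj1 | hj1
    · have := cycle_getVert_inj hc hj1 (by omega) h
      omega
    · have hje : j + 1 = c.length := by omega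
      rw [hje, hv0] at h
      have := cycle_getVert_inj hc (by omega) (by omega) h
      omega

lemma cycle_mem_support_iff {u : V} {c : G.Walk u u} (hc : c.IsCycle) {v : V} :
    v ∈ c.support ↔ ∃ j, ∃ (h : j < c.length), c.getVert j = v := by
  have hlen3 := hc.three_le_length
  rw [SimpleGraph.Walk.mem_support_iff_exists_getVert]
  constructor
  · rintro ⟨n, hn, hle⟩
    rcases Nat.lt_or_ge n c.length with h | h
    · exact ⟨n, h, hn⟩
    · have : n = c.length := by omega
      subst this
      exact ⟨0, by omega, by rw [c.getVert_zero, ← c.getVert_length, hn]⟩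
  · rintro ⟨j, hj, hv⟩
    exact ⟨j, hv, by omega⟩

lemma cycle_support_card [Fintype V] [DecidableEq V] {u : V} {c : G.Walk u u} (hc : c.IsCycle) :
    (Finset.univ.filter (fun v => v ∈ c.support)).card = c.length := by
  have hlen3 := hc.three_le_length
  have hlt : c.support.tail.length = c.length := by
    have := c.length_support; simp [List.length_tail, this]
  have htail : ∀ k (hk : k < c.length), c.support.tail[k]'(by rw [hlt]; exact hk) = c.getVert (k+1) := by
    intro k hk
    have h1 : c.support.tail[k]'(by rw [hlt]; exact hk) = c.support[k+1]'(by rw [c.length_support]; omega) := by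
      rw [List.getElem_tail]
    rw [h1, support_getElem]
  have humem : u ∈ c.support.tail := by
    have h1 : c.support.tail[c.length - 1]'(by rw [hlt]; omega) = c.getVert (c.length - 1 + 1) := htail _ (by omega)
    have h2 : c.length - 1 + 1 = c.length := by omega
    rw [h2, c.getVert_length] at h1
    exact List.mem_iff_getElem.mpr ⟨c.length - 1, by rw [hlt]; omega, h1⟩
  have hsupp : ∀ v, v ∈ c.support ↔ v ∈ c.support.tail := by
    intro v
    rw [SimpleGraph.Walk.support_eq_cons, List.mem_cons]
    constructor
    · rintro (rfl | h)
      · exact humem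
      · exact h
    · exact Or.inr
  have : Finset.univ.filter (fun v => v ∈ c.support) = c.support.tail.toFinset := by
    ext v
    simp [hsupp v]
  rw [this, List.toFinset_card_of_nodup hc.2, hlt]

lemma sum_countP {α β : Type*} [DecidableEq α] (S : Finset α) (l : List β) (p : α → β → Bool) :
    (∑ a ∈ S, l.countP (p a)) = (l.map (fun b => (S.filter (fun a => p a b = true)).card)).sum := by
  induction l with
  | nil => simp
  | cons b l ih =>
    simp only [List.countP_cons, List.map_cons, List.sum_cons]
    rw [Finset.sum_add_distrib, ih]
    rw [Nat.add_comm]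
    congr 1
    rw [Finset.card_eq_sum_ones, Finset.sum_filter]

lemma countP_lt_countP {β : Type*} {l : List β} {P Q : β → Bool} (hPQ : ∀ x, P x = true → Q x = true)
    {y : β} (hy : y ∈ l) (hQy : Q y = true) (hPy : P y = false) : l.countP P < l.countP Q := by
  obtain ⟨s, t, rfl⟩ := List.append_of_mem hy
  rw [List.countP_append, List.countP_append, List.countP_cons, List.countP_cons]
  have h1 : s.countP P ≤ s.countP Q := List.countP_mono_left (fun a _ h => hPQ a h)
  have h2 : t.countP P ≤ t.countP Q := List.countP_mono_left (fun a _ h => hPQ a h)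
  rw [hQy, hPy]
  rw [show (if (true = true) then 1 else 0) = 1 from rfl, show (if (false = true) then 1 else 0) = 0 from rfl]
  omega

lemma map_ite_sum {β : Type*} (l : List β) (q : β → Prop) [DecidablePred q] :
    (l.map (fun b => if q b then (2:ℕ) else 0)).sum = 2 * l.countP (fun b => decide (q b)) := by
  induction l with
  | nil => simp
  | cons b l ih =>
    simp only [List.map_cons, List.sum_cons, List.countP_cons, ih]
    by_cases h : q b <;> simp [h] <;> omega

lemma sum_range_two_mul_cast (k : ℕ) : (∑ i ∈ Finset.range (2*k), (i : ZMod 2)) = (k : ZMod 2) := by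
  induction k with
  | zero => simp
  | succ k ih =>
    have h2 : 2 * (k+1) = (2*k) + 1 + 1 := by omega
    rw [h2, Finset.sum_range_succ, Finset.sum_range_succ, ih]
    push_cast
    have h0 : (2 : ZMod 2) = 0 := rfl
    linear_combination (2 * (k : ZMod 2)) * h0

lemma cycle_length_div_four {u : V} {c : G.Walk u u} (hc : c.IsCycle) (p : V → V)
    (hp2 : ∀ v, p (p v) = v) (σ : V → Bool)
    (hσ : ∀ a b, G.Adj a b → ((σ a ≠ σ b) ↔ b = p a))
    (hM : ∀ v ∈ c.support, s(v, p v) ∈ c.edges) :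
    c.length % 4 = 0 := by
  classical
  have hn3 : 3 ≤ c.length := hc.three_le_length
  have hv0 : c.getVert c.length = c.getVert 0 := by rw [c.getVert_length, c.getVert_zero]
  set m : ℕ → ZMod 2 := fun i => if c.getVert (i+1) = p (c.getVert i) then 1 else 0 with hm
  set sf : ℕ → ZMod 2 := fun i => if σ (c.getVert i) then 1 else 0 with hsf
  have step : ∀ i, i < c.length → sf (i+1) = sf i + m i := by
    intro i hi
    have hadj := c.adj_getVert_succ hi
    have hiff := hσ _ _ hadj
    simp only [hm, hsf]
    by_cases hb : c.getVert (i+1) = p (c.getVert i)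
    · have hne : σ (c.getVert i) ≠ σ (c.getVert (i+1)) := hiff.mpr hb
      rw [if_pos hb]
      rcases Bool.eq_false_or_eq_true (σ (c.getVert i)) with h1 | h1 <;>
        rcases Bool.eq_false_or_eq_true (σ (c.getVert (i+1))) with h2 | h2 <;>
          rw [h1] at hne ⊢ <;> rw [h2] at hne ⊢ <;> simp_all <;> decide
    · have heq : σ (c.getVert i) = σ (c.getVert (i+1)) := by
        by_contra hne
        exact hb (hiff.mp hne)
      rw [if_neg hb, heq]
      ring
  have tele : ∀ k, k ≤ c.length → sf k = sf 0 + ∑ i ∈ Finset.range k, m i := by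
    intro k
    induction k with
    | zero => simp
    | succ k ih =>
      intro hk
      rw [Finset.sum_range_succ, step k (by omega), ih (by omega), add_assoc]
  have hsum0 : (∑ i ∈ Finset.range c.length, m i) = 0 := by
    have h1 := (tele c.length le_rfl).symm
    have h2 : sf c.length = sf 0 := by simp only [hsf, hv0]
    rw [h2] at h1
    rwa [add_eq_left] at h1
  have ALT : ∀ j, j < c.length → m j + m (if j = 0 then c.length - 1 else j - 1) = 1 := by
    intro j hj
    have hwmem : c.getVert j ∈ c.support := (cycle_mem_support_iff hc).mpr ⟨j, hj, rfl⟩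
    have hchar := (cycle_edge_at hc hj (p (c.getVert j))).mp (hM _ hwmem)
    have hne := cycle_nbrs_ne hc hj
    have hmj : m j = if p (c.getVert j) = c.getVert (j+1) then 1 else 0 := by
      simp only [hm]
      congr 1
      rw [eq_iff_iff]
      exact eq_comm
    have hmpred : m (if j = 0 then c.length - 1 else j - 1)
        = if p (c.getVert j) = c.getVert (if j = 0 then c.length - 1 else j - 1) then 1 else 0 := by
      by_cases hj0 : j = 0
      · subst hj0
        simp only [reduceIte, hm]
        have h1 : c.length - 1 + 1 = c.length := by omega
        rw [h1, hv0]
        congr 1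
        rw [eq_iff_iff]
        constructor
        · intro h; rw [h]; exact hp2 _
        · intro h; rw [← h, hp2]
      · rw [if_neg hj0]
        simp only [hm]
        have h1 : j - 1 + 1 = j := by omega
        rw [h1]
        congr 1
        rw [eq_iff_iff]
        constructor
        · intro h; rw [h]; exact hp2 _
        · intro h; rw [← h, hp2]
    rcases hchar with hcase | hcase
    · rw [hmj, if_pos hcase, hmpred, if_neg (fun hcon => hne (hcase.symm.trans hcon))]
      ring
    · rw [hmj, if_neg (fun hcon => hne (hcon.symm.trans hcase)), hmpred, if_pos hcase]
      ring
  have chain : ∀ j, j < c.length → m j = m 0 + (j : ZMod 2) := by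
    intro j
    induction j with
    | zero => intro _; simp
    | succ j ih =>
      intro hj
      have halt := ALT (j+1) hj
      rw [if_neg (by omega : j + 1 ≠ 0)] at halt
      have h1 : j + 1 - 1 = j := by omega
      rw [h1] at halt
      have h2 : m (j+1) = 1 - m j := eq_sub_of_add_eq halt
      rw [h2, ih (by omega)]
      push_cast
      have hx : ∀ x : ZMod 2, 1 - x = x + 1 := by decide
      rw [hx]
      ring
  have halt0 := ALT 0 (by omega)
  rw [if_pos rfl] at halt0
  have hxx : ∀ x : ZMod 2, x + x = 0 := by decide
  have hchain := chain (c.length-1) (by omega)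
  rw [hchain] at halt0
  have hcast1 : ((c.length - 1 : ℕ) : ZMod 2) = 1 := by
    rw [← add_assoc, hxx, zero_add] at halt0
    exact halt0
  have hn0 : ((c.length : ℕ) : ZMod 2) = 0 := by
    have h1 : c.length = (c.length - 1) + 1 := by omega
    rw [h1]
    push_cast
    rw [hcast1]
    decide
  have h2n : 2 ∣ c.length := by
    rwa [ZMod.natCast_eq_zero_iff] at hn0
  obtain ⟨k, hk⟩ := h2n
  have hsum2 : (∑ i ∈ Finset.range c.length, m i) = (k : ZMod 2) := by
    rw [Finset.sum_congr rfl (fun i hi => chain i (Finset.mem_range.mp hi))]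
    rw [Finset.sum_add_distrib]
    have hconst : (∑ _i ∈ Finset.range c.length, m 0) = (c.length : ZMod 2) * m 0 := by
      rw [Finset.sum_const, nsmul_eq_mul, Finset.card_range]
    rw [hconst, hn0, zero_mul, zero_add, hk, sum_range_two_mul_cast]
  rw [hsum0] at hsum2
  have h2k : 2 ∣ k := by
    rwa [eq_comm, ZMod.natCast_eq_zero_iff] at hsum2
  omega

instance : Fintype PetersenVertex := by unfold PetersenVertex; infer_instance
instance : DecidableRel petersen.Adj := fun a b => by unfold petersen; infer_instance
def pV01 : PetersenVertex := ⟨{0,1}, by decide⟩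
def pV02 : PetersenVertex := ⟨{0,2}, by decide⟩
def pV03 : PetersenVertex := ⟨{0,3}, by decide⟩
def pV04 : PetersenVertex := ⟨{0,4}, by decide⟩
def pV12 : PetersenVertex := ⟨{1,2}, by decide⟩
def pV13 : PetersenVertex := ⟨{1,3}, by decide⟩
def pV14 : PetersenVertex := ⟨{1,4}, by decide⟩
def pV23 : PetersenVertex := ⟨{2,3}, by decide⟩
def pV24 : PetersenVertex := ⟨{2,4}, by decide⟩
def pV34 : PetersenVertex := ⟨{3,4}, by decide⟩

def pmatch0 : PetersenVertex → PetersenVertex := fun v => if v = pV01 then pV23 else if v = pV02 then pV14 else if v = pV03 then pV24 else if v = pV04 then pV13 else if v = pV12 then pV34 else if v = pV13 then pV04 else if v = pV14 then pV02 else if v = pV23 then pV01 else if v = pV24 then pV03 else pV12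
def pmatch1 : PetersenVertex → PetersenVertex := fun v => if v = pV01 then pV23 else if v = pV02 then pV34 else if v = pV03 then pV14 else if v = pV04 then pV12 else if v = pV12 then pV04 else if v = pV13 then pV24 else if v = pV14 then pV03 else if v = pV23 then pV01 else if v = pV24 then pV13 else pV02
def pmatch2 : PetersenVertex → PetersenVertex := fun v => if v = pV01 then pV24 else if v = pV02 then pV13 else if v = pV03 then pV14 else if v = pV04 then pV23 else if v = pV12 then pV34 else if v = pV13 then pV02 else if v = pV14 then pV03 else if v = pV23 then pV04 else if v = pV24 then pV01 else pV12
def pmatch3 : PetersenVertex → PetersenVertex := fun v => if v = pV01 then pV24 else if v = pV02 then pV34 else if v = pV03 then pV12 else if v = pV04 then pV13 else if v = pV12 then pV03 else if v = pV13 then pV04 else if v = pV14 then pV23 else if v = pV23 then pV14 else if v = pV24 then pV01 else pV02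
def pmatch4 : PetersenVertex → PetersenVertex := fun v => if v = pV01 then pV34 else if v = pV02 then pV13 else if v = pV03 then pV24 else if v = pV04 then pV12 else if v = pV12 then pV04 else if v = pV13 then pV02 else if v = pV14 then pV23 else if v = pV23 then pV14 else if v = pV24 then pV03 else pV01
def pmatch5 : PetersenVertex → PetersenVertex := fun v => if v = pV01 then pV34 else if v = pV02 then pV14 else if v = pV03 then pV12 else if v = pV04 then pV23 else if v = pV12 then pV03 else if v = pV13 then pV24 else if v = pV14 then pV02 else if v = pV23 then pV04 else if v = pV24 then pV13 else pV01
def psig0 : PetersenVertex → Bool := fun v => if v = pV01 then true else if v = pV02 then true else if v = pV03 then false else if v = pV04 then false else if v = pV12 then false else if v = pV13 then true else if v = pV14 then false else if v = pV23 then false else if v = pV24 then true else true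
def psig1 : PetersenVertex → Bool := fun v => if v = pV01 then true else if v = pV02 then false else if v = pV03 then true else if v = pV04 then false else if v = pV12 then true else if v = pV13 then false else if v = pV14 then false else if v = pV23 then false else if v = pV24 then true else true
def psig2 : PetersenVertex → Bool := fun v => if v = pV01 then true else if v = pV02 then true else if v = pV03 then false else if v = pV04 then false else if v = pV12 then false else if v = pV13 then false else if v = pV14 then true else if v = pV23 then true else if v = pV24 then false else true
def psig3 : PetersenVertex → Bool := fun v => if v = pV01 then true else if v = pV02 then false else if v = pV03 then false else if v = pV04 then true else if v = pV12 then true else if v = pV13 then false else if v = pV14 then false else if v = pV23 then true else if v = pV24 then false else true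
def psig4 : PetersenVertex → Bool := fun v => if v = pV01 then true else if v = pV02 then false else if v = pV03 then false else if v = pV04 then true else if v = pV12 then false else if v = pV13 then true else if v = pV14 then false else if v = pV23 then true else if v = pV24 then true else false
def psig5 : PetersenVertex → Bool := fun v => if v = pV01 then true else if v = pV02 then false else if v = pV03 then true else if v = pV04 then false else if v = pV12 then false else if v = pV13 then false else if v = pV14 then true else if v = pV23 then true else if v = pV24 then true else false


lemma vertex_cases : ∀ v : PetersenVertex, v = pV01 ∨ v = pV02 ∨ v = pV03 ∨ v = pV04 ∨ v = pV12 ∨ v = pV13 ∨ v = pV14 ∨ v = pV23 ∨ v = pV24 ∨ v = pV34 := by decide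

lemma exists_sigma (p : PetersenVertex → PetersenVertex)
    (h1 : ∀ v, petersen.Adj v (p v)) (h2 : ∀ v, p (p v) = v) :
    ∃ σ : PetersenVertex → Bool, ∀ a b, petersen.Adj a b → ((σ a ≠ σ b) ↔ b = p a) := by
  have hbr := (show ∀ u, petersen.Adj pV01 u → (u = pV23 ∨ u = pV24 ∨ u = pV34) by decide) (p pV01) (h1 pV01)
  rcases hbr with hpV01 | hpV01 | hpV01
  · have hpV23r : p pV23 = pV01 := by rw [← hpV01]; exact h2 pV01
    have hbr := (show ∀ u, petersen.Adj pV02 u → (u = pV13 ∨ u = pV14 ∨ u = pV34) by decide) (p pV02) (h1 pV02)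
    rcases hbr with hpV02 | hpV02 | hpV02
    · have hpV13r : p pV13 = pV02 := by rw [← hpV02]; exact h2 pV02
      have hbr := (show ∀ u, petersen.Adj pV03 u → (u = pV12 ∨ u = pV14 ∨ u = pV24) by decide) (p pV03) (h1 pV03)
      rcases hbr with hpV03 | hpV03 | hpV03
      · have hpV12r : p pV12 = pV03 := by rw [← hpV03]; exact h2 pV03
        have hbr := (show ∀ u, petersen.Adj pV04 u → (u = pV12 ∨ u = pV13 ∨ u = pV23) by decide) (p pV04) (h1 pV04)
        rcases hbr with hpV04 | hpV04 | hpV04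
        · exact absurd (by rw [← h2 pV04, hpV04, hpV12r] : pV04 = pV03) (by decide)
        · exact absurd (by rw [← h2 pV04, hpV04, hpV13r] : pV04 = pV02) (by decide)
        · exact absurd (by rw [← h2 pV04, hpV04, hpV23r] : pV04 = pV01) (by decide)
      · have hpV14r : p pV14 = pV03 := by rw [← hpV03]; exact h2 pV03
        have hbr := (show ∀ u, petersen.Adj pV04 u → (u = pV12 ∨ u = pV13 ∨ u = pV23) by decide) (p pV04) (h1 pV04)
        rcases hbr with hpV04 | hpV04 | hpV04
        · have hpV12r : p pV12 = pV04 := by rw [← hpV04]; exact h2 pV04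
          have hbr := (show ∀ u, petersen.Adj pV24 u → (u = pV01 ∨ u = pV03 ∨ u = pV13) by decide) (p pV24) (h1 pV24)
          rcases hbr with hpV24 | hpV24 | hpV24
          · exact absurd (by rw [← h2 pV24, hpV24, hpV01] : pV24 = pV23) (by decide)
          · exact absurd (by rw [← h2 pV24, hpV24, hpV03] : pV24 = pV14) (by decide)
          · exact absurd (by rw [← h2 pV24, hpV24, hpV13r] : pV24 = pV02) (by decide)
        · exact absurd (by rw [← h2 pV04, hpV04, hpV13r] : pV04 = pV02) (by decide)
        · exact absurd (by rw [← h2 pV04, hpV04, hpV23r] : pV04 = pV01) (by decide)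
      · have hpV24r : p pV24 = pV03 := by rw [← hpV03]; exact h2 pV03
        have hbr := (show ∀ u, petersen.Adj pV04 u → (u = pV12 ∨ u = pV13 ∨ u = pV23) by decide) (p pV04) (h1 pV04)
        rcases hbr with hpV04 | hpV04 | hpV04
        · have hpV12r : p pV12 = pV04 := by rw [← hpV04]; exact h2 pV04
          have hbr := (show ∀ u, petersen.Adj pV14 u → (u = pV02 ∨ u = pV03 ∨ u = pV23) by decide) (p pV14) (h1 pV14)
          rcases hbr with hpV14 | hpV14 | hpV14
          · exact absurd (by rw [← h2 pV14, hpV14, hpV02] : pV14 = pV13) (by decide)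
          · exact absurd (by rw [← h2 pV14, hpV14, hpV03] : pV14 = pV24) (by decide)
          · exact absurd (by rw [← h2 pV14, hpV14, hpV23r] : pV14 = pV01) (by decide)
        · exact absurd (by rw [← h2 pV04, hpV04, hpV13r] : pV04 = pV02) (by decide)
        · exact absurd (by rw [← h2 pV04, hpV04, hpV23r] : pV04 = pV01) (by decide)
    · have hpV14r : p pV14 = pV02 := by rw [← hpV02]; exact h2 pV02
      have hbr := (show ∀ u, petersen.Adj pV03 u → (u = pV12 ∨ u = pV14 ∨ u = pV24) by decide) (p pV03) (h1 pV03)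
      rcases hbr with hpV03 | hpV03 | hpV03
      · have hpV12r : p pV12 = pV03 := by rw [← hpV03]; exact h2 pV03
        have hbr := (show ∀ u, petersen.Adj pV04 u → (u = pV12 ∨ u = pV13 ∨ u = pV23) by decide) (p pV04) (h1 pV04)
        rcases hbr with hpV04 | hpV04 | hpV04
        · exact absurd (by rw [← h2 pV04, hpV04, hpV12r] : pV04 = pV03) (by decide)
        · have hpV13r : p pV13 = pV04 := by rw [← hpV04]; exact h2 pV04
          have hbr := (show ∀ u, petersen.Adj pV24 u → (u = pV01 ∨ u = pV03 ∨ u = pV13) by decide) (p pV24) (h1 pV24)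
          rcases hbr with hpV24 | hpV24 | hpV24
          · exact absurd (by rw [← h2 pV24, hpV24, hpV01] : pV24 = pV23) (by decide)
          · exact absurd (by rw [← h2 pV24, hpV24, hpV03] : pV24 = pV12) (by decide)
          · exact absurd (by rw [← h2 pV24, hpV24, hpV13r] : pV24 = pV04) (by decide)
        · exact absurd (by rw [← h2 pV04, hpV04, hpV23r] : pV04 = pV01) (by decide)
      · exact absurd (by rw [← h2 pV03, hpV03, hpV14r] : pV03 = pV02) (by decide)
      · have hpV24r : p pV24 = pV03 := by rw [← hpV03]; exact h2 pV03
        have hbr := (show ∀ u, petersen.Adj pV04 u → (u = pV12 ∨ u = pV13 ∨ u = pV23) by decide) (p pV04) (h1 pV04)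
        rcases hbr with hpV04 | hpV04 | hpV04
        · have hpV12r : p pV12 = pV04 := by rw [← hpV04]; exact h2 pV04
          have hbr := (show ∀ u, petersen.Adj pV13 u → (u = pV02 ∨ u = pV04 ∨ u = pV24) by decide) (p pV13) (h1 pV13)
          rcases hbr with hpV13 | hpV13 | hpV13
          · exact absurd (by rw [← h2 pV13, hpV13, hpV02] : pV13 = pV14) (by decide)
          · exact absurd (by rw [← h2 pV13, hpV13, hpV04] : pV13 = pV12) (by decide)
          · exact absurd (by rw [← h2 pV13, hpV13, hpV24r] : pV13 = pV03) (by decide)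
        · have hpV13r : p pV13 = pV04 := by rw [← hpV04]; exact h2 pV04
          have hbr := (show ∀ u, petersen.Adj pV12 u → (u = pV03 ∨ u = pV04 ∨ u = pV34) by decide) (p pV12) (h1 pV12)
          rcases hbr with hpV12 | hpV12 | hpV12
          · exact absurd (by rw [← h2 pV12, hpV12, hpV03] : pV12 = pV24) (by decide)
          · exact absurd (by rw [← h2 pV12, hpV12, hpV04] : pV12 = pV13) (by decide)
          · have hpV34r : p pV34 = pV12 := by rw [← hpV12]; exact h2 pV12
            -- leaf 0
            refine ⟨psig0, ?_⟩
            have hfun : ∀ v, p v = pmatch0 v := by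
              intro v
              rcases vertex_cases v with rfl|rfl|rfl|rfl|rfl|rfl|rfl|rfl|rfl|rfl
              · rw [hpV01]; decide
              · rw [hpV02]; decide
              · rw [hpV03]; decide
              · rw [hpV04]; decide
              · rw [hpV12]; decide
              · rw [hpV13r]; decide
              · rw [hpV14r]; decide
              · rw [hpV23r]; decide
              · rw [hpV24r]; decide
              · rw [hpV34r]; decide
            have key : ∀ a b, petersen.Adj a b → ((psig0 a ≠ psig0 b) ↔ b = pmatch0 a) := by decide
            exact fun a b hab => by rw [hfun a]; exact key a b hab
        · exact absurd (by rw [← h2 pV04, hpV04, hpV23r] : pV04 = pV01) (by decide)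
    · have hpV34r : p pV34 = pV02 := by rw [← hpV02]; exact h2 pV02
      have hbr := (show ∀ u, petersen.Adj pV03 u → (u = pV12 ∨ u = pV14 ∨ u = pV24) by decide) (p pV03) (h1 pV03)
      rcases hbr with hpV03 | hpV03 | hpV03
      · have hpV12r : p pV12 = pV03 := by rw [← hpV03]; exact h2 pV03
        have hbr := (show ∀ u, petersen.Adj pV04 u → (u = pV12 ∨ u = pV13 ∨ u = pV23) by decide) (p pV04) (h1 pV04)
        rcases hbr with hpV04 | hpV04 | hpV04
        · exact absurd (by rw [← h2 pV04, hpV04, hpV12r] : pV04 = pV03) (by decide)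
        · have hpV13r : p pV13 = pV04 := by rw [← hpV04]; exact h2 pV04
          have hbr := (show ∀ u, petersen.Adj pV14 u → (u = pV02 ∨ u = pV03 ∨ u = pV23) by decide) (p pV14) (h1 pV14)
          rcases hbr with hpV14 | hpV14 | hpV14
          · exact absurd (by rw [← h2 pV14, hpV14, hpV02] : pV14 = pV34) (by decide)
          · exact absurd (by rw [← h2 pV14, hpV14, hpV03] : pV14 = pV12) (by decide)
          · exact absurd (by rw [← h2 pV14, hpV14, hpV23r] : pV14 = pV01) (by decide)
        · exact absurd (by rw [← h2 pV04, hpV04, hpV23r] : pV04 = pV01) (by decide)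
      · have hpV14r : p pV14 = pV03 := by rw [← hpV03]; exact h2 pV03
        have hbr := (show ∀ u, petersen.Adj pV04 u → (u = pV12 ∨ u = pV13 ∨ u = pV23) by decide) (p pV04) (h1 pV04)
        rcases hbr with hpV04 | hpV04 | hpV04
        · have hpV12r : p pV12 = pV04 := by rw [← hpV04]; exact h2 pV04
          have hbr := (show ∀ u, petersen.Adj pV13 u → (u = pV02 ∨ u = pV04 ∨ u = pV24) by decide) (p pV13) (h1 pV13)
          rcases hbr with hpV13 | hpV13 | hpV13
          · exact absurd (by rw [← h2 pV13, hpV13, hpV02] : pV13 = pV34) (by decide)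
          · exact absurd (by rw [← h2 pV13, hpV13, hpV04] : pV13 = pV12) (by decide)
          · have hpV24r : p pV24 = pV13 := by rw [← hpV13]; exact h2 pV13
            -- leaf 1
            refine ⟨psig1, ?_⟩
            have hfun : ∀ v, p v = pmatch1 v := by
              intro v
              rcases vertex_cases v with rfl|rfl|rfl|rfl|rfl|rfl|rfl|rfl|rfl|rfl
              · rw [hpV01]; decide
              · rw [hpV02]; decide
              · rw [hpV03]; decide
              · rw [hpV04]; decide
              · rw [hpV12r]; decide
              · rw [hpV13]; decide
              · rw [hpV14r]; decide
              · rw [hpV23r]; decide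
              · rw [hpV24r]; decide
              · rw [hpV34r]; decide
            have key : ∀ a b, petersen.Adj a b → ((psig1 a ≠ psig1 b) ↔ b = pmatch1 a) := by decide
            exact fun a b hab => by rw [hfun a]; exact key a b hab
        · have hpV13r : p pV13 = pV04 := by rw [← hpV04]; exact h2 pV04
          have hbr := (show ∀ u, petersen.Adj pV12 u → (u = pV03 ∨ u = pV04 ∨ u = pV34) by decide) (p pV12) (h1 pV12)
          rcases hbr with hpV12 | hpV12 | hpV12
          · exact absurd (by rw [← h2 pV12, hpV12, hpV03] : pV12 = pV14) (by decide)
          · exact absurd (by rw [← h2 pV12, hpV12, hpV04] : pV12 = pV13) (by decide)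
          · exact absurd (by rw [← h2 pV12, hpV12, hpV34r] : pV12 = pV02) (by decide)
        · exact absurd (by rw [← h2 pV04, hpV04, hpV23r] : pV04 = pV01) (by decide)
      · have hpV24r : p pV24 = pV03 := by rw [← hpV03]; exact h2 pV03
        have hbr := (show ∀ u, petersen.Adj pV04 u → (u = pV12 ∨ u = pV13 ∨ u = pV23) by decide) (p pV04) (h1 pV04)
        rcases hbr with hpV04 | hpV04 | hpV04
        · have hpV12r : p pV12 = pV04 := by rw [← hpV04]; exact h2 pV04
          have hbr := (show ∀ u, petersen.Adj pV13 u → (u = pV02 ∨ u = pV04 ∨ u = pV24) by decide) (p pV13) (h1 pV13)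
          rcases hbr with hpV13 | hpV13 | hpV13
          · exact absurd (by rw [← h2 pV13, hpV13, hpV02] : pV13 = pV34) (by decide)
          · exact absurd (by rw [← h2 pV13, hpV13, hpV04] : pV13 = pV12) (by decide)
          · exact absurd (by rw [← h2 pV13, hpV13, hpV24r] : pV13 = pV03) (by decide)
        · have hpV13r : p pV13 = pV04 := by rw [← hpV04]; exact h2 pV04
          have hbr := (show ∀ u, petersen.Adj pV12 u → (u = pV03 ∨ u = pV04 ∨ u = pV34) by decide) (p pV12) (h1 pV12)
          rcases hbr with hpV12 | hpV12 | hpV12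
          · exact absurd (by rw [← h2 pV12, hpV12, hpV03] : pV12 = pV24) (by decide)
          · exact absurd (by rw [← h2 pV12, hpV12, hpV04] : pV12 = pV13) (by decide)
          · exact absurd (by rw [← h2 pV12, hpV12, hpV34r] : pV12 = pV02) (by decide)
        · exact absurd (by rw [← h2 pV04, hpV04, hpV23r] : pV04 = pV01) (by decide)
  · have hpV24r : p pV24 = pV01 := by rw [← hpV01]; exact h2 pV01
    have hbr := (show ∀ u, petersen.Adj pV02 u → (u = pV13 ∨ u = pV14 ∨ u = pV34) by decide) (p pV02) (h1 pV02)
    rcases hbr with hpV02 | hpV02 | hpV02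
    · have hpV13r : p pV13 = pV02 := by rw [← hpV02]; exact h2 pV02
      have hbr := (show ∀ u, petersen.Adj pV03 u → (u = pV12 ∨ u = pV14 ∨ u = pV24) by decide) (p pV03) (h1 pV03)
      rcases hbr with hpV03 | hpV03 | hpV03
      · have hpV12r : p pV12 = pV03 := by rw [← hpV03]; exact h2 pV03
        have hbr := (show ∀ u, petersen.Adj pV04 u → (u = pV12 ∨ u = pV13 ∨ u = pV23) by decide) (p pV04) (h1 pV04)
        rcases hbr with hpV04 | hpV04 | hpV04
        · exact absurd (by rw [← h2 pV04, hpV04, hpV12r] : pV04 = pV03) (by decide)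
        · exact absurd (by rw [← h2 pV04, hpV04, hpV13r] : pV04 = pV02) (by decide)
        · have hpV23r : p pV23 = pV04 := by rw [← hpV04]; exact h2 pV04
          have hbr := (show ∀ u, petersen.Adj pV14 u → (u = pV02 ∨ u = pV03 ∨ u = pV23) by decide) (p pV14) (h1 pV14)
          rcases hbr with hpV14 | hpV14 | hpV14
          · exact absurd (by rw [← h2 pV14, hpV14, hpV02] : pV14 = pV13) (by decide)
          · exact absurd (by rw [← h2 pV14, hpV14, hpV03] : pV14 = pV12) (by decide)
          · exact absurd (by rw [← h2 pV14, hpV14, hpV23r] : pV14 = pV04) (by decide)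
      · have hpV14r : p pV14 = pV03 := by rw [← hpV03]; exact h2 pV03
        have hbr := (show ∀ u, petersen.Adj pV04 u → (u = pV12 ∨ u = pV13 ∨ u = pV23) by decide) (p pV04) (h1 pV04)
        rcases hbr with hpV04 | hpV04 | hpV04
        · have hpV12r : p pV12 = pV04 := by rw [← hpV04]; exact h2 pV04
          have hbr := (show ∀ u, petersen.Adj pV23 u → (u = pV01 ∨ u = pV04 ∨ u = pV14) by decide) (p pV23) (h1 pV23)
          rcases hbr with hpV23 | hpV23 | hpV23
          · exact absurd (by rw [← h2 pV23, hpV23, hpV01] : pV23 = pV24) (by decide)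
          · exact absurd (by rw [← h2 pV23, hpV23, hpV04] : pV23 = pV12) (by decide)
          · exact absurd (by rw [← h2 pV23, hpV23, hpV14r] : pV23 = pV03) (by decide)
        · exact absurd (by rw [← h2 pV04, hpV04, hpV13r] : pV04 = pV02) (by decide)
        · have hpV23r : p pV23 = pV04 := by rw [← hpV04]; exact h2 pV04
          have hbr := (show ∀ u, petersen.Adj pV12 u → (u = pV03 ∨ u = pV04 ∨ u = pV34) by decide) (p pV12) (h1 pV12)
          rcases hbr with hpV12 | hpV12 | hpV12
          · exact absurd (by rw [← h2 pV12, hpV12, hpV03] : pV12 = pV14) (by decide)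
          · exact absurd (by rw [← h2 pV12, hpV12, hpV04] : pV12 = pV23) (by decide)
          · have hpV34r : p pV34 = pV12 := by rw [← hpV12]; exact h2 pV12
            -- leaf 2
            refine ⟨psig2, ?_⟩
            have hfun : ∀ v, p v = pmatch2 v := by
              intro v
              rcases vertex_cases v with rfl|rfl|rfl|rfl|rfl|rfl|rfl|rfl|rfl|rfl
              · rw [hpV01]; decide
              · rw [hpV02]; decide
              · rw [hpV03]; decide
              · rw [hpV04]; decide
              · rw [hpV12]; decide
              · rw [hpV13r]; decide
              · rw [hpV14r]; decide
              · rw [hpV23r]; decide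
              · rw [hpV24r]; decide
              · rw [hpV34r]; decide
            have key : ∀ a b, petersen.Adj a b → ((psig2 a ≠ psig2 b) ↔ b = pmatch2 a) := by decide
            exact fun a b hab => by rw [hfun a]; exact key a b hab
      · exact absurd (by rw [← h2 pV03, hpV03, hpV24r] : pV03 = pV01) (by decide)
    · have hpV14r : p pV14 = pV02 := by rw [← hpV02]; exact h2 pV02
      have hbr := (show ∀ u, petersen.Adj pV03 u → (u = pV12 ∨ u = pV14 ∨ u = pV24) by decide) (p pV03) (h1 pV03)
      rcases hbr with hpV03 | hpV03 | hpV03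
      · have hpV12r : p pV12 = pV03 := by rw [← hpV03]; exact h2 pV03
        have hbr := (show ∀ u, petersen.Adj pV04 u → (u = pV12 ∨ u = pV13 ∨ u = pV23) by decide) (p pV04) (h1 pV04)
        rcases hbr with hpV04 | hpV04 | hpV04
        · exact absurd (by rw [← h2 pV04, hpV04, hpV12r] : pV04 = pV03) (by decide)
        · have hpV13r : p pV13 = pV04 := by rw [← hpV04]; exact h2 pV04
          have hbr := (show ∀ u, petersen.Adj pV23 u → (u = pV01 ∨ u = pV04 ∨ u = pV14) by decide) (p pV23) (h1 pV23)
          rcases hbr with hpV23 | hpV23 | hpV23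
          · exact absurd (by rw [← h2 pV23, hpV23, hpV01] : pV23 = pV24) (by decide)
          · exact absurd (by rw [← h2 pV23, hpV23, hpV04] : pV23 = pV13) (by decide)
          · exact absurd (by rw [← h2 pV23, hpV23, hpV14r] : pV23 = pV02) (by decide)
        · have hpV23r : p pV23 = pV04 := by rw [← hpV04]; exact h2 pV04
          have hbr := (show ∀ u, petersen.Adj pV13 u → (u = pV02 ∨ u = pV04 ∨ u = pV24) by decide) (p pV13) (h1 pV13)
          rcases hbr with hpV13 | hpV13 | hpV13
          · exact absurd (by rw [← h2 pV13, hpV13, hpV02] : pV13 = pV14) (by decide)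
          · exact absurd (by rw [← h2 pV13, hpV13, hpV04] : pV13 = pV23) (by decide)
          · exact absurd (by rw [← h2 pV13, hpV13, hpV24r] : pV13 = pV01) (by decide)
      · exact absurd (by rw [← h2 pV03, hpV03, hpV14r] : pV03 = pV02) (by decide)
      · exact absurd (by rw [← h2 pV03, hpV03, hpV24r] : pV03 = pV01) (by decide)
    · have hpV34r : p pV34 = pV02 := by rw [← hpV02]; exact h2 pV02
      have hbr := (show ∀ u, petersen.Adj pV03 u → (u = pV12 ∨ u = pV14 ∨ u = pV24) by decide) (p pV03) (h1 pV03)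
      rcases hbr with hpV03 | hpV03 | hpV03
      · have hpV12r : p pV12 = pV03 := by rw [← hpV03]; exact h2 pV03
        have hbr := (show ∀ u, petersen.Adj pV04 u → (u = pV12 ∨ u = pV13 ∨ u = pV23) by decide) (p pV04) (h1 pV04)
        rcases hbr with hpV04 | hpV04 | hpV04
        · exact absurd (by rw [← h2 pV04, hpV04, hpV12r] : pV04 = pV03) (by decide)
        · have hpV13r : p pV13 = pV04 := by rw [← hpV04]; exact h2 pV04
          have hbr := (show ∀ u, petersen.Adj pV14 u → (u = pV02 ∨ u = pV03 ∨ u = pV23) by decide) (p pV14) (h1 pV14)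
          rcases hbr with hpV14 | hpV14 | hpV14
          · exact absurd (by rw [← h2 pV14, hpV14, hpV02] : pV14 = pV34) (by decide)
          · exact absurd (by rw [← h2 pV14, hpV14, hpV03] : pV14 = pV12) (by decide)
          · have hpV23r : p pV23 = pV14 := by rw [← hpV14]; exact h2 pV14
            -- leaf 3
            refine ⟨psig3, ?_⟩
            have hfun : ∀ v, p v = pmatch3 v := by
              intro v
              rcases vertex_cases v with rfl|rfl|rfl|rfl|rfl|rfl|rfl|rfl|rfl|rfl
              · rw [hpV01]; decide
              · rw [hpV02]; decide
              · rw [hpV03]; decide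
              · rw [hpV04]; decide
              · rw [hpV12r]; decide
              · rw [hpV13r]; decide
              · rw [hpV14]; decide
              · rw [hpV23r]; decide
              · rw [hpV24r]; decide
              · rw [hpV34r]; decide
            have key : ∀ a b, petersen.Adj a b → ((psig3 a ≠ psig3 b) ↔ b = pmatch3 a) := by decide
            exact fun a b hab => by rw [hfun a]; exact key a b hab
        · have hpV23r : p pV23 = pV04 := by rw [← hpV04]; exact h2 pV04
          have hbr := (show ∀ u, petersen.Adj pV13 u → (u = pV02 ∨ u = pV04 ∨ u = pV24) by decide) (p pV13) (h1 pV13)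
          rcases hbr with hpV13 | hpV13 | hpV13
          · exact absurd (by rw [← h2 pV13, hpV13, hpV02] : pV13 = pV34) (by decide)
          · exact absurd (by rw [← h2 pV13, hpV13, hpV04] : pV13 = pV23) (by decide)
          · exact absurd (by rw [← h2 pV13, hpV13, hpV24r] : pV13 = pV01) (by decide)
      · have hpV14r : p pV14 = pV03 := by rw [← hpV03]; exact h2 pV03
        have hbr := (show ∀ u, petersen.Adj pV04 u → (u = pV12 ∨ u = pV13 ∨ u = pV23) by decide) (p pV04) (h1 pV04)
        rcases hbr with hpV04 | hpV04 | hpV04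
        · have hpV12r : p pV12 = pV04 := by rw [← hpV04]; exact h2 pV04
          have hbr := (show ∀ u, petersen.Adj pV13 u → (u = pV02 ∨ u = pV04 ∨ u = pV24) by decide) (p pV13) (h1 pV13)
          rcases hbr with hpV13 | hpV13 | hpV13
          · exact absurd (by rw [← h2 pV13, hpV13, hpV02] : pV13 = pV34) (by decide)
          · exact absurd (by rw [← h2 pV13, hpV13, hpV04] : pV13 = pV12) (by decide)
          · exact absurd (by rw [← h2 pV13, hpV13, hpV24r] : pV13 = pV01) (by decide)
        · have hpV13r : p pV13 = pV04 := by rw [← hpV04]; exact h2 pV04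
          have hbr := (show ∀ u, petersen.Adj pV12 u → (u = pV03 ∨ u = pV04 ∨ u = pV34) by decide) (p pV12) (h1 pV12)
          rcases hbr with hpV12 | hpV12 | hpV12
          · exact absurd (by rw [← h2 pV12, hpV12, hpV03] : pV12 = pV14) (by decide)
          · exact absurd (by rw [← h2 pV12, hpV12, hpV04] : pV12 = pV13) (by decide)
          · exact absurd (by rw [← h2 pV12, hpV12, hpV34r] : pV12 = pV02) (by decide)
        · have hpV23r : p pV23 = pV04 := by rw [← hpV04]; exact h2 pV04
          have hbr := (show ∀ u, petersen.Adj pV12 u → (u = pV03 ∨ u = pV04 ∨ u = pV34) by decide) (p pV12) (h1 pV12)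
          rcases hbr with hpV12 | hpV12 | hpV12
          · exact absurd (by rw [← h2 pV12, hpV12, hpV03] : pV12 = pV14) (by decide)
          · exact absurd (by rw [← h2 pV12, hpV12, hpV04] : pV12 = pV23) (by decide)
          · exact absurd (by rw [← h2 pV12, hpV12, hpV34r] : pV12 = pV02) (by decide)
      · exact absurd (by rw [← h2 pV03, hpV03, hpV24r] : pV03 = pV01) (by decide)
  · have hpV34r : p pV34 = pV01 := by rw [← hpV01]; exact h2 pV01
    have hbr := (show ∀ u, petersen.Adj pV02 u → (u = pV13 ∨ u = pV14 ∨ u = pV34) by decide) (p pV02) (h1 pV02)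
    rcases hbr with hpV02 | hpV02 | hpV02
    · have hpV13r : p pV13 = pV02 := by rw [← hpV02]; exact h2 pV02
      have hbr := (show ∀ u, petersen.Adj pV03 u → (u = pV12 ∨ u = pV14 ∨ u = pV24) by decide) (p pV03) (h1 pV03)
      rcases hbr with hpV03 | hpV03 | hpV03
      · have hpV12r : p pV12 = pV03 := by rw [← hpV03]; exact h2 pV03
        have hbr := (show ∀ u, petersen.Adj pV04 u → (u = pV12 ∨ u = pV13 ∨ u = pV23) by decide) (p pV04) (h1 pV04)
        rcases hbr with hpV04 | hpV04 | hpV04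
        · exact absurd (by rw [← h2 pV04, hpV04, hpV12r] : pV04 = pV03) (by decide)
        · exact absurd (by rw [← h2 pV04, hpV04, hpV13r] : pV04 = pV02) (by decide)
        · have hpV23r : p pV23 = pV04 := by rw [← hpV04]; exact h2 pV04
          have hbr := (show ∀ u, petersen.Adj pV14 u → (u = pV02 ∨ u = pV03 ∨ u = pV23) by decide) (p pV14) (h1 pV14)
          rcases hbr with hpV14 | hpV14 | hpV14
          · exact absurd (by rw [← h2 pV14, hpV14, hpV02] : pV14 = pV13) (by decide)
          · exact absurd (by rw [← h2 pV14, hpV14, hpV03] : pV14 = pV12) (by decide)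
          · exact absurd (by rw [← h2 pV14, hpV14, hpV23r] : pV14 = pV04) (by decide)
      · have hpV14r : p pV14 = pV03 := by rw [← hpV03]; exact h2 pV03
        have hbr := (show ∀ u, petersen.Adj pV04 u → (u = pV12 ∨ u = pV13 ∨ u = pV23) by decide) (p pV04) (h1 pV04)
        rcases hbr with hpV04 | hpV04 | hpV04
        · have hpV12r : p pV12 = pV04 := by rw [← hpV04]; exact h2 pV04
          have hbr := (show ∀ u, petersen.Adj pV23 u → (u = pV01 ∨ u = pV04 ∨ u = pV14) by decide) (p pV23) (h1 pV23)
          rcases hbr with hpV23 | hpV23 | hpV23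
          · exact absurd (by rw [← h2 pV23, hpV23, hpV01] : pV23 = pV34) (by decide)
          · exact absurd (by rw [← h2 pV23, hpV23, hpV04] : pV23 = pV12) (by decide)
          · exact absurd (by rw [← h2 pV23, hpV23, hpV14r] : pV23 = pV03) (by decide)
        · exact absurd (by rw [← h2 pV04, hpV04, hpV13r] : pV04 = pV02) (by decide)
        · have hpV23r : p pV23 = pV04 := by rw [← hpV04]; exact h2 pV04
          have hbr := (show ∀ u, petersen.Adj pV12 u → (u = pV03 ∨ u = pV04 ∨ u = pV34) by decide) (p pV12) (h1 pV12)
          rcases hbr with hpV12 | hpV12 | hpV12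
          · exact absurd (by rw [← h2 pV12, hpV12, hpV03] : pV12 = pV14) (by decide)
          · exact absurd (by rw [← h2 pV12, hpV12, hpV04] : pV12 = pV23) (by decide)
          · exact absurd (by rw [← h2 pV12, hpV12, hpV34r] : pV12 = pV01) (by decide)
      · have hpV24r : p pV24 = pV03 := by rw [← hpV03]; exact h2 pV03
        have hbr := (show ∀ u, petersen.Adj pV04 u → (u = pV12 ∨ u = pV13 ∨ u = pV23) by decide) (p pV04) (h1 pV04)
        rcases hbr with hpV04 | hpV04 | hpV04
        · have hpV12r : p pV12 = pV04 := by rw [← hpV04]; exact h2 pV04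
          have hbr := (show ∀ u, petersen.Adj pV14 u → (u = pV02 ∨ u = pV03 ∨ u = pV23) by decide) (p pV14) (h1 pV14)
          rcases hbr with hpV14 | hpV14 | hpV14
          · exact absurd (by rw [← h2 pV14, hpV14, hpV02] : pV14 = pV13) (by decide)
          · exact absurd (by rw [← h2 pV14, hpV14, hpV03] : pV14 = pV24) (by decide)
          · have hpV23r : p pV23 = pV14 := by rw [← hpV14]; exact h2 pV14
            -- leaf 4
            refine ⟨psig4, ?_⟩
            have hfun : ∀ v, p v = pmatch4 v := by
              intro v
              rcases vertex_cases v with rfl|rfl|rfl|rfl|rfl|rfl|rfl|rfl|rfl|rfl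
              · rw [hpV01]; decide
              · rw [hpV02]; decide
              · rw [hpV03]; decide
              · rw [hpV04]; decide
              · rw [hpV12r]; decide
              · rw [hpV13r]; decide
              · rw [hpV14]; decide
              · rw [hpV23r]; decide
              · rw [hpV24r]; decide
              · rw [hpV34r]; decide
            have key : ∀ a b, petersen.Adj a b → ((psig4 a ≠ psig4 b) ↔ b = pmatch4 a) := by decide
            exact fun a b hab => by rw [hfun a]; exact key a b hab
        · exact absurd (by rw [← h2 pV04, hpV04, hpV13r] : pV04 = pV02) (by decide)
        · have hpV23r : p pV23 = pV04 := by rw [← hpV04]; exact h2 pV04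
          have hbr := (show ∀ u, petersen.Adj pV12 u → (u = pV03 ∨ u = pV04 ∨ u = pV34) by decide) (p pV12) (h1 pV12)
          rcases hbr with hpV12 | hpV12 | hpV12
          · exact absurd (by rw [← h2 pV12, hpV12, hpV03] : pV12 = pV24) (by decide)
          · exact absurd (by rw [← h2 pV12, hpV12, hpV04] : pV12 = pV23) (by decide)
          · exact absurd (by rw [← h2 pV12, hpV12, hpV34r] : pV12 = pV01) (by decide)
    · have hpV14r : p pV14 = pV02 := by rw [← hpV02]; exact h2 pV02
      have hbr := (show ∀ u, petersen.Adj pV03 u → (u = pV12 ∨ u = pV14 ∨ u = pV24) by decide) (p pV03) (h1 pV03)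
      rcases hbr with hpV03 | hpV03 | hpV03
      · have hpV12r : p pV12 = pV03 := by rw [← hpV03]; exact h2 pV03
        have hbr := (show ∀ u, petersen.Adj pV04 u → (u = pV12 ∨ u = pV13 ∨ u = pV23) by decide) (p pV04) (h1 pV04)
        rcases hbr with hpV04 | hpV04 | hpV04
        · exact absurd (by rw [← h2 pV04, hpV04, hpV12r] : pV04 = pV03) (by decide)
        · have hpV13r : p pV13 = pV04 := by rw [← hpV04]; exact h2 pV04
          have hbr := (show ∀ u, petersen.Adj pV23 u → (u = pV01 ∨ u = pV04 ∨ u = pV14) by decide) (p pV23) (h1 pV23)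
          rcases hbr with hpV23 | hpV23 | hpV23
          · exact absurd (by rw [← h2 pV23, hpV23, hpV01] : pV23 = pV34) (by decide)
          · exact absurd (by rw [← h2 pV23, hpV23, hpV04] : pV23 = pV13) (by decide)
          · exact absurd (by rw [← h2 pV23, hpV23, hpV14r] : pV23 = pV02) (by decide)
        · have hpV23r : p pV23 = pV04 := by rw [← hpV04]; exact h2 pV04
          have hbr := (show ∀ u, petersen.Adj pV13 u → (u = pV02 ∨ u = pV04 ∨ u = pV24) by decide) (p pV13) (h1 pV13)
          rcases hbr with hpV13 | hpV13 | hpV13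
          · exact absurd (by rw [← h2 pV13, hpV13, hpV02] : pV13 = pV14) (by decide)
          · exact absurd (by rw [← h2 pV13, hpV13, hpV04] : pV13 = pV23) (by decide)
          · have hpV24r : p pV24 = pV13 := by rw [← hpV13]; exact h2 pV13
            -- leaf 5
            refine ⟨psig5, ?_⟩
            have hfun : ∀ v, p v = pmatch5 v := by
              intro v
              rcases vertex_cases v with rfl|rfl|rfl|rfl|rfl|rfl|rfl|rfl|rfl|rfl
              · rw [hpV01]; decide
              · rw [hpV02]; decide
              · rw [hpV03]; decide
              · rw [hpV04]; decide
              · rw [hpV12r]; decide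
              · rw [hpV13]; decide
              · rw [hpV14r]; decide
              · rw [hpV23r]; decide
              · rw [hpV24r]; decide
              · rw [hpV34r]; decide
            have key : ∀ a b, petersen.Adj a b → ((psig5 a ≠ psig5 b) ↔ b = pmatch5 a) := by decide
            exact fun a b hab => by rw [hfun a]; exact key a b hab
      · exact absurd (by rw [← h2 pV03, hpV03, hpV14r] : pV03 = pV02) (by decide)
      · have hpV24r : p pV24 = pV03 := by rw [← hpV03]; exact h2 pV03
        have hbr := (show ∀ u, petersen.Adj pV04 u → (u = pV12 ∨ u = pV13 ∨ u = pV23) by decide) (p pV04) (h1 pV04)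
        rcases hbr with hpV04 | hpV04 | hpV04
        · have hpV12r : p pV12 = pV04 := by rw [← hpV04]; exact h2 pV04
          have hbr := (show ∀ u, petersen.Adj pV13 u → (u = pV02 ∨ u = pV04 ∨ u = pV24) by decide) (p pV13) (h1 pV13)
          rcases hbr with hpV13 | hpV13 | hpV13
          · exact absurd (by rw [← h2 pV13, hpV13, hpV02] : pV13 = pV14) (by decide)
          · exact absurd (by rw [← h2 pV13, hpV13, hpV04] : pV13 = pV12) (by decide)
          · exact absurd (by rw [← h2 pV13, hpV13, hpV24r] : pV13 = pV03) (by decide)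
        · have hpV13r : p pV13 = pV04 := by rw [← hpV04]; exact h2 pV04
          have hbr := (show ∀ u, petersen.Adj pV12 u → (u = pV03 ∨ u = pV04 ∨ u = pV34) by decide) (p pV12) (h1 pV12)
          rcases hbr with hpV12 | hpV12 | hpV12
          · exact absurd (by rw [← h2 pV12, hpV12, hpV03] : pV12 = pV24) (by decide)
          · exact absurd (by rw [← h2 pV12, hpV12, hpV04] : pV12 = pV13) (by decide)
          · exact absurd (by rw [← h2 pV12, hpV12, hpV34r] : pV12 = pV01) (by decide)
        · have hpV23r : p pV23 = pV04 := by rw [← hpV04]; exact h2 pV04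
          have hbr := (show ∀ u, petersen.Adj pV12 u → (u = pV03 ∨ u = pV04 ∨ u = pV34) by decide) (p pV12) (h1 pV12)
          rcases hbr with hpV12 | hpV12 | hpV12
          · exact absurd (by rw [← h2 pV12, hpV12, hpV03] : pV12 = pV24) (by decide)
          · exact absurd (by rw [← h2 pV12, hpV12, hpV04] : pV12 = pV23) (by decide)
          · exact absurd (by rw [← h2 pV12, hpV12, hpV34r] : pV12 = pV01) (by decide)
    · exact absurd (by rw [← h2 pV02, hpV02, hpV34r] : pV02 = pV01) (by decide)

lemma no4cycle : ∀ a b c d : PetersenVertex, petersen.Adj a b → petersen.Adj b c →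
    petersen.Adj c d → petersen.Adj d a → a = c ∨ b = d := by decide

lemma card10 : Fintype.card PetersenVertex = 10 := by decide

lemma nbr_card : ∀ v : PetersenVertex, (petersen.neighborFinset v).card = 3 := by decide

lemma map_const_sum {β : Type*} (l : List β) (k : ℕ) : (l.map (fun _ => k)).sum = k * l.length := by
  induction l with
  | nil => simp
  | cons b l ih => simp [ih, Nat.mul_succ]; ring

end PetersenAux

end PetersenAuxSection

open PetersenAux in
/-- The Petersen graph cannot be edge-covered by a collection of cycles such
that every vertex lies on at most 2 of the cycles. -/
theorem petersen_no_local_cycle_cover_two :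
    ¬ ∃ cs : List ((v : PetersenVertex) × petersen.Walk v v),
      (∀ c ∈ cs, c.2.IsCycle) ∧
      (∀ e ∈ petersen.edgeSet, ∃ c ∈ cs, e ∈ c.2.edges) ∧
      (∀ v : PetersenVertex, (cs.countP fun c => decide (v ∈ c.2.support)) ≤ 2) := by
  rintro ⟨cs, hcyc, hcov, hloc⟩
  classical
  -- per-cycle incident-edge count
  have percyc : ∀ c ∈ cs, ∀ v : PetersenVertex,
      ((petersen.neighborFinset v).filter (fun u => s(v,u) ∈ c.2.edges)).card
        = if v ∈ c.2.support then 2 else 0 := by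
    intro c hc v
    by_cases hv : v ∈ c.2.support
    · rw [if_pos hv]
      obtain ⟨j, hj, hvj⟩ := (cycle_mem_support_iff (hcyc c hc)).mp hv
      subst hvj
      have hchar := cycle_edge_at (hcyc c hc) hj
      have hne := cycle_nbrs_ne (hcyc c hc) hj
      have hset : (petersen.neighborFinset (c.2.getVert j)).filter
            (fun u => s(c.2.getVert j, u) ∈ c.2.edges)
          = {c.2.getVert (j+1), c.2.getVert (if j = 0 then c.2.length - 1 else j - 1)} := by
        ext u
        simp only [Finset.mem_filter, SimpleGraph.mem_neighborFinset, Finset.mem_insert,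
          Finset.mem_singleton]
        constructor
        · rintro ⟨hadj, hmem⟩
          exact (hchar u).mp hmem
        · rintro (rfl | rfl)
        
          · have hmem := (hchar _).mpr (Or.inl rfl)
            exact ⟨petersen.mem_edgeSet.mp (c.2.edges_subset_edgeSet hmem), hmem⟩
          · have hmem := (hchar _).mpr (Or.inr rfl)
            exact ⟨petersen.mem_edgeSet.mp (c.2.edges_subset_edgeSet hmem), hmem⟩
      rw [hset, Finset.card_insert_of_notMem (by simpa using hne), Finset.card_singleton]
    · rw [if_neg hv]
      rw [Finset.card_eq_zero, Finset.filter_eq_empty_iff]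
      intro u _
      intro hmem
      exact hv (c.2.fst_mem_support_of_mem_edges hmem)
  -- double counting at a vertex
  have key : ∀ v : PetersenVertex,
      (∑ u ∈ petersen.neighborFinset v, cs.countP (fun c => decide (s(v,u) ∈ c.2.edges)))
        = 2 * cs.countP (fun c => decide (v ∈ c.2.support)) := by
    intro v
    rw [sum_countP]
    rw [show (cs.map fun c => ((petersen.neighborFinset v).filter
          (fun u => decide (s(v,u) ∈ c.2.edges) = true)).card)
        = cs.map (fun c => if v ∈ c.2.support then 2 else 0) from
      List.map_congr_left (fun c hc => by
        simp only [decide_eq_true_eq]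
        exact percyc c hc v)]
    rw [map_ite_sum]
  have hge1 : ∀ v u : PetersenVertex, petersen.Adj v u →
      1 ≤ cs.countP (fun c => decide (s(v,u) ∈ c.2.edges)) := by
    intro v u hadj
    obtain ⟨c, hc, hmem⟩ := hcov s(v,u) (petersen.mem_edgeSet.mpr hadj)
    exact List.countP_pos_iff.mpr ⟨c, hc, by simpa using hmem⟩
  have hle : ∀ v u : PetersenVertex,
      cs.countP (fun c => decide (s(v,u) ∈ c.2.edges))
        ≤ cs.countP (fun c => decide (v ∈ c.2.support)) := by
    intro v u
    exact List.countP_mono_left (fun c _ h => by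
      simp only [decide_eq_true_eq] at h ⊢
      exact c.2.fst_mem_support_of_mem_edges h)
  have hncyc2 : ∀ v : PetersenVertex, cs.countP (fun c => decide (v ∈ c.2.support)) = 2 := by
    intro v
    have h3 : 3 ≤ ∑ u ∈ petersen.neighborFinset v,
        cs.countP (fun c => decide (s(v,u) ∈ c.2.edges)) := by
      have hb := Finset.card_nsmul_le_sum (petersen.neighborFinset v)
        (fun u => cs.countP (fun c => decide (s(v,u) ∈ c.2.edges))) 1
        (fun u hu => hge1 v u ((SimpleGraph.mem_neighborFinset _ _ _).mp hu))
      rw [nbr_card v] at hb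
      simpa using hb
    have h2 := hloc v
    rw [key v] at h3
    omega
  have hsum4 : ∀ v : PetersenVertex,
      (∑ u ∈ petersen.neighborFinset v, cs.countP (fun c => decide (s(v,u) ∈ c.2.edges))) = 4 := by
    intro v
    rw [key v, hncyc2 v]
  -- unique heavy edge at each vertex
  have uniq : ∀ v : PetersenVertex, ∃ u, (petersen.neighborFinset v).filter
      (fun u => cs.countP (fun c => decide (s(v,u) ∈ c.2.edges)) = 2) = {u} := by
    intro v
    set T := (petersen.neighborFinset v).filter
      (fun u => cs.countP (fun c => decide (s(v,u) ∈ c.2.edges)) = 2) with hT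
    have hsplit := Finset.sum_filter_add_sum_filter_not (petersen.neighborFinset v)
      (fun u => cs.countP (fun c => decide (s(v,u) ∈ c.2.edges)) = 2)
      (fun u => cs.countP (fun c => decide (s(v,u) ∈ c.2.edges)))
    have hTsum : (∑ u ∈ T, cs.countP (fun c => decide (s(v,u) ∈ c.2.edges))) = 2 * T.card := by
      rw [Finset.sum_congr rfl (fun u hu => (Finset.mem_filter.mp hu).2)]
      rw [Finset.sum_const, smul_eq_mul, mul_comm]
    have hNsum : (∑ u ∈ (petersen.neighborFinset v).filter
        (fun u => ¬ cs.countP (fun c => decide (s(v,u) ∈ c.2.edges)) = 2),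
          cs.countP (fun c => decide (s(v,u) ∈ c.2.edges)))
        = ((petersen.neighborFinset v).filter
          (fun u => ¬ cs.countP (fun c => decide (s(v,u) ∈ c.2.edges)) = 2)).card := by
      rw [Finset.sum_congr rfl (fun u hu => ?_), Finset.sum_const, smul_eq_mul, mul_one]
      have hu2 := Finset.mem_filter.mp hu
      have hg := hge1 v u ((SimpleGraph.mem_neighborFinset _ _ _).mp hu2.1)
      have hl := le_trans (hle v u) (hloc v)
      omega
    have hcards : T.card + ((petersen.neighborFinset v).filter
        (fun u => ¬ cs.countP (fun c => decide (s(v,u) ∈ c.2.edges)) = 2)).card = 3 := by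
      rw [hT, ← nbr_card v]
      exact Finset.card_filter_add_card_filter_not _
    rw [hsum4 v] at hsplit
    rw [hTsum, hNsum] at hsplit
    have hTcard : T.card = 1 := by omega
    obtain ⟨u, hu⟩ := Finset.card_eq_one.mp hTcard
    exact ⟨u, hu⟩
  choose p hp using uniq
  have hpmem : ∀ v, p v ∈ (petersen.neighborFinset v).filter
      (fun u => cs.countP (fun c => decide (s(v,u) ∈ c.2.edges)) = 2) := by
    intro v
    rw [hp v]
    exact Finset.mem_singleton_self _
  have hadjp : ∀ v, petersen.Adj v (p v) := fun v =>
    (SimpleGraph.mem_neighborFinset _ _ _).mp (Finset.mem_filter.mp (hpmem v)).1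
  have hmult2 : ∀ v, cs.countP (fun c => decide (s(v, p v) ∈ c.2.edges)) = 2 := fun v =>
    (Finset.mem_filter.mp (hpmem v)).2
  have huniq : ∀ v u, petersen.Adj v u →
      cs.countP (fun c => decide (s(v,u) ∈ c.2.edges)) = 2 → u = p v := by
    intro v u hadj hm
    have : u ∈ (petersen.neighborFinset v).filter
        (fun u => cs.countP (fun c => decide (s(v,u) ∈ c.2.edges)) = 2) :=
      Finset.mem_filter.mpr ⟨(SimpleGraph.mem_neighborFinset _ _ _).mpr hadj, hm⟩
    rw [hp v] at this
    exact Finset.mem_singleton.mp this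
  have hmsym : ∀ v u : PetersenVertex, cs.countP (fun c => decide (s(u,v) ∈ c.2.edges))
      = cs.countP (fun c => decide (s(v,u) ∈ c.2.edges)) := by
    intro v u
    apply List.countP_congr
    intro c _
    rw [Sym2.eq_swap]
  have hinv : ∀ v, p (p v) = v := by
    intro v
    have := huniq (p v) v (hadjp v).symm (by rw [← hmsym (p v) v]; exact hmult2 v)
    exact this.symm
  have hM : ∀ c ∈ cs, ∀ v ∈ c.2.support, s(v, p v) ∈ c.2.edges := by
    intro c hc v hv
    by_contra hnot
    have hlt := countP_lt_countP
      (P := fun c : ((v : PetersenVertex) × petersen.Walk v v) => decide (s(v, p v) ∈ c.2.edges))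
      (Q := fun c : ((v : PetersenVertex) × petersen.Walk v v) => decide (v ∈ c.2.support))
      (fun x h => by
        simp only [decide_eq_true_eq] at h ⊢
        exact x.2.fst_mem_support_of_mem_edges h)
      hc (by simpa using hv) (by simpa using hnot)
    rw [hmult2 v, hncyc2 v] at hlt
    omega
  obtain ⟨σ, hσ⟩ := exists_sigma p hadjp hinv
  have hlen8 : ∀ c ∈ cs, c.2.length = 8 := by
    intro c hc
    have h4 := cycle_length_div_four (hcyc c hc) p hinv σ hσ (hM c hc)
    have h3 := (hcyc c hc).three_le_length
    have h10 : c.2.length ≤ 10 := by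
      have hnd := (hcyc c hc).2
      have hcard := List.Nodup.length_le_card hnd
      rw [card10] at hcard
      have hls := c.2.length_support
      have : c.2.support.tail.length = c.2.length := by
        rw [List.length_tail, hls]; omega
      omega
    have h48 : c.2.length = 4 ∨ c.2.length = 8 := by omega
    rcases h48 with hl4 | hl8
    · exfalso
      have ha01 : petersen.Adj (c.2.getVert 0) (c.2.getVert 1) :=
        c.2.adj_getVert_succ (by omega)
      have ha12 : petersen.Adj (c.2.getVert 1) (c.2.getVert 2) :=
        c.2.adj_getVert_succ (by omega)
      have ha23 : petersen.Adj (c.2.getVert 2) (c.2.getVert 3) :=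
        c.2.adj_getVert_succ (by omega)
      have ha34 : petersen.Adj (c.2.getVert 3) (c.2.getVert 4) :=
        c.2.adj_getVert_succ (by omega)
      have h40 : c.2.getVert 4 = c.2.getVert 0 := by
        rw [show (4:ℕ) = c.2.length by omega, c.2.getVert_length, c.2.getVert_zero]
      rw [h40] at ha34
      have hne02 : c.2.getVert 0 ≠ c.2.getVert 2 := by
        intro h
        have := cycle_getVert_inj (hcyc c hc) (by omega) (by omega) h
        omega
      have hne13 : c.2.getVert 1 ≠ c.2.getVert 3 := by
        intro h
        have := cycle_getVert_inj (hcyc c hc) (by omega) (by omega) h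
        omega
      rcases no4cycle _ _ _ _ ha01 ha12 ha23 ha34 with h | h
      · exact hne02 h
      · exact hne13 h
    · exact hl8
  -- global double counting
  have htot : (∑ v : PetersenVertex, cs.countP (fun c => decide (v ∈ c.2.support)))
      = (cs.map (fun c => c.2.length)).sum := by
    rw [sum_countP]
    congr 1
    apply List.map_congr_left
    intro c hc
    have := cycle_support_card (hcyc c hc)
    rw [← this]
    congr 1
    apply Finset.filter_congr
    intro v _
    simp
  have hlhs : (∑ v : PetersenVertex, cs.countP (fun c => decide (v ∈ c.2.support))) = 20 := by
    rw [Finset.sum_congr rfl (fun v _ => hncyc2 v), Finset.sum_const, smul_eq_mul,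
      Finset.card_univ, card10]
  have hrhs : (cs.map (fun c => c.2.length)).sum = 8 * cs.length := by
    rw [show cs.map (fun c => c.2.length) = cs.map (fun _ => 8) from
      List.map_congr_left (fun c hc => hlen8 c hc), map_const_sum]
  rw [hlhs, hrhs] at htot
  omega
end

section
/- For every graph G, the local star arboricity of G is at most the pseudoarboricity of G plus 1. -/
/-- An orientation of `G` assigns to every edge one of its endpoints (its head). -/
def IsOrientation {V : Type*} (G : SimpleGraph V) (o : Sym2 V → V) : Prop :=
  ∀ e ∈ G.edgeSet, o e ∈ e

/-- The out-degree of `v` in the orientation `o` of `G`: the number of edges at `v`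
oriented away from `v`. -/
noncomputable def outDeg {V : Type*} (G : SimpleGraph V) (o : Sym2 V → V) (v : V) : ℕ :=
  Nat.card {e : Sym2 V // e ∈ G.edgeSet ∧ v ∈ e ∧ o e ≠ v}

/-- The pseudoarboricity of `G`, expressed as the minimum over all orientations of `G`
of the maximum out-degree. -/
noncomputable def pseudoarboricity {V : Type*} (G : SimpleGraph V) : ℕ :=
  sInf {k | ∃ o : Sym2 V → V, IsOrientation G o ∧ ∀ v, outDeg G o v ≤ k}

/-- A star cover of `G`: a family of subgraphs `S i ≤ G`, each a star with center `c i`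
(every edge of `S i` contains `c i`), whose edges together cover all edges of `G`. -/
def IsStarCover {V : Type*} (G : SimpleGraph V) {m : ℕ}
    (S : Fin m → SimpleGraph V) (c : Fin m → V) : Prop :=
  (∀ i, S i ≤ G) ∧ (∀ i, ∀ e ∈ (S i).edgeSet, c i ∈ e) ∧
  (∀ e ∈ G.edgeSet, ∃ i, e ∈ (S i).edgeSet)

/-- The local star arboricity of `G`: the minimum `j` such that the edges of `G` can be
covered by stars with every vertex contained in at most `j` of the stars. -/
noncomputable def localStarArboricity {V : Type*} (G : SimpleGraph V) : ℕ :=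
  sInf {j | ∃ (m : ℕ) (S : Fin m → SimpleGraph V) (c : Fin m → V),
    IsStarCover G S c ∧ ∀ v, Nat.card {i // v ∈ (S i).support} ≤ j}

/-- For every graph `G`, the local star arboricity of `G` is at most the
pseudoarboricity of `G` plus 1. -/
theorem localStarArboricity_le_pseudoarboricity_succ {V : Type*} [Fintype V]
    (G : SimpleGraph V) : localStarArboricity G ≤ pseudoarboricity G + 1 := by
  classical
  haveI : Finite (Sym2 V) := Finite.of_surjective (fun p : V × V => Sym2.mk p.1 p.2)
    (fun e => by induction e using Sym2.ind with | _ a b => exact ⟨(a, b), rfl⟩)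
  -- the pseudoarboricity set is nonempty
  have hne : {k | ∃ o : Sym2 V → V, IsOrientation G o ∧ ∀ v, outDeg G o v ≤ k}.Nonempty := by
    refine ⟨Nat.card (Sym2 V), fun e => e.out.1, ?_, ?_⟩
    · intro e _
      exact Sym2.out_fst_mem e
    · intro v
      exact Nat.card_le_card_of_injective (Subtype.val) Subtype.val_injective
  have hp := Nat.sInf_mem hne
  obtain ⟨o, ho, hdeg⟩ := hp
  set m := Fintype.card V with hm
  set eq : V ≃ Fin m := Fintype.equivFin V with heq
  set S : Fin m → SimpleGraph V := fun i =>
    { Adj := fun a b => G.Adj a b ∧ o s(a, b) = eq.symm i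
      symm := by
        refine ⟨?_⟩
        intro a b hab
        refine ⟨hab.1.symm, ?_⟩
        rw [Sym2.eq_swap]
        exact hab.2
      loopless := ⟨fun a h => G.loopless.irrefl a h.1⟩ } with hS
  have hadjS : ∀ (i : Fin m) (a b : V), (S i).Adj a b ↔ G.Adj a b ∧ o s(a, b) = eq.symm i := by
    intro i a b; rw [hS]
  refine Nat.sInf_le ⟨m, S, fun i => eq.symm i, ⟨?_, ?_, ?_⟩, ?_⟩
  · intro i a b hab
    exact hab.1
  · intro i e
    induction e using Sym2.ind with
    | _ a b =>
      intro he
      rw [SimpleGraph.mem_edgeSet, hadjS] at he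
      show eq.symm i ∈ s(a, b)
      rw [← he.2]
      exact ho _ ((SimpleGraph.mem_edgeSet G).mpr he.1)
  · intro e
    induction e using Sym2.ind with
    | _ a b =>
      intro he
      refine ⟨eq (o s(a, b)), ?_⟩
      rw [SimpleGraph.mem_edgeSet, hadjS]
      exact ⟨he, by simp⟩
  · intro w
    have hcard : Nat.card {i : Fin m // w ∈ (S i).support} ≤
        Nat.card (Option {e : Sym2 V // e ∈ G.edgeSet ∧ w ∈ e ∧ o e ≠ w}) := by
      have hf : ∃ f : {i : Fin m // w ∈ (S i).support} →
          Option {e : Sym2 V // e ∈ G.edgeSet ∧ w ∈ e ∧ o e ≠ w}, Function.Injective f := by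
        refine ⟨fun i => if h : eq.symm i.1 = w then none else
          some ⟨s(w, Classical.choose ((SimpleGraph.mem_support _).mp i.2)), ?_, ?_, ?_⟩, ?_⟩
        · have hb := Classical.choose_spec ((SimpleGraph.mem_support _).mp i.2)
          rw [hadjS] at hb
          exact (SimpleGraph.mem_edgeSet G).mpr hb.1
        · exact Sym2.mem_mk_left _ _
        · have hb := Classical.choose_spec ((SimpleGraph.mem_support _).mp i.2)
          rw [hadjS] at hb
          rw [hb.2]
          exact h
        · rintro ⟨i, hi⟩ ⟨j, hj⟩ hij
          have hbi := Classical.choose_spec ((SimpleGraph.mem_support (S i)).mp hi)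
          have hbj := Classical.choose_spec ((SimpleGraph.mem_support (S j)).mp hj)
          rw [hadjS] at hbi hbj
          simp only at hij
          split_ifs at hij with h1 h2 h2
          all_goals first
            | exact Subtype.ext (eq.symm.injective (h1.trans h2.symm))
            | exact absurd hij (by exact fun hc => Option.noConfusion hc)
            | · have h3 := Option.some_injective _ hij
                have h4 : eq.symm i = eq.symm j := by
                  rw [← hbi.2, ← hbj.2]
                  exact congrArg (fun x => o x.1) h3
                exact Subtype.ext (eq.symm.injective h4)
      obtain ⟨f, hf⟩ := hf
      exact Nat.card_le_card_of_injective f hf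
    have hopt : Nat.card (Option {e : Sym2 V // e ∈ G.edgeSet ∧ w ∈ e ∧ o e ≠ w})
        = outDeg G o w + 1 := by
      have e2 : Option {e : Sym2 V // e ∈ G.edgeSet ∧ w ∈ e ∧ o e ≠ w} ≃
          {e : Sym2 V // e ∈ G.edgeSet ∧ w ∈ e ∧ o e ≠ w} ⊕ PUnit.{1} :=
        Equiv.optionEquivSumPUnit _
      have h1 : Nat.card PUnit.{1} = 1 := Nat.card_unique
      rw [Nat.card_congr e2, Nat.card_sum, h1]
      rfl
    rw [hopt] at hcard
    exact le_trans hcard (Nat.add_le_add_right (hdeg w) 1)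
end

section
/- The local star arboricity of a graph G equals its pseudoarboricity p(G) if and only if G has an orientation with maximum out-degree p(G) in which out-degree p(G) is attained only at vertices whose degree in G equals p(G). -/
lemma degree_eq_ncard {V : Type*} [Fintype V] (G : SimpleGraph V) [DecidableRel G.Adj] (v : V) :
    G.degree v = Nat.card {e : Sym2 V // e ∈ G.edgeSet ∧ v ∈ e} := by
  classical
  have h : Nat.card {e : Sym2 V // e ∈ G.edgeSet ∧ v ∈ e}
      = Nat.card (G.incidenceSet v) := rfl
  rw [h, Nat.card_eq_fintype_card, SimpleGraph.card_incidenceSet_eq_degree]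

lemma mem_support_of_edge' {V : Type*} {H : SimpleGraph V} {e : Sym2 V} {v : V}
    (he : e ∈ H.edgeSet) (hv : v ∈ e) : v ∈ H.support := by
  induction e with
  | h a b =>
    rw [Sym2.mem_iff] at hv
    rw [SimpleGraph.mem_edgeSet] at he
    rcases hv with rfl | rfl
    · exact ⟨b, he⟩
    · exact ⟨a, he.symm⟩

/-- Trivial star cover: one star per vertex covering its incident edges. -/
lemma trivial_cover {V : Type*} [Fintype V] (G : SimpleGraph V) :
    ∃ (m : ℕ) (S : Fin m → SimpleGraph V) (c : Fin m → V),
      IsStarCover G S c ∧ ∀ v, Nat.card {i // v ∈ (S i).support} ≤ Fintype.card V := by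
  classical
  set ev : Fin (Fintype.card V) ≃ V := (Fintype.equivFin V).symm
  refine ⟨Fintype.card V, fun i => SimpleGraph.fromEdgeSet (G.incidenceSet (ev i)),
    fun i => ev i, ⟨?_, ?_, ?_⟩, fun v => ?_⟩
  · intro i x y hxy
    exact ((SimpleGraph.fromEdgeSet_adj _).mp hxy).1.1
  · intro i e he
    rw [SimpleGraph.edgeSet_fromEdgeSet] at he
    exact he.1.2
  · intro e he
    induction e with
    | h a b =>
      refine ⟨ev.symm a, ?_⟩
      rw [SimpleGraph.edgeSet_fromEdgeSet]
      refine ⟨⟨he, ?_⟩, G.not_isDiag_of_mem_edgeSet he⟩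
      simp
  · calc Nat.card {i // v ∈ (SimpleGraph.fromEdgeSet (G.incidenceSet (ev i))).support}
        ≤ Nat.card (Fin (Fintype.card V)) :=
          Nat.card_le_card_of_injective Subtype.val Subtype.val_injective
    _ = Fintype.card V := by simp

lemma orientation_to_cover {V : Type*} [Fintype V] (G : SimpleGraph V) [DecidableRel G.Adj]
    (o : Sym2 V → V) (hor : IsOrientation G o) (p : ℕ)
    (hbd : ∀ v, outDeg G o v ≤ p)
    (hcond : ∀ v, outDeg G o v = p → G.degree v = p) :
    ∃ (m : ℕ) (S : Fin m → SimpleGraph V) (c : Fin m → V),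
      IsStarCover G S c ∧ ∀ v, Nat.card {i // v ∈ (S i).support} ≤ p := by
  classical
  set ev : Fin (Fintype.card V) ≃ V := (Fintype.equivFin V).symm
  set S : Fin (Fintype.card V) → SimpleGraph V :=
    fun i => SimpleGraph.fromEdgeSet {e | e ∈ G.edgeSet ∧ o e = ev i} with hS
  have hedge : ∀ i e, e ∈ (S i).edgeSet ↔ e ∈ G.edgeSet ∧ o e = ev i := by
    intro i e
    rw [hS]
    rw [SimpleGraph.edgeSet_fromEdgeSet]
    constructor
    · exact fun h => h.1
    · exact fun h => ⟨h, G.not_isDiag_of_mem_edgeSet h.1⟩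
  have hsupp : ∀ i v, v ∈ (S i).support ↔ ∃ e, e ∈ G.edgeSet ∧ o e = ev i ∧ v ∈ e := by
    intro i v
    constructor
    · rintro ⟨w, hw⟩
      have he : s(v, w) ∈ (S i).edgeSet := hw
      rw [hedge] at he
      exact ⟨s(v, w), he.1, he.2, by simp⟩
    · rintro ⟨e, he, hoe, hv⟩
      exact mem_support_of_edge' ((hedge i e).mpr ⟨he, hoe⟩) hv
  refine ⟨Fintype.card V, S, fun i => ev i, ⟨?_, ?_, ?_⟩, fun v => ?_⟩
  · intro i x y hxy
    exact ((hedge i s(x, y)).mp hxy).1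
  · intro i e he
    rw [hedge] at he
    show ev i ∈ e
    exact he.2 ▸ hor e he.1
  · intro e he
    exact ⟨ev.symm (o e), (hedge _ e).mpr ⟨he, by simp⟩⟩
  -- now the load bound
  · -- choose witness edge for each star containing v
    by_cases hvp : outDeg G o v = p
    · -- degree v = p, so v has no in-edges; inject into out-edges
      have hdeg := hcond v hvp
      -- no in-edge at v
      have noin : ∀ e ∈ G.edgeSet, v ∈ e → o e ≠ v := by
        intro e0 he0 hv0 h0
        have hssub : {e : Sym2 V | e ∈ G.edgeSet ∧ v ∈ e ∧ o e ≠ v}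
            ⊂ {e : Sym2 V | e ∈ G.edgeSet ∧ v ∈ e} := by
          constructor
          · exact fun e h => ⟨h.1, h.2.1⟩
          · intro hsub
            exact (hsub ⟨he0, hv0⟩).2.2 h0
        have hlt := Set.ncard_lt_ncard hssub (Set.toFinite _)
        rw [← Nat.card_coe_set_eq, ← Nat.card_coe_set_eq] at hlt
        have h1 : outDeg G o v
            = Nat.card {e : Sym2 V | e ∈ G.edgeSet ∧ v ∈ e ∧ o e ≠ v} := rfl
        have h2 : G.degree v
            = Nat.card {e : Sym2 V | e ∈ G.edgeSet ∧ v ∈ e} := degree_eq_ncard G v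
        omega
      -- injection from stars containing v into out-edges at v
      have hinj : ∃ g : {i // v ∈ (S i).support} →
          {e : Sym2 V // e ∈ G.edgeSet ∧ v ∈ e ∧ o e ≠ v}, Function.Injective g := by
        have hw : ∀ i : {i // v ∈ (S i).support},
            ∃ e, e ∈ G.edgeSet ∧ o e = ev i.1 ∧ v ∈ e := fun i => (hsupp i.1 v).mp i.2
        choose w hw1 hw2 hw3 using hw
        refine ⟨fun i => ⟨w i, hw1 i, hw3 i, noin (w i) (hw1 i) (hw3 i)⟩, ?_⟩
        intro i i' hii
        have : w i = w i' := congrArg Subtype.val hii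
        apply Subtype.ext
        apply ev.injective
        rw [← hw2 i, ← hw2 i', this]
      obtain ⟨g, hg⟩ := hinj
      exact le_trans (Nat.card_le_card_of_injective g hg) (hbd v)
    · -- outDeg v < p : inject into Option out-edges
      have hlt : outDeg G o v < p := lt_of_le_of_ne (hbd v) hvp
      have hinj : ∃ g : {i // v ∈ (S i).support} →
          Option {e : Sym2 V // e ∈ G.edgeSet ∧ v ∈ e ∧ o e ≠ v}, Function.Injective g := by
        have hw : ∀ i : {i // v ∈ (S i).support},
            ∃ e, e ∈ G.edgeSet ∧ o e = ev i.1 ∧ v ∈ e := fun i => (hsupp i.1 v).mp i.2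
        choose w hw1 hw2 hw3 using hw
        refine ⟨fun i => if h : o (w i) = v then none else some ⟨w i, hw1 i, hw3 i, h⟩, ?_⟩
        intro i i' hii
        apply Subtype.ext
        apply ev.injective
        rw [← hw2 i, ← hw2 i']
        by_cases h1 : o (w i) = v <;> by_cases h2 : o (w i') = v
        · rw [h1, h2]
        · simp [h1, h2] at hii
        · simp [h1, h2] at hii
        · simp [h1, h2] at hii
          rw [hii]
      obtain ⟨g, hg⟩ := hinj
      have := Nat.card_le_card_of_injective g hg
      rw [Finite.card_option] at this
      unfold outDeg at hlt
      omega

lemma cover_to_orientation {V : Type*} [Fintype V] (G : SimpleGraph V) [DecidableRel G.Adj]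
    {m : ℕ} (S : Fin m → SimpleGraph V) (c : Fin m → V)
    (hc : IsStarCover G S c) (j : ℕ) (hj : ∀ v, Nat.card {i // v ∈ (S i).support} ≤ j) :
    ∃ o : Sym2 V → V, IsOrientation G o ∧ ∀ v, outDeg G o v ≤ j ∧
      (outDeg G o v = j → G.degree v = j) := by
  classical
  obtain ⟨hle, hcen, hcov⟩ := hc
  -- choose a covering star for each edge
  choose idx hidx using hcov
  set o : Sym2 V → V := fun e =>
    if h : e ∈ G.edgeSet then c (idx e h) else e.out.1 with ho
  have hor : IsOrientation G o := by
    intro e he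
    simp only [ho, dif_pos he]
    exact hcen _ _ (hidx e he)
  refine ⟨o, hor, fun v => ?_⟩
  -- the injection from out-edges at v into stars containing v
  set f : {e : Sym2 V // e ∈ G.edgeSet ∧ v ∈ e ∧ o e ≠ v} → {i // v ∈ (S i).support} :=
    fun e => ⟨idx e.1 e.2.1, mem_support_of_edge' (hidx e.1 e.2.1) e.2.2.1⟩ with hf
  have hoe : ∀ (e : Sym2 V) (he : e ∈ G.edgeSet), o e = c (idx e he) := by
    intro e he; simp only [ho, dif_pos he]
  have key : ∀ e : {e : Sym2 V // e ∈ G.edgeSet ∧ v ∈ e ∧ o e ≠ v},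
      e.1 = s(v, c (idx e.1 e.2.1)) := by
    rintro ⟨e, he, hv, hne⟩
    have h1 : c (idx e he) ∈ e := hcen _ _ (hidx e he)
    have h2 : v ≠ c (idx e he) := by
      rw [hoe e he] at hne; exact fun h => hne h.symm
    exact (Sym2.mem_and_mem_iff h2).mp ⟨hv, h1⟩
  have finj : Function.Injective f := by
    rintro e e' hee
    have : idx e.1 e.2.1 = idx e'.1 e'.2.1 := congrArg Subtype.val hee
    apply Subtype.ext
    rw [key e, key e', this]
  have hout : outDeg G o v ≤ j :=
    le_trans (Nat.card_le_card_of_injective f finj) (hj v)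
  refine ⟨hout, fun heq => ?_⟩
  -- no in-edges at v
  have noin : ∀ e ∈ G.edgeSet, v ∈ e → o e ≠ v := by
    intro e0 he0 hv0
    intro h
    -- i0 := idx e0, with c i0 = v; it is distinct from all f e
    set i0 : {i // v ∈ (S i).support} :=
      ⟨idx e0 he0, mem_support_of_edge' (hidx e0 he0) hv0⟩ with hi0
    set g : Option {e : Sym2 V // e ∈ G.edgeSet ∧ v ∈ e ∧ o e ≠ v} → {i // v ∈ (S i).support} :=
      fun x => x.elim i0 f with hg
    have hci0 : c (idx e0 he0) = v := by rw [← hoe e0 he0]; exact h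
    have hne : ∀ e, f e ≠ i0 := by
      intro e hfe
      have : idx e.1 e.2.1 = idx e0 he0 := congrArg Subtype.val hfe
      exact e.2.2.2 (by rw [hoe e.1 e.2.1, this, hci0])
    have ginj : Function.Injective g := by
      rintro (_ | x) (_ | y) hxy
      · rfl
      · exact absurd hxy.symm (hne y)
      · exact absurd hxy (hne x)
      · exact congrArg some (finj hxy)
    have := Nat.card_le_card_of_injective g ginj
    rw [Finite.card_option] at this
    have : outDeg G o v + 1 ≤ j := le_trans this (hj v)
    omega
  -- hence degree v = outDeg v = j
  rw [degree_eq_ncard, ← heq]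
  unfold outDeg
  apply Nat.card_congr
  exact (Equiv.subtypeEquivRight (fun e =>
    ⟨fun h => ⟨h.1, h.2.1⟩, fun h => ⟨h.1, h.2, noin e h.1 h.2⟩⟩)).symm

/-- `sa_ℓ(G) = p(G)` if and only if `G` has an orientation with maximum
out-degree `p(G)` in which out-degree `p(G)` is attained only at vertices whose degree
in `G` equals `p(G)`. -/
theorem localStarArboricity_eq_pseudoarboricity_iff {V : Type*} [Fintype V]
    (G : SimpleGraph V) [DecidableRel G.Adj] :
    localStarArboricity G = pseudoarboricity G ↔
      ∃ o : Sym2 V → V, IsOrientation G o ∧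
        (∀ v, outDeg G o v ≤ pseudoarboricity G) ∧
        (∀ v, outDeg G o v = pseudoarboricity G → G.degree v = pseudoarboricity G) := by
  classical
  set p := pseudoarboricity G with hp
  have hne : {j | ∃ (m : ℕ) (S : Fin m → SimpleGraph V) (c : Fin m → V),
      IsStarCover G S c ∧ ∀ v, Nat.card {i // v ∈ (S i).support} ≤ j}.Nonempty := by
    obtain ⟨m, S, c, hc, hl⟩ := trivial_cover G
    exact ⟨Fintype.card V, m, S, c, hc, hl⟩
  constructor
  · intro h
    have hmem := Nat.sInf_mem hne
    obtain ⟨m, S, c, hc, hl⟩ := hmem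
    have hl : ∀ v, Nat.card {i // v ∈ (S i).support} ≤ p := by
      intro v
      exact le_trans (hl v) (le_of_eq h)
    obtain ⟨o, hor, hv⟩ := cover_to_orientation G S c hc p hl
    exact ⟨o, hor, fun v => (hv v).1, fun v => (hv v).2⟩
  · rintro ⟨o, hor, hbd, hcond⟩
    obtain ⟨m, S, c, hc, hl⟩ := orientation_to_cover G o hor p hbd hcond
    have h1 : localStarArboricity G ≤ p := Nat.sInf_le ⟨m, S, c, hc, hl⟩
    have h2 : p ≤ localStarArboricity G := by
      apply le_csInf hne
      rintro j ⟨m', S', c', hc', hl'⟩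
      obtain ⟨o', hor', hv'⟩ := cover_to_orientation G S' c' hc' j hl'
      exact Nat.sInf_le ⟨o', hor', fun v => (hv' v).1⟩
    exact le_antisymm h1 h2
end

section
/- For every graph G, the arboricity of G is at most the local star arboricity of G. -/
open SimpleGraph Finset

namespace StarArbAux

variable {V : Type*}

lemma reachable_lift {H K : SimpleGraph V} (h : ∀ a b, H.Adj a b → K.Reachable a b)
    {a b : V} (r : H.Reachable a b) : K.Reachable a b := by
  obtain ⟨p⟩ := r
  induction p with
  | nil => exact Reachable.refl _
  | cons ha _ ih => exact (h _ _ ha).trans ih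

/-- If there is a walk from `a` to `b` in `B` plus the edge `u w`, but `a,b` are not
`B`-reachable, then the walk essentially passes through the extra edge. -/
lemma split {B : SimpleGraph V} {u w : V} :
    ∀ {a b : V}, (B ⊔ fromEdgeSet {s(u, w)}).Walk a b → ¬ B.Reachable a b →
    (B.Reachable a u ∧ B.Reachable w b) ∨ (B.Reachable a w ∧ B.Reachable u b) := by
  intro a b p
  induction p with
  | nil => intro hn; exact absurd (Reachable.refl _) hn
  | @cons a c b ha p ih =>
    intro hn
    rw [sup_adj, fromEdgeSet_adj, Set.mem_singleton_iff, Sym2.eq_iff] at ha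
    by_cases hcb : B.Reachable c b
    · -- the edge a-c must be the special one, else contradiction
      rcases ha with hB | ⟨hor, hne⟩
      · exact absurd ((hB.reachable).trans hcb) hn
      · rcases hor with ⟨rfl, rfl⟩ | ⟨rfl, rfl⟩
        · exact Or.inl ⟨Reachable.refl _, hcb⟩
        · exact Or.inr ⟨Reachable.refl _, hcb⟩
    · have ihcb := ih hcb
      rcases ha with hB | ⟨hor, hne⟩
      · rcases ihcb with ⟨h1, h2⟩ | ⟨h1, h2⟩
        · exact Or.inl ⟨(hB.reachable).trans h1, h2⟩
        · exact Or.inr ⟨(hB.reachable).trans h1, h2⟩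
      · rcases hor with ⟨rfl, rfl⟩ | ⟨rfl, rfl⟩
        · rcases ihcb with ⟨h1, h2⟩ | ⟨h1, h2⟩
          · exact absurd h2 hcb
          · exact absurd h2 hn
        · rcases ihcb with ⟨h1, h2⟩ | ⟨h1, h2⟩
          · exact absurd h2 hn
          · exact absurd h2 hcb

/-- Adding an edge between two non-reachable vertices keeps a graph acyclic. -/
lemma isAcyclic_sup_edge {H : SimpleGraph V} (hH : H.IsAcyclic) {u w : V}
    (hne : u ≠ w) (hr : ¬ H.Reachable u w) :
    (H ⊔ fromEdgeSet {s(u, w)}).IsAcyclic := by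
  intro v c hc
  by_cases he : s(u, w) ∈ c.edges
  · have : (H ⊔ fromEdgeSet {s(u, w)}).Adj u w ∧
        ((H ⊔ fromEdgeSet {s(u, w)}) \ fromEdgeSet {s(u, w)}).Reachable u w :=
      (adj_and_reachable_delete_edges_iff_exists_cycle).2 ⟨v, c, hc, he⟩
    refine hr (this.2.mono ?_)
    intro a b hab
    rw [sdiff_adj, sup_adj] at hab
    rcases hab with ⟨hB | hE, hnE⟩
    · exact hB
    · exact absurd hE hnE
  · have hsub : ∀ e ∈ c.edges, e ∈ H.edgeSet := by
      intro e hec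
      have := c.edges_subset_edgeSet hec
      rw [edgeSet_sup, edgeSet_fromEdgeSet] at this
      rcases this with hb | hb
      · exact hb
      · exfalso
        rw [Set.mem_diff, Set.mem_singleton_iff] at hb
        exact he (hb.1 ▸ hec)
    have hct : (c.transfer H hsub).IsCycle := by
      rw [Walk.isCycle_def, Walk.isTrail_def] at hc ⊢
      rw [Walk.edges_transfer, Walk.support_transfer]
      refine ⟨hc.1, ?_, hc.2.2⟩
      intro hnil
      apply hc.2.1
      rw [← Walk.nil_iff_eq_nil, Walk.nil_iff_length_eq]
      have := congrArg Walk.length hnil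
      rw [Walk.length_transfer] at this
      simpa using this
    exact hH _ hct

lemma isAcyclic_anti {H K : SimpleGraph V} (h : H ≤ K) (hK : K.IsAcyclic) : H.IsAcyclic := by
  intro v c hc
  exact hK (c.mapLe h) (hc.mapLe h)

/-- every edge of a path in a forest separates the endpoints of the path. -/
lemma sep_of_mem_path_edges {H : SimpleGraph V} (hH : H.IsAcyclic) {a b : V}
    {p : H.Walk a b} (hp : p.IsPath) {f : Sym2 V} (hf : f ∈ p.edges) :
    ¬ (H.deleteEdges {f}).Reachable a b := by
  classical
  rintro ⟨q⟩
  have hq2 : (q.mapLe (H.deleteEdges_le {f})).toPath = (⟨p, hp⟩ : H.Path a b) :=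
    hH.path_unique _ _
  have hf2 : f ∈ (q.mapLe (H.deleteEdges_le {f})).edges := by
    apply Walk.edges_toPath_subset
    rw [hq2]
    exact hf
  have : f ∈ q.edges := by
    simpa [Walk.mapLe, Walk.edges_map] using hf2
  have := q.edges_subset_edgeSet this
  rw [edgeSet_deleteEdges] at this
  exact this.2 rfl


/-- Walks whose edges stay inside `U` lift to the induced graph. -/
lemma reachable_induce_of_walk {H : SimpleGraph V} {U : Set V}
    (hend : ∀ a b, H.Adj a b → a ∈ U ∧ b ∈ U) :
    ∀ {a b : V} (_ : H.Walk a b) (ha : a ∈ U) (hb : b ∈ U),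
      (H.induce U).Reachable ⟨a, ha⟩ ⟨b, hb⟩ := by
  intro a b p
  induction p with
  | nil => intro ha hb; exact Reachable.refl _
  | @cons a c b ha p ih =>
    intro haU hbU
    have hcU : c ∈ U := (hend _ _ ha).2
    have hadj : (H.induce U).Adj ⟨a, haU⟩ ⟨c, hcU⟩ := by
      simp [comap_adj, ha]
    exact (hadj.reachable).trans (ih hcU hbU)

/-- An acyclic graph whose edges all lie inside `U` and which connects all of `U`
has exactly `|U| - 1` edges. -/
lemma tree_count [Fintype V] {H : SimpleGraph V} (hac : H.IsAcyclic) {U : Set V}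
    (hne : U.Nonempty) (hend : ∀ a b, H.Adj a b → a ∈ U ∧ b ∈ U)
    (hconn : ∀ a ∈ U, ∀ b ∈ U, H.Reachable a b) :
    H.edgeSet.ncard + 1 = U.ncard := by
  classical
  letI : Fintype U := Fintype.ofFinite _
  letI : Fintype H.edgeSet := Fintype.ofFinite _
  letI : Fintype (H.induce U).edgeSet := Fintype.ofFinite _
  rw [Set.ncard_eq_toFinset_card' H.edgeSet, Set.ncard_eq_toFinset_card' U]
  rw [show H.edgeSet.toFinset = H.edgeFinset from rfl]
  haveI : Nonempty U := ⟨⟨hne.choose, hne.choose_spec⟩⟩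
  have htree : (H.induce U).IsTree := by
    refine ⟨Connected.mk ?_, ?_⟩
    · rintro ⟨a, ha⟩ ⟨b, hb⟩
      obtain ⟨p⟩ := hconn a ha b hb
      exact reachable_induce_of_walk hend p ha hb
    · intro v c hc
      exact hac _ (hc.map (f := (Embedding.induce (G := H) U).toHom) (Embedding.induce (G := H) U).injective)
  have hcards : (H.induce U).edgeFinset.card + 1 = Fintype.card U :=
    htree.card_edgeFinset
  rw [Set.toFinset_card U, ← hcards]
  congr 1
  -- edge sets are in bijection via Sym2.map Subtype.val
  refine (Finset.card_bij (fun e _ => Sym2.map Subtype.val e) ?_ ?_ ?_).symm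
  · intro e he
    induction e with
    | _ a b =>
      rw [mem_edgeFinset, mem_edgeSet] at he
      show Sym2.map Subtype.val s(a, b) ∈ H.edgeFinset
      rw [Sym2.map_pair_eq, mem_edgeFinset, mem_edgeSet]
      simpa using he
  · intro e₁ h₁ e₂ h₂ hmap
    exact Sym2.map.injective Subtype.val_injective hmap
  · intro e he
    induction e with
    | _ a b =>
      rw [mem_edgeFinset, mem_edgeSet] at he
      obtain ⟨haU, hbU⟩ := hend _ _ he
      refine ⟨s(⟨a, haU⟩, ⟨b, hbU⟩), ?_, rfl⟩
      rw [mem_edgeFinset, mem_edgeSet]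
      simpa using he


lemma single_le {G : SimpleGraph V} {x y : V} (h : G.Adj x y) :
    fromEdgeSet {s(x, y)} ≤ G := by
  intro a b hab
  rw [fromEdgeSet_adj, Set.mem_singleton_iff, Sym2.eq_iff] at hab
  rcases hab.1 with ⟨rfl, rfl⟩ | ⟨rfl, rfl⟩
  · exact h
  · exact h.symm

lemma edgeSet_sup_edge (H : SimpleGraph V) {u w : V} (h : u ≠ w) :
    (H ⊔ fromEdgeSet {s(u, w)}).edgeSet = insert s(u, w) H.edgeSet := by
  ext e
  rw [edgeSet_sup, edgeSet_fromEdgeSet]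
  simp only [Set.mem_union, Set.mem_diff, Set.mem_singleton_iff, Set.mem_insert_iff,
    Set.mem_setOf_eq]
  constructor
  · rintro (he | ⟨rfl, _⟩)
    · exact Or.inr he
    · exact Or.inl rfl
  · rintro (rfl | he)
    · exact Or.inr ⟨rfl, fun hd => h (Sym2.mk_isDiag_iff.1 hd)⟩
    · exact Or.inl he

section Families

variable [Fintype V] {j : ℕ}

abbrev Good (G : SimpleGraph V) (F : Fin j → SimpleGraph V) : Prop :=
  (∀ i, F i ≤ G ∧ (F i).IsAcyclic) ∧
  ∀ ⦃i i' : Fin j⦄, i ≠ i' → Disjoint (F i).edgeSet (F i').edgeSet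

noncomputable def wt (F : Fin j → SimpleGraph V) : ℕ := ∑ i, (F i).edgeSet.ncard

abbrev IsMaxGood (G : SimpleGraph V) (F : Fin j → SimpleGraph V) : Prop :=
  Good G F ∧ ∀ F' : Fin j → SimpleGraph V, Good G F' → wt F' ≤ wt F

lemma wt_update (F : Fin j → SimpleGraph V) (i : Fin j) (A : SimpleGraph V) :
    wt (Function.update F i A) + (F i).edgeSet.ncard = wt F + A.edgeSet.ncard := by
  classical
  unfold wt
  have hfe : (fun i' => ((Function.update F i A) i').edgeSet.ncard)
      = Function.update (fun i' => (F i').edgeSet.ncard) i A.edgeSet.ncard :=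
    funext fun i' => Function.apply_update (fun _ H => H.edgeSet.ncard) F i A i'
  rw [hfe, Finset.sum_update_of_mem (Finset.mem_univ i),
    Finset.sum_eq_sum_sdiff_singleton_add (Finset.mem_univ i)
      (fun i' => (F i').edgeSet.ncard)]
  omega

lemma isAcyclic_bot : (⊥ : SimpleGraph V).IsAcyclic := by
  intro v c hc
  cases c with
  | nil => simp at hc
  | cons h _ => exact h.elim

lemma good_bot (G : SimpleGraph V) : Good G (fun _ : Fin j => ⊥) :=
  ⟨fun _ => ⟨bot_le, isAcyclic_bot⟩, fun _ _ _ => by simp⟩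

lemma exists_maxGood (G : SimpleGraph V) (j : ℕ) :
    ∃ F : Fin j → SimpleGraph V, IsMaxGood G F := by
  classical
  have hbound : ∀ F : Fin j → SimpleGraph V, wt F ≤ j * Nat.card (Sym2 V) := by
    intro F
    calc wt F ≤ ∑ _i : Fin j, Nat.card (Sym2 V) := by
          apply Finset.sum_le_sum
          intro i _
          rw [← Set.ncard_univ]
          exact Set.ncard_le_ncard (Set.subset_univ _) (Set.finite_univ)
      _ = j * Nat.card (Sym2 V) := by simp [Finset.sum_const, mul_comm]
  set P : ℕ → Prop := fun n => ∃ F : Fin j → SimpleGraph V, Good G F ∧ wt F = n with hP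
  have h0 : P 0 := ⟨fun _ => ⊥, good_bot G, by simp [wt]⟩
  have hspec : P (Nat.findGreatest P (j * Nat.card (Sym2 V))) :=
    Nat.findGreatest_spec (Nat.zero_le _) h0
  obtain ⟨F, hgood, hwF⟩ := hspec
  refine ⟨F, hgood, ?_⟩
  intro F' hg'
  rw [hwF]
  exact Nat.le_findGreatest (hbound F') ⟨F', hg', rfl⟩

inductive Chain (F : Fin j → SimpleGraph V) (x₀ y₀ : V) : ℕ → V → V → Prop
  | zero : Chain F x₀ y₀ 0 x₀ y₀
  | succ {d : ℕ} {x y : V} (i : Fin j) {u w : V} :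
      Chain F x₀ y₀ d x y → (F i).Adj u w → (F i).Reachable x y →
      ¬ ((F i).deleteEdges {s(u, w)}).Reachable x y → Chain F x₀ y₀ (d + 1) u w

lemma Chain.gadj {G : SimpleGraph V} {F : Fin j → SimpleGraph V} {x₀ y₀ : V}
    (hG : G.Adj x₀ y₀) (hF : ∀ i, F i ≤ G) {d : ℕ} {u w : V}
    (h : Chain F x₀ y₀ d u w) : G.Adj u w := by
  induction h with
  | zero => exact hG
  | succ i _ hadj _ _ _ => exact hF i hadj

abbrev BadAt (G : SimpleGraph V) (j : ℕ) (d : ℕ) : Prop :=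
  ∃ (F : Fin j → SimpleGraph V) (x₀ y₀ : V),
    IsMaxGood G F ∧ G.Adj x₀ y₀ ∧ (∀ i, ¬ (F i).Adj x₀ y₀) ∧
    ∃ (u w : V) (i : Fin j), Chain F x₀ y₀ d u w ∧ ¬ (F i).Reachable u w

/-- with a maximum weight family, uncovered edges have their ends reachable in
every forest of the family. -/
lemma reachable_of_maxGood {G : SimpleGraph V} {F : Fin j → SimpleGraph V}
    (hmax : IsMaxGood G F) {x y : V} (hxy : G.Adj x y)
    (hnc : ∀ i, ¬ (F i).Adj x y) (i : Fin j) : (F i).Reachable x y := by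
  classical
  by_contra hr
  set A : SimpleGraph V := F i ⊔ fromEdgeSet {s(x, y)} with hA
  have hgood : Good G (Function.update F i A) := by
    constructor
    · intro i'
      rcases eq_or_ne i' i with rfl | hne
      · rw [Function.update_self]
        exact ⟨sup_le (hmax.1.1 i').1 (single_le hxy),
          isAcyclic_sup_edge (hmax.1.1 i').2 hxy.ne hr⟩
      · rw [Function.update_of_ne hne]
        exact hmax.1.1 i'
    · intro i₁ i₂ hne
      have hmemS : ∀ i', s(x, y) ∉ (F i').edgeSet := by
        intro i' hmem
        rw [mem_edgeSet] at hmem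
        exact hnc i' hmem
      have hAE : A.edgeSet = insert s(x, y) (F i).edgeSet := edgeSet_sup_edge _ hxy.ne
      rcases eq_or_ne i₁ i with rfl | h1
      · rw [Function.update_self, Function.update_of_ne hne.symm, hAE, Set.disjoint_left]
        rintro e (rfl | he) hmem
        · exact hmemS _ hmem
        · exact Set.disjoint_left.1 (hmax.1.2 hne) he hmem
      · rw [Function.update_of_ne h1]
        rcases eq_or_ne i₂ i with rfl | h2
        · rw [Function.update_self, hAE, Set.disjoint_right]
          rintro e (rfl | he) hmem
          · exact hmemS _ hmem
          · exact Set.disjoint_left.1 (hmax.1.2 hne) hmem he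
        · rw [Function.update_of_ne h2]
          exact hmax.1.2 hne
  have hwt : wt (Function.update F i A) = wt F + 1 := by
    have := wt_update F i A
    have hAE : A.edgeSet = insert s(x, y) (F i).edgeSet := edgeSet_sup_edge _ hxy.ne
    have hnotmem : s(x, y) ∉ (F i).edgeSet := by
      intro hmem
      rw [mem_edgeSet] at hmem
      exact hnc i hmem
    have hfin : (F i).edgeSet.Finite := Set.toFinite _
    rw [hAE, Set.ncard_insert_of_notMem hnotmem hfin] at this
    omega
  have := hmax.2 _ hgood
  omega


lemma not_badAt (G : SimpleGraph V) (j : ℕ) : ∀ d, ¬ BadAt G j d := by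
  intro d
  induction d using Nat.strong_induction_on with
  | _ d hmin =>
  rintro ⟨F, x₀, y₀, hmax, hxy, hnc, u, w, iS, hchain, hbadR⟩
  cases hchain with
  | zero => exact hbadR (reachable_of_maxGood hmax hxy hnc iS)
  | @succ d' x y iL _ _ hpre hAdj hReach hSep =>
    classical
    -- the bad edge is in forest iL; it is addable to forest iS; swap it.
    have hiLS : iL ≠ iS := by
      rintro rfl
      exact hbadR hAdj.reachable
    have huw_ne : u ≠ w := hAdj.ne
    have hGuw : G.Adj u w := (hmax.1.1 iL).1 hAdj
    have huw_mem : s(u, w) ∈ (F iL).edgeSet := (mem_edgeSet _).2 hAdj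
    have huw_not : ∀ i, i ≠ iL → s(u, w) ∉ (F i).edgeSet := by
      intro i hne hmem
      exact Set.disjoint_left.1 (hmax.1.2 hne) hmem huw_mem
    set DL : SimpleGraph V := (F iL).deleteEdges {s(u, w)} with hDL
    set SUPS : SimpleGraph V := F iS ⊔ fromEdgeSet {s(u, w)} with hSUPS
    set F' : Fin j → SimpleGraph V :=
      Function.update (Function.update F iL DL) iS SUPS with hF'
    have hF'iS : F' iS = SUPS := Function.update_self _ _ _
    have hF'iL : F' iL = DL := by
      rw [hF', Function.update_of_ne hiLS, Function.update_self]
    have hF'other : ∀ i, i ≠ iL → i ≠ iS → F' i = F i := by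
      intro i h1 h2
      rw [hF', Function.update_of_ne h2, Function.update_of_ne h1]
    have hDLle : DL ≤ F iL := deleteEdges_le _
    have hDLE : DL.edgeSet = (F iL).edgeSet \ {s(u, w)} := edgeSet_deleteEdges _
    have hSUPSE : SUPS.edgeSet = insert s(u, w) (F iS).edgeSet :=
      edgeSet_sup_edge _ huw_ne
    -- the new family is good
    have hgood' : Good G F' := by
      constructor
      · intro i
        rcases eq_or_ne i iS with rfl | h2
        · rw [hF'iS]
          exact ⟨sup_le (hmax.1.1 i).1 (single_le hGuw),
            isAcyclic_sup_edge (hmax.1.1 i).2 huw_ne hbadR⟩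
        rcases eq_or_ne i iL with rfl | h1
        · rw [hF'iL]
          exact ⟨hDLle.trans (hmax.1.1 i).1, isAcyclic_anti hDLle (hmax.1.1 i).2⟩
        · rw [hF'other i h1 h2]
          exact hmax.1.1 i
      · intro i₁ i₂ hne
        have key : ∀ (e : Sym2 V) (i : Fin j), e ∈ (F' i).edgeSet →
            (e ∈ (F i).edgeSet ∧ (i = iL → e ≠ s(u, w))) ∨ (i = iS ∧ e = s(u, w)) := by
          intro e i he
          rcases eq_or_ne i iS with rfl | h2
          · rw [hF'iS, hSUPSE] at he
            rcases he with rfl | he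
            · exact Or.inr ⟨rfl, rfl⟩
            · exact Or.inl ⟨he, fun hiL _ => hiLS (hiL ▸ rfl)⟩
          rcases eq_or_ne i iL with rfl | h1
          · rw [hF'iL, hDLE] at he
            exact Or.inl ⟨he.1, fun _ => he.2⟩
          · rw [hF'other i h1 h2] at he
            exact Or.inl ⟨he, fun hiL => absurd hiL h1⟩
        rw [Set.disjoint_left]
        intro e he₁ he₂
        rcases key e i₁ he₁ with ⟨hm1, hx1⟩ | ⟨h1S, h1e⟩
        · rcases key e i₂ he₂ with ⟨hm2, hx2⟩ | ⟨h2S, h2e⟩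
          · exact Set.disjoint_left.1 (hmax.1.2 hne) hm1 hm2
          · subst h2e
            rcases eq_or_ne i₁ iL with rfl | h1
            · exact hx1 rfl rfl
            · exact huw_not i₁ h1 hm1
        · rcases key e i₂ he₂ with ⟨hm2, hx2⟩ | ⟨h2S, h2e⟩
          · subst h1e
            rcases eq_or_ne i₂ iL with rfl | h2
            · exact hx2 rfl rfl
            · exact huw_not i₂ h2 hm2
          · exact hne (h1S.trans h2S.symm)
    -- the new family has the same weight
    have hwt : wt F' = wt F := by
      have h1 : wt (Function.update F iL DL) + (F iL).edgeSet.ncard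
          = wt F + DL.edgeSet.ncard := wt_update F iL DL
      have h2 : wt F' + ((Function.update F iL DL) iS).edgeSet.ncard
          = wt (Function.update F iL DL) + SUPS.edgeSet.ncard :=
        wt_update (Function.update F iL DL) iS SUPS
      rw [Function.update_of_ne hiLS.symm] at h2
      have hd : DL.edgeSet.ncard + 1 = (F iL).edgeSet.ncard := by
        rw [hDLE]
        exact Set.ncard_diff_singleton_add_one huw_mem (Set.toFinite _)
      have hs : SUPS.edgeSet.ncard = (F iS).edgeSet.ncard + 1 := by
        rw [hSUPSE]
        exact Set.ncard_insert_of_notMem (huw_not iS hiLS.symm) (Set.toFinite _)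
      omega
    have hmax' : IsMaxGood G F' :=
      ⟨hgood', fun F'' hg => (hmax.2 F'' hg).trans_eq hwt.symm⟩
    -- the original uncovered edge is still uncovered
    have he₀uw : s(x₀, y₀) ≠ s(u, w) := by
      intro heq
      rw [Sym2.eq_iff] at heq
      rcases heq with ⟨rfl, rfl⟩ | ⟨rfl, rfl⟩
      · exact hnc iL hAdj
      · exact hnc iL hAdj.symm
    have hnc' : ∀ i, ¬ (F' i).Adj x₀ y₀ := by
      intro i hadj'
      have hmem' : s(x₀, y₀) ∈ (F' i).edgeSet := (mem_edgeSet _).2 hadj'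
      rcases eq_or_ne i iS with rfl | h2
      · rw [hF'iS, hSUPSE] at hmem'
        rcases hmem' with heq | hmem'
        · exact he₀uw heq
        · exact hnc _ ((mem_edgeSet _).1 hmem')
      rcases eq_or_ne i iL with rfl | h1
      · rw [hF'iL, hDLE] at hmem'
        exact hnc _ ((mem_edgeSet _).1 hmem'.1)
      · rw [hF'other i h1 h2] at hmem'
        exact hnc _ ((mem_edgeSet _).1 hmem')
    -- transplant chains of length ≤ d' to the new family
    have transplant : ∀ {dd : ℕ} {a b : V}, Chain F x₀ y₀ dd a b → dd ≤ d' →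
        Chain F' x₀ y₀ dd a b := by
      intro dd a b hch
      induction hch with
      | zero => intro _; exact Chain.zero
      | @succ dd₂ a₂ b₂ i c e hpre₂ hadj₂ hreach₂ hsep₂ ih =>
        intro hle
        have hle₂ : dd₂ ≤ d' := by omega
        have ih₂ := ih hle₂
        rcases eq_or_ne i iS with rfl | h2
        · -- the step forest gained the edge u-w
          refine Chain.succ i ih₂ ?_ ?_ ?_
          · rw [hF'iS]
            exact (sup_adj _ _ _ _).2 (Or.inl hadj₂)
          · rw [hF'iS]
            exact hreach₂.mono le_sup_left
          · rw [hF'iS]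
            intro hre
            have hce_ne : s(c, e) ≠ s(u, w) := by
              intro heq
              rw [Sym2.eq_iff] at heq
              rcases heq with ⟨rfl, rfl⟩ | ⟨rfl, rfl⟩
              · exact hbadR hadj₂.reachable
              · exact hbadR hadj₂.symm.reachable
            have hgr : (SUPS.deleteEdges {s(c, e)})
                = ((F i).deleteEdges {s(c, e)}) ⊔ fromEdgeSet {s(u, w)} := by
              ext a' b'
              rw [hSUPS]
              simp only [deleteEdges_adj, sup_adj, fromEdgeSet_adj, Set.mem_singleton_iff]
              constructor
              · rintro ⟨hB | ⟨heq, hne'⟩, hnm⟩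
                · exact Or.inl ⟨hB, hnm⟩
                · exact Or.inr ⟨heq, hne'⟩
              · rintro (⟨hB, hnm⟩ | ⟨heq, hne'⟩)
                · exact ⟨Or.inl hB, hnm⟩
                · refine ⟨Or.inr ⟨heq, hne'⟩, ?_⟩
                  rw [heq]
                  exact fun hh => hce_ne hh.symm
            rw [hgr] at hre
            obtain ⟨p⟩ := hre
            rcases split p hsep₂ with ⟨hr1, hr2⟩ | ⟨hr1, hr2⟩
            · exact hbadR (((hr1.mono (deleteEdges_le _)).symm.trans hreach₂).trans
                (hr2.mono (deleteEdges_le _)).symm)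
            · exact hbadR (((hr2.mono (deleteEdges_le _)).trans hreach₂.symm).trans
                (hr1.mono (deleteEdges_le _)))
        rcases eq_or_ne i iL with rfl | h1
        · -- the step forest lost the edge u-w
          rcases eq_or_ne s(c, e) s(u, w) with heq | hce_ne
          · -- the chain reached the bad edge earlier: contradiction with minimality
            exfalso
            have hch2 : Chain F x₀ y₀ (dd₂ + 1) c e :=
              Chain.succ i hpre₂ hadj₂ hreach₂ hsep₂
            have hnr : ¬ (F iS).Reachable c e := by
              rw [Sym2.eq_iff] at heq
              rcases heq with ⟨rfl, rfl⟩ | ⟨rfl, rfl⟩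
              · exact hbadR
              · exact fun hr => hbadR hr.symm
            exact hmin (dd₂ + 1) (by omega)
              ⟨F, x₀, y₀, hmax, hxy, hnc, c, e, iS, hch2, hnr⟩
          · -- the step survives in the smaller forest
            have hadj' : (F' i).Adj c e := by
              rw [hF'iL, hDL, deleteEdges_adj]
              exact ⟨hadj₂, by simpa using hce_ne⟩
            have hreach' : (F' i).Reachable a₂ b₂ := by
              by_contra hnr
              exact hmin dd₂ (by omega)
                ⟨F', x₀, y₀, hmax', hxy, hnc', a₂, b₂, i, ih₂, hnr⟩
            refine Chain.succ i ih₂ hadj' hreach' ?_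
            intro hre
            apply hsep₂
            refine hre.mono ?_
            intro a' b' hab
            rw [deleteEdges_adj] at hab ⊢
            rw [hF'iL, hDL, deleteEdges_adj] at hab
            exact ⟨hab.1.1, hab.2⟩
        · -- untouched forest
          have hgi : F' i = F i := hF'other i h1 h2
          rw [← hgi] at hadj₂ hreach₂ hsep₂
          exact Chain.succ i ih₂ hadj₂ hreach₂ hsep₂
    -- now the prefix chain with bad forest iL gives a shorter bad situation
    have hchain' : Chain F' x₀ y₀ d' x y := transplant hpre (le_refl d')
    have hbad' : ¬ (F' iL).Reachable x y := by
      rw [hF'iL, hDL]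
      exact hSep
    exact hmin d' (by omega) ⟨F', x₀, y₀, hmax', hxy, hnc', x, y, iL, hchain', hbad'⟩

end Families


/-- The counting lemma: edges inside any vertex set `U` are at most `j * (|U| - 1)`,
written additively. -/
lemma star_count [Fintype V] {G : SimpleGraph V} {j m : ℕ}
    {S : Fin m → SimpleGraph V} {c : Fin m → V}
    (hS2 : ∀ i, ∀ e ∈ (S i).edgeSet, c i ∈ e)
    (hS3 : ∀ e ∈ G.edgeSet, ∃ i, e ∈ (S i).edgeSet)
    (hj : ∀ v, Nat.card {i // v ∈ (S i).support} ≤ j)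
    {U : Set V} (hUne : U.Nonempty) :
    {e | e ∈ G.edgeSet ∧ ∀ v ∈ e, v ∈ U}.ncard + j ≤ j * U.ncard := by
  classical
  set EUs : Set (Sym2 V) := {e | e ∈ G.edgeSet ∧ ∀ v ∈ e, v ∈ U} with hEUs
  have hEUf : EUs.Finite := Set.toFinite _
  have hUf : U.Finite := Set.toFinite _
  set EF : Finset (Sym2 V) := hEUf.toFinset with hEF
  set UF : Finset V := hUf.toFinset with hUF
  have hmemEF : ∀ e, e ∈ EF ↔ (e ∈ G.edgeSet ∧ ∀ v ∈ e, v ∈ U) := by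
    intro e
    rw [hEF, Set.Finite.mem_toFinset]
    exact Iff.rfl
  have hmemUF : ∀ v, v ∈ UF ↔ v ∈ U := fun v => Set.Finite.mem_toFinset _
  rw [Set.ncard_eq_toFinset_card _ hEUf, Set.ncard_eq_toFinset_card _ hUf]
  show EF.card + j ≤ j * UF.card
  have hn1 : 1 ≤ UF.card := by
    rw [Finset.one_le_card]
    exact ⟨hUne.choose, (hmemUF _).2 hUne.choose_spec⟩
  rcases Finset.eq_empty_or_nonempty EF with hEFe | hEFne
  · rw [hEFe]
    simpa using Nat.le_mul_of_pos_right j (by omega)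
  obtain ⟨e₁, he₁⟩ := hEFne
  obtain ⟨i₀, _⟩ := hS3 e₁ ((hmemEF e₁).1 he₁).1
  set σ : Sym2 V → Fin m := fun e =>
    if h : ∃ i, e ∈ (S i).edgeSet then h.choose else i₀ with hσdef
  have hσ : ∀ e ∈ EF, e ∈ (S (σ e)).edgeSet := by
    intro e he
    have h : ∃ i, e ∈ (S i).edgeSet := hS3 e ((hmemEF e).1 he).1
    rw [hσdef]
    simp only [dif_pos h]
    exact h.choose_spec
  set T : Finset (Fin m) := EF.image σ with hT
  set A : Fin m → Finset (Sym2 V) := fun i => EF.filter (fun e => σ e = i) with hA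
  have hfib : EF.card = ∑ i ∈ T, (A i).card :=
    Finset.card_eq_sum_card_fiberwise fun e he => Finset.mem_image_of_mem σ he
  set g : Fin m → Sym2 V → V := fun i e => if h : c i ∈ e then Sym2.Mem.other h else c i
    with hg
  have hkey : ∀ i, ∀ e ∈ A i, e ∈ (S i).edgeSet ∧ c i ∈ e ∧ s(c i, g i e) = e := by
    intro i e he
    rw [hA, Finset.mem_filter] at he
    have hmem : e ∈ (S i).edgeSet := he.2 ▸ hσ e he.1
    have hci : c i ∈ e := hS2 i e hmem
    refine ⟨hmem, hci, ?_⟩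
    rw [hg]
    simp only [dif_pos hci]
    exact Sym2.other_spec hci
  have hAmemEF : ∀ i, A i ⊆ EF := fun i => Finset.filter_subset _ _
  set Vi : Fin m → Finset V := fun i => insert (c i) ((A i).image (g i)) with hVi
  have hgne : ∀ i, ∀ e ∈ A i, g i e ≠ c i := by
    intro i e he hgc
    obtain ⟨hmem, _, hspec⟩ := hkey i e he
    apply (S i).not_isDiag_of_mem_edgeSet hmem
    rw [← hspec, hgc]
    exact Sym2.mk_isDiag_iff.2 rfl
  have hginj : ∀ i, Set.InjOn (g i) (A i) := by
    intro i e₂ he₂ e₃ he₃ heq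
    have h2 := (hkey i e₂ he₂).2.2
    have h3 := (hkey i e₃ he₃).2.2
    rw [← h2, ← h3, heq]
  have hVicard : ∀ i, (Vi i).card = (A i).card + 1 := by
    intro i
    rw [hVi]
    rw [Finset.card_insert_of_notMem]
    · rw [Finset.card_image_of_injOn (hginj i)]
    · intro hmem
      obtain ⟨e, he, hge⟩ := Finset.mem_image.1 hmem
      exact hgne i e he hge
  have hViU : ∀ i ∈ T, Vi i ⊆ UF := by
    intro i hiT v hv
    obtain ⟨e₂, he₂⟩ : (A i).Nonempty := by
      rw [hT] at hiT
      obtain ⟨e₂, he₂, hσe⟩ := Finset.mem_image.1 hiT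
      exact ⟨e₂, Finset.mem_filter.2 ⟨he₂, hσe⟩⟩
    rw [hVi, Finset.mem_insert] at hv
    rcases hv with rfl | hv
    · obtain ⟨-, hci, -⟩ := hkey i e₂ he₂
      exact (hmemUF _).2 (((hmemEF e₂).1 (hAmemEF i he₂)).2 _ hci)
    · obtain ⟨e₃, he₃, rfl⟩ := Finset.mem_image.1 hv
      obtain ⟨-, hci, hspec⟩ := hkey i e₃ he₃
      refine (hmemUF _).2 (((hmemEF e₃).1 (hAmemEF i he₃)).2 _ ?_)
      have hmm : g i e₃ ∈ s(c i, g i e₃) := Sym2.mem_mk_right _ _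
      rwa [hspec] at hmm
  have hVisupp : ∀ i ∈ T, ∀ v ∈ Vi i, v ∈ (S i).support := by
    intro i hiT v hv
    rw [hVi, Finset.mem_insert] at hv
    rcases hv with rfl | hv
    · obtain ⟨e₂, he₂⟩ : (A i).Nonempty := by
        rw [hT] at hiT
        obtain ⟨e₂, he₂, hσe⟩ := Finset.mem_image.1 hiT
        exact ⟨e₂, Finset.mem_filter.2 ⟨he₂, hσe⟩⟩
      obtain ⟨hmem, hci, hspec⟩ := hkey i e₂ he₂
      rw [mem_support]
      refine ⟨g i e₂, ?_⟩
      rw [← mem_edgeSet, hspec]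
      exact hmem
    · obtain ⟨e₃, he₃, rfl⟩ := Finset.mem_image.1 hv
      obtain ⟨hmem, hci, hspec⟩ := hkey i e₃ he₃
      rw [mem_support]
      refine ⟨c i, ?_⟩
      rw [← mem_edgeSet, Sym2.eq_swap, hspec]
      exact hmem
  -- double counting
  have hdouble : ∑ i ∈ T, (Vi i).card ≤ j * UF.card := by
    have h1 : ∀ i ∈ T, (Vi i).card = (UF.filter (fun v => v ∈ Vi i)).card := by
      intro i hiT
      rw [Finset.filter_mem_eq_inter, Finset.inter_eq_right.2 (hViU i hiT)]
    calc ∑ i ∈ T, (Vi i).card = ∑ i ∈ T, ∑ v ∈ UF, (if v ∈ Vi i then 1 else 0) := by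
          apply Finset.sum_congr rfl
          intro i hiT
          rw [h1 i hiT, Finset.card_filter]
      _ = ∑ v ∈ UF, ∑ i ∈ T, (if v ∈ Vi i then 1 else 0) := Finset.sum_comm
      _ ≤ ∑ _v ∈ UF, j := by
          apply Finset.sum_le_sum
          intro v _
          rw [← Finset.card_filter]
          have hsub : T.filter (fun i => v ∈ Vi i) ⊆
              Finset.univ.filter (fun i => v ∈ (S i).support) := by
            intro i hi
            rw [Finset.mem_filter] at hi
            exact Finset.mem_filter.2 ⟨Finset.mem_univ _, hVisupp i hi.1 v hi.2⟩
          calc (T.filter (fun i => v ∈ Vi i)).card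
              ≤ (Finset.univ.filter (fun i => v ∈ (S i).support)).card :=
                Finset.card_le_card hsub
            _ = Nat.card {i // v ∈ (S i).support} := by
                rw [Nat.card_eq_fintype_card, Fintype.card_subtype]
            _ ≤ j := hj v
      _ = j * UF.card := by rw [Finset.sum_const, smul_eq_mul, mul_comm]
  have hsum : EF.card + T.card = ∑ i ∈ T, (Vi i).card := by
    rw [hfib]
    have : ∑ i ∈ T, (Vi i).card = ∑ i ∈ T, ((A i).card + 1) :=
      Finset.sum_congr rfl fun i _ => hVicard i
    rw [this, Finset.sum_add_distrib]
    simp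
  rcases le_or_gt j T.card with hjT | hjT
  · omega
  · -- few stars: each fiber has at most |U| - 1 edges
    have hperV : ∀ i ∈ T, (Vi i).card ≤ UF.card :=
      fun i hiT => Finset.card_le_card (hViU i hiT)
    have h2 : ∑ i ∈ T, (Vi i).card ≤ T.card * UF.card := by
      calc ∑ i ∈ T, (Vi i).card ≤ T.card • UF.card :=
            Finset.sum_le_card_nsmul _ _ _ hperV
        _ = T.card * UF.card := by rw [smul_eq_mul]
    have h3 : (j - T.card) ≤ (j - T.card) * UF.card :=
      Nat.le_mul_of_pos_right _ (by omega)
    have h4 : T.card * UF.card + (j - T.card) * UF.card = j * UF.card := by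
      rw [← Nat.add_mul]
      congr 1
      omega
    omega


lemma reachable_of_walk_edges {H K : SimpleGraph V} :
    ∀ {a b : V} (p : H.Walk a b), (∀ x y, s(x, y) ∈ p.edges → K.Reachable x y) →
      K.Reachable a b := by
  intro a b p
  induction p with
  | nil => exact fun _ => Reachable.refl _
  | @cons a c b ha p ih =>
    intro h
    exact (h a c (by simp)).trans (ih fun x y hxy => h x y (by simp [hxy]))

/-- The main lemma: a star cover with every vertex in at most `j` stars yields a cover
by `j` forests. -/
lemma exists_forest_cover [Fintype V] (G : SimpleGraph V) {j m : ℕ}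
    (S : Fin m → SimpleGraph V) (c : Fin m → V)
    (hS1 : ∀ i, S i ≤ G) (hS2 : ∀ i, ∀ e ∈ (S i).edgeSet, c i ∈ e)
    (hS3 : ∀ e ∈ G.edgeSet, ∃ i, e ∈ (S i).edgeSet)
    (hj : ∀ v, Nat.card {i // v ∈ (S i).support} ≤ j) :
    ∃ F : Fin j → SimpleGraph V, (∀ i, F i ≤ G ∧ (F i).IsAcyclic) ∧
      ∀ e ∈ G.edgeSet, ∃ i, e ∈ (F i).edgeSet := by
  classical
  obtain ⟨F, hmax⟩ := exists_maxGood G j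
  refine ⟨F, hmax.1.1, ?_⟩
  by_contra hcov
  push_neg at hcov
  obtain ⟨e₀, he₀G, he₀n⟩ := hcov
  revert he₀G he₀n
  induction e₀ using Sym2.ind with | _ x₀ y₀ =>
  intro he₀G he₀n
  have hxy : G.Adj x₀ y₀ := (mem_edgeSet _).1 he₀G
  have hnc : ∀ i, ¬ (F i).Adj x₀ y₀ := fun i ha => he₀n i ((mem_edgeSet _).2 ha)
  have hFle : ∀ i, F i ≤ G := fun i => (hmax.1.1 i).1
  have hREACH : ∀ {d : ℕ} {u w : V}, Chain F x₀ y₀ d u w → ∀ i, (F i).Reachable u w := by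
    intro d u w hch i
    by_contra hr
    exact not_badAt G j d ⟨F, x₀, y₀, hmax, hxy, hnc, u, w, i, hch, hr⟩
  set Γ : SimpleGraph V :=
    { Adj := fun a b => (∃ d, Chain F x₀ y₀ d a b) ∨ (∃ d, Chain F x₀ y₀ d b a)
      symm := ⟨fun a b h => h.symm⟩
      loopless := ⟨fun a h => by
        rcases h with ⟨d, hc⟩ | ⟨d, hc⟩ <;> exact (Chain.gadj hxy hFle hc).ne rfl⟩ } with hΓ
  set U : Set V := {z | Γ.Reachable x₀ z} with hU
  have hx₀U : x₀ ∈ U := Reachable.refl _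
  have hΓxy : Γ.Adj x₀ y₀ := Or.inl ⟨0, Chain.zero⟩
  have hy₀U : y₀ ∈ U := hΓxy.reachable
  have hUclosed : ∀ a b, Γ.Adj a b → a ∈ U → b ∈ U := by
    intro a b hab ha
    exact Reachable.trans ha hab.reachable
  set K : Fin j → SimpleGraph V := fun i =>
    { Adj := fun a b => (F i).Adj a b ∧ a ∈ U ∧ b ∈ U
      symm := ⟨fun a b h => ⟨h.1.symm, h.2.2, h.2.1⟩⟩
      loopless := ⟨fun a h => (F i).loopless.irrefl a h.1⟩ } with hK
  have hKle : ∀ i, K i ≤ F i := fun i a b h => h.1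
  have hΓadjK : ∀ (i : Fin j) (a b : V), Γ.Adj a b → a ∈ U → b ∈ U →
      (K i).Reachable a b := by
    intro i
    suffices h : ∀ a b : V, (∃ d, Chain F x₀ y₀ d a b) → a ∈ U → b ∈ U →
        (K i).Reachable a b by
      intro a b hab haU hbU
      rcases hab with h1 | h1
      · exact h a b h1 haU hbU
      · exact (h b a h1 hbU haU).symm
    rintro a b ⟨d, hch⟩ haU hbU
    obtain ⟨p0⟩ := hREACH hch i
    have hedges : ∀ x y, s(x, y) ∈ (p0.toPath : (F i).Walk a b).edges → Γ.Adj x y := by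
      intro x y hxyp
      have hadjxy : (F i).Adj x y := (p0.toPath : (F i).Walk a b).adj_of_mem_edges hxyp
      have hsep := sep_of_mem_path_edges (hmax.1.1 i).2 p0.toPath.2 hxyp
      exact Or.inl ⟨d + 1, Chain.succ i hch hadjxy (hREACH hch i) hsep⟩
    have hlift : ∀ {a' b' : V} (q : (F i).Walk a' b'),
        (∀ x y, s(x, y) ∈ q.edges → Γ.Adj x y) → a' ∈ U → (K i).Reachable a' b' := by
      intro a' b' q
      induction q with
      | nil => intro _ _; exact Reachable.refl _
      | @cons a₁ c₁ b₁ ha₁ q₁ ih =>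
        intro hed haU₁
        have hΓ1 : Γ.Adj a₁ c₁ := hed a₁ c₁ (by simp)
        have hcU : c₁ ∈ U := hUclosed _ _ hΓ1 haU₁
        have hKadj : (K i).Adj a₁ c₁ := ⟨ha₁, haU₁, hcU⟩
        exact hKadj.reachable.trans (ih (fun x y h => hed x y (by simp [h])) hcU)
    exact hlift (p0.toPath : (F i).Walk a b) hedges haU
  have hconnKU : ∀ (i : Fin j), ∀ z ∈ U, (K i).Reachable x₀ z := by
    intro i z hz
    obtain ⟨pw⟩ := hz
    have : ∀ {a z' : V} (q : Γ.Walk a z'), a ∈ U → (K i).Reachable a z' := by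
      intro a z' q
      induction q with
      | nil => intro _; exact Reachable.refl _
      | @cons a₁ c₁ b₁ ha₁ q₁ ih =>
        intro haU₁
        have hcU : c₁ ∈ U := hUclosed _ _ ha₁ haU₁
        exact (hΓadjK i a₁ c₁ ha₁ haU₁ hcU).trans (ih hcU)
    exact this pw hx₀U
  -- each K i is a spanning tree of U
  have htrees : ∀ i : Fin j, (K i).edgeSet.ncard + 1 = U.ncard := by
    intro i
    apply tree_count (isAcyclic_anti (hKle i) (hmax.1.1 i).2) ⟨x₀, hx₀U⟩
    · intro a b hab
      exact ⟨hab.2.1, hab.2.2⟩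
    · intro a ha b hb
      exact ((hconnKU i a ha).symm).trans (hconnKU i b hb)
  -- counting
  have hstar := star_count hS2 hS3 hj (U := U) ⟨x₀, hx₀U⟩
  set EUs : Set (Sym2 V) := {e | e ∈ G.edgeSet ∧ ∀ v ∈ e, v ∈ U} with hEUs
  have hEUf : EUs.Finite := Set.toFinite _
  set EF : Finset (Sym2 V) := hEUf.toFinset with hEF
  have hEFcard : EF.card = EUs.ncard := (Set.ncard_eq_toFinset_card _ hEUf).symm
  set Ti : Fin j → Finset (Sym2 V) := fun i => (Set.toFinite (K i).edgeSet).toFinset with hTi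
  have hTicard : ∀ i, (Ti i).card = (K i).edgeSet.ncard :=
    fun i => (Set.ncard_eq_toFinset_card _ _).symm
  have hTisub : ∀ i, Ti i ⊆ EF := by
    intro i e he
    rw [hTi, Set.Finite.mem_toFinset] at he
    rw [hEF, Set.Finite.mem_toFinset]
    revert he
    induction e using Sym2.ind with | _ a b =>
    intro he
    rw [mem_edgeSet] at he
    constructor
    · exact (mem_edgeSet _).2 (hFle i (hKle i he))
    · intro v hv
      rw [Sym2.mem_iff] at hv
      rcases hv with rfl | rfl
      · exact he.2.1
      · exact he.2.2
  have hTidisj : ∀ i i' : Fin j, i ≠ i' → Disjoint (Ti i) (Ti i') := by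
    intro i i' hne
    rw [Finset.disjoint_left]
    intro e he he'
    rw [hTi, Set.Finite.mem_toFinset] at he he'
    have h1 : e ∈ (F i).edgeSet := by
      revert he
      induction e using Sym2.ind with | _ a b =>
      intro he
      exact (mem_edgeSet _).2 (hKle i ((mem_edgeSet _).1 he))
    have h2 : e ∈ (F i').edgeSet := by
      revert he'
      induction e using Sym2.ind with | _ a b =>
      intro he'
      exact (mem_edgeSet _).2 (hKle i' ((mem_edgeSet _).1 he'))
    exact Set.disjoint_left.1 (hmax.1.2 hne) h1 h2
  have he₀EF : s(x₀, y₀) ∈ EF := by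
    rw [hEF, Set.Finite.mem_toFinset]
    refine ⟨he₀G, ?_⟩
    intro v hv
    rw [Sym2.mem_iff] at hv
    rcases hv with rfl | rfl
    · exact hx₀U
    · exact hy₀U
  have he₀Ti : ∀ i, s(x₀, y₀) ∉ Ti i := by
    intro i hmem
    rw [hTi, Set.Finite.mem_toFinset] at hmem
    exact hnc i (hKle i ((mem_edgeSet _).1 hmem))
  have hsubset : insert s(x₀, y₀) (Finset.univ.biUnion Ti) ⊆ EF := by
    intro e he
    rw [Finset.mem_insert] at he
    rcases he with rfl | he
    · exact he₀EF
    · obtain ⟨i, _, hei⟩ := Finset.mem_biUnion.1 he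
      exact hTisub i hei
  have hcard1 : (Finset.univ.biUnion Ti).card = ∑ i, (Ti i).card :=
    Finset.card_biUnion fun i _ i' _ hne => hTidisj i i' hne
  have hlow : (∑ i, (Ti i).card) + 1 ≤ EF.card := by
    have h1 : (insert s(x₀, y₀) (Finset.univ.biUnion Ti)).card
        = (Finset.univ.biUnion Ti).card + 1 := by
      rw [Finset.card_insert_of_notMem]
      intro hmem
      obtain ⟨i, _, hei⟩ := Finset.mem_biUnion.1 hmem
      exact he₀Ti i hei
    calc (∑ i, (Ti i).card) + 1 = (insert s(x₀, y₀) (Finset.univ.biUnion Ti)).card := by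
          rw [h1, hcard1]
      _ ≤ EF.card := Finset.card_le_card hsubset
  set n : ℕ := U.ncard with hn
  have hn1 : 1 ≤ n := (Set.ncard_pos (Set.toFinite _)).2 ⟨x₀, hx₀U⟩
  have hsumT : ∑ i, (Ti i).card = j * (n - 1) := by
    have : ∀ i : Fin j, (Ti i).card = n - 1 := by
      intro i
      have := htrees i
      rw [← hTicard i] at this
      omega
    rw [Finset.sum_congr rfl fun i _ => this i]
    rw [Finset.sum_const, Finset.card_univ, Fintype.card_fin, smul_eq_mul]
  have hjn : j * n = j * (n - 1) + j := by
    conv_lhs => rw [show n = (n - 1) + 1 by omega]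
    rw [Nat.mul_add, mul_one]
  rw [← hEFcard] at hstar
  omega

end StarArbAux


/-- The arboricity of `G`: the minimum number of forests needed to cover the edges
of `G`. -/
noncomputable def arboricity {V : Type*} (G : SimpleGraph V) : ℕ :=
  sInf {k | ∃ F : Fin k → SimpleGraph V,
    (∀ i, F i ≤ G ∧ (F i).IsAcyclic) ∧
    ∀ e ∈ G.edgeSet, ∃ i, e ∈ (F i).edgeSet}

/-- For every graph `G`, the arboricity of `G` is at most the local star
arboricity of `G`. -/
theorem arboricity_le_localStarArboricity {V : Type*} [Fintype V]
    (G : SimpleGraph V) : arboricity G ≤ localStarArboricity G := by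
  classical
  -- the defining set of the local star arboricity is nonempty
  have hBne : {j | ∃ (m : ℕ) (S : Fin m → SimpleGraph V) (c : Fin m → V),
      IsStarCover G S c ∧ ∀ v, Nat.card {i // v ∈ (S i).support} ≤ j}.Nonempty := by
    have hφdef : ∀ i : Fin G.edgeFinset.card,
        (G.edgeFinset.equivFin.symm i : Sym2 V) ∈ G.edgeSet := by
      intro i
      have := (G.edgeFinset.equivFin.symm i).2
      rwa [SimpleGraph.mem_edgeFinset] at this
    refine ⟨G.edgeFinset.card, G.edgeFinset.card,
      fun i => SimpleGraph.fromEdgeSet {(G.edgeFinset.equivFin.symm i : Sym2 V)},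
      fun i => (Quot.out (G.edgeFinset.equivFin.symm i : Sym2 V)).1, ⟨?_, ?_, ?_⟩, ?_⟩
    · intro i a b hab
      rw [SimpleGraph.fromEdgeSet_adj, Set.mem_singleton_iff] at hab
      have hmem := hφdef i
      rw [← hab.1] at hmem
      exact (SimpleGraph.mem_edgeSet _).1 hmem
    · intro i e he
      rw [SimpleGraph.edgeSet_fromEdgeSet, Set.mem_diff, Set.mem_singleton_iff] at he
      rw [he.1]
      exact Sym2.out_fst_mem _
    · intro e he
      refine ⟨G.edgeFinset.equivFin ⟨e, SimpleGraph.mem_edgeFinset.2 he⟩, ?_⟩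
      rw [SimpleGraph.edgeSet_fromEdgeSet, Set.mem_diff, Set.mem_singleton_iff]
      constructor
      · simp only [Equiv.symm_apply_apply]
      · exact G.not_isDiag_of_mem_edgeSet he
    · intro v
      rw [Nat.card_eq_fintype_card]
      calc Fintype.card {i // v ∈
            (SimpleGraph.fromEdgeSet {(G.edgeFinset.equivFin.symm i : Sym2 V)}).support}
          ≤ Fintype.card (Fin G.edgeFinset.card) := Fintype.card_subtype_le _
        _ = G.edgeFinset.card := Fintype.card_fin _
  have hmem := Nat.sInf_mem hBne
  obtain ⟨m, S, c, hcov, hj⟩ := hmem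
  obtain ⟨F, hF, hcover⟩ :=
    StarArbAux.exists_forest_cover G S c hcov.1 hcov.2.1 hcov.2.2 hj
  exact Nat.sInf_le ⟨F, hF, hcover⟩
end

section
/- For every graph G, the local star arboricity of G is at most the degeneracy of G plus 1. -/
/-- An acyclic orientation: an orientation of `G` whose associated directed graph has no
directed cycle. -/
def IsAcyclicOrientation {V : Type*} (G : SimpleGraph V) (o : Sym2 V → V) : Prop :=
  IsOrientation G o ∧
  ∀ v : V, ¬ Relation.TransGen (fun a b => G.Adj a b ∧ o s(a, b) = b) v v

/-- The degeneracy of `G`: the minimum over acyclic orientations of `G` of the maximum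
out-degree. -/
noncomputable def degeneracy {V : Type*} (G : SimpleGraph V) : ℕ :=
  sInf {k | ∃ o : Sym2 V → V, IsAcyclicOrientation G o ∧ ∀ v, outDeg G o v ≤ k}


noncomputable def defaultOrient (V : Type*) [Fintype V] : Sym2 V → V :=
  Sym2.lift ⟨fun a b => if Fintype.equivFin V a ≤ Fintype.equivFin V b then b else a, by
    intro a b
    dsimp only
    split_ifs with h1 h2 h2
    · exact ((Fintype.equivFin V).injective (le_antisymm h1 h2)).symm
    · rfl
    · rfl
    · exact absurd (le_of_not_ge h1) h2⟩


/-- For every graph `G`, the local star arboricity of `G` is at most the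
degeneracy of `G` plus 1. -/
theorem localStarArboricity_le_degeneracy_succ {V : Type*} [Fintype V]
    (G : SimpleGraph V) : localStarArboricity G ≤ degeneracy G + 1 := by
  classical
  have hfin : Finite (Sym2 V) := by
    refine Finite.of_surjective (fun p : V × V => s(p.1, p.2)) ?_
    intro e
    induction e using Sym2.inductionOn with
    | hf a b => exact ⟨(a, b), rfl⟩
  have hne : {k | ∃ o : Sym2 V → V, IsAcyclicOrientation G o ∧ ∀ v, outDeg G o v ≤ k}.Nonempty := by
    refine ⟨Nat.card (Sym2 V), defaultOrient V, ⟨?_, ?_⟩, ?_⟩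
    · intro e he
      induction e using Sym2.inductionOn with
      | hf a b =>
        simp only [defaultOrient, Sym2.lift_mk]
        split_ifs <;> simp
    · intro v hv
      have key : ∀ a b : V, (G.Adj a b ∧ defaultOrient V s(a, b) = b) →
          Fintype.equivFin V a < Fintype.equivFin V b := by
        rintro a b ⟨hab, hob⟩
        simp only [defaultOrient, Sym2.lift_mk] at hob
        split_ifs at hob with h
        · exact lt_of_le_of_ne h (fun he => hab.ne ((Fintype.equivFin V).injective he))
        · exact absurd hob hab.ne
      have mono : ∀ {a b : V},
          Relation.TransGen (fun a b => G.Adj a b ∧ defaultOrient V s(a, b) = b) a b →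
          Fintype.equivFin V a < Fintype.equivFin V b := by
        intro a b h
        induction h with
        | single h => exact key _ _ h
        | tail _ h ih => exact ih.trans (key _ _ h)
      exact lt_irrefl _ (mono hv)
    · intro v
      exact Nat.card_le_card_of_injective _ Subtype.val_injective
  obtain ⟨o, ⟨ho, -⟩, hb⟩ :
      ∃ o : Sym2 V → V, IsAcyclicOrientation G o ∧ ∀ v, outDeg G o v ≤ degeneracy G :=
    Nat.sInf_mem hne
  apply Nat.sInf_le
  set eqv := Fintype.equivFin V with heqv
  set S : Fin (Fintype.card V) → SimpleGraph V := fun i =>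
    { Adj := fun a b => G.Adj a b ∧ o s(a, b) = eqv.symm i
      symm := by
        constructor
        rintro a b ⟨h1, h2⟩
        exact ⟨h1.symm, by rwa [Sym2.eq_swap]⟩
      loopless := ⟨fun a h => G.loopless.1 a h.1⟩ } with hS
  refine ⟨Fintype.card V, S, fun i => eqv.symm i, ⟨?_, ?_, ?_⟩, ?_⟩
  · intro i a b hab
    exact hab.1
  · intro i e he
    induction e using Sym2.inductionOn with
    | hf a b =>
      have h : (S i).Adj a b := he
      show eqv.symm i ∈ s(a, b)
      rw [← h.2]
      exact ho _ ((SimpleGraph.mem_edgeSet G).mpr h.1)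
  · intro e he
    refine ⟨eqv (o e), ?_⟩
    induction e using Sym2.inductionOn with
    | hf a b =>
      show (S (eqv (o s(a, b)))).Adj a b
      exact ⟨he, (eqv.symm_apply_apply _).symm⟩
  · intro v
    let wit : {i // v ∈ (S i).support} → V := fun p => ((S p.1).mem_support.mp p.2).choose
    have hw : ∀ p : {i // v ∈ (S i).support}, (S p.1).Adj v (wit p) :=
      fun p => ((S p.1).mem_support.mp p.2).choose_spec
    let F : {i // v ∈ (S i).support} → Option {e : Sym2 V // e ∈ G.edgeSet ∧ v ∈ e ∧ o e ≠ v} :=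
      fun p =>
        if h : o s(v, wit p) = v then none
        else some ⟨s(v, wit p), (SimpleGraph.mem_edgeSet G).mpr (hw p).1, Sym2.mem_mk_left _ _, h⟩
    have hFinj : Function.Injective F := by
      intro p q hpq
      have hp : o s(v, wit p) = eqv.symm p.1 := (hw p).2
      have hq : o s(v, wit q) = eqv.symm q.1 := (hw q).2
      have key : o s(v, wit p) = o s(v, wit q) := by
        by_cases h1 : o s(v, wit p) = v <;> by_cases h2 : o s(v, wit q) = v
        · rw [h1, h2]
        · exfalso
          simp only [F, dif_pos h1, dif_neg h2] at hpq
          exact Option.noConfusion rfl (heq_of_eq hpq)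
        · exfalso
          simp only [F, dif_neg h1, dif_pos h2] at hpq
          exact Option.noConfusion rfl (heq_of_eq hpq)
        · simp only [F, dif_neg h1, dif_neg h2, Option.some.injEq, Subtype.mk.injEq] at hpq
          rw [hpq]
      exact Subtype.ext (eqv.symm.injective (by rw [← hp, ← hq, key]))
    calc Nat.card {i // v ∈ (S i).support}
        ≤ Nat.card (Option {e : Sym2 V // e ∈ G.edgeSet ∧ v ∈ e ∧ o e ≠ v}) :=
          Nat.card_le_card_of_injective F hFinj
      _ = outDeg G o v + 1 := by
          haveI : Fintype {e : Sym2 V // e ∈ G.edgeSet ∧ v ∈ e ∧ o e ≠ v} := Fintype.ofFinite _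
          rw [outDeg, Nat.card_eq_fintype_card, Nat.card_eq_fintype_card, Fintype.card_option]
      _ ≤ degeneracy G + 1 := Nat.add_le_add_right (hb v) 1
end

section
/- For every graph G, the simple tree-width of G satisfies tw(G) ≤ stw(G) ≤ tw(G) + 1, where tw(G) denotes tree-width. -/
/-- The earlier neighbors of vertex `i` in a graph on `Fin n`, with respect to the
natural construction order. -/
def earlierNbrs {n : ℕ} (H : SimpleGraph (Fin n)) (i : Fin n) : Set (Fin n) :=
  {j | H.Adj i j ∧ j < i}

/-- `H` is a `k`-tree whose construction sequence is the natural order on `Fin n`: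
the first `k+1` vertices form a clique, and every later vertex is stacked onto a
`k`-clique of earlier vertices (its earlier neighborhood is a `k`-clique). -/
def IsKTreeOrder {n : ℕ} (k : ℕ) (H : SimpleGraph (Fin n)) : Prop :=
  k + 1 ≤ n ∧
  (∀ i j : Fin n, i.val < k + 1 → j.val < k + 1 → i ≠ j → H.Adj i j) ∧
  (∀ i : Fin n, k + 1 ≤ i.val →
    (earlierNbrs H i).ncard = k ∧ (earlierNbrs H i).Pairwise H.Adj)

/-- A simple `k`-tree: a `k`-tree in which no two vertices are stacked onto the same
`k`-clique. -/
def IsSimpleKTreeOrder {n : ℕ} (k : ℕ) (H : SimpleGraph (Fin n)) : Prop :=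
  IsKTreeOrder k H ∧
  ∀ i i' : Fin n, k + 1 ≤ i.val → k + 1 ≤ i'.val → i ≠ i' →
    earlierNbrs H i ≠ earlierNbrs H i'

/-- The tree-width of `G`: the minimum `k` such that `G` is a subgraph of a `k`-tree. -/
noncomputable def treeWidth {V : Type*} (G : SimpleGraph V) : ℕ :=
  sInf {k | ∃ (n : ℕ) (H : SimpleGraph (Fin n)) (f : V → Fin n),
    IsKTreeOrder k H ∧ Function.Injective f ∧ ∀ u v, G.Adj u v → H.Adj (f u) (f v)}

/-- The simple tree-width of `G`: the minimum `k` such that `G` is a subgraph of a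
simple `k`-tree. -/
noncomputable def simpleTreeWidth {V : Type*} (G : SimpleGraph V) : ℕ :=
  sInf {k | ∃ (n : ℕ) (H : SimpleGraph (Fin n)) (f : V → Fin n),
    IsSimpleKTreeOrder k H ∧ Function.Injective f ∧ ∀ u v, G.Adj u v → H.Adj (f u) (f v)}

namespace STW

variable {n : ℕ}

/-- earlier `H`-neighbors of `i`, as a set of naturals. -/
def CN (H : SimpleGraph (Fin n)) (i : ℕ) : Set ℕ :=
  {j | ∃ (hi : i < n) (hj : j < n), H.Adj ⟨i, hi⟩ ⟨j, hj⟩ ∧ j < i}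

lemma CN_lt {H : SimpleGraph (Fin n)} {i j : ℕ} (h : j ∈ CN H i) : j < i := by
  obtain ⟨_, _, _, h⟩ := h; exact h

lemma mem_CN {H : SimpleGraph (Fin n)} {i : Fin n} {j : ℕ} :
    j ∈ CN H i.val ↔ ∃ hj : j < n, (⟨j, hj⟩ : Fin n) ∈ earlierNbrs H i := by
  constructor
  · rintro ⟨hi', hj, hadj, hlt⟩
    exact ⟨hj, hadj, by simpa [Fin.lt_def] using hlt⟩
  · rintro ⟨hj, hadj, hlt⟩
    exact ⟨i.isLt, hj, hadj, by simpa [Fin.lt_def] using hlt⟩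

/-- candidate new neighbors of `i`, relative to a partial earlier-neighbor
assignment `rec`. -/
def candR (H : SimpleGraph (Fin n)) (rec : ℕ → Set ℕ) (i : ℕ) : Set ℕ :=
  {v | v < i ∧ v ∉ CN H i ∧ ∀ u ∈ CN H i,
    (u < v → u ∈ rec v) ∧ (v < u → v ∈ rec u)}

lemma candR_congr (H : SimpleGraph (Fin n)) {rec rec' : ℕ → Set ℕ} (i : ℕ)
    (h : ∀ j < i, rec j = rec' j) : candR H rec i = candR H rec' i := by
  ext v
  constructor
  · rintro ⟨h1, h2, h3⟩
    refine ⟨h1, h2, fun u hu => ?_⟩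
    rw [← h v h1, ← h u (CN_lt hu)]
    exact h3 u hu
  · rintro ⟨h1, h2, h3⟩
    refine ⟨h1, h2, fun u hu => ?_⟩
    rw [h v h1, h u (CN_lt hu)]
    exact h3 u hu

noncomputable def stepF (H : SimpleGraph (Fin n)) (k : ℕ) (rec : ℕ → Set ℕ) (i : ℕ) :
    Set ℕ :=
  if i < k + 2 then {j | j < i} else CN H i ∪ {sSup (candR H rec i)}

lemma stepF_congr (H : SimpleGraph (Fin n)) (k : ℕ) {rec rec' : ℕ → Set ℕ} (i : ℕ)
    (h : ∀ j < i, rec j = rec' j) : stepF H k rec i = stepF H k rec' i := by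
  unfold stepF
  split
  · rfl
  · rw [candR_congr H i h]

noncomputable def Ns (H : SimpleGraph (Fin n)) (k : ℕ) : ℕ → ℕ → Set ℕ
  | 0 => fun _ => ∅
  | m+1 => fun i => if i = m then stepF H k (Ns H k m) i else Ns H k m i

/-- The earlier-neighbor sets of the constructed simple `(k+1)`-tree. -/
noncomputable def NF (H : SimpleGraph (Fin n)) (k : ℕ) (i : ℕ) : Set ℕ :=
  Ns H k (i+1) i

lemma Ns_eq (H : SimpleGraph (Fin n)) (k : ℕ) :
    ∀ m i, i < m → Ns H k m i = NF H k i := by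
  intro m
  induction m with
  | zero => exact fun i hi => absurd hi (Nat.not_lt_zero i)
  | succ m ih =>
    intro i hi
    rcases Nat.lt_succ_iff_lt_or_eq.mp hi with h | h
    · show (if i = m then _ else _) = _
      rw [if_neg (by omega)]
      exact ih i h
    · subst h
      simp [Ns, NF]

lemma NF_eq (H : SimpleGraph (Fin n)) (k : ℕ) (i : ℕ) :
    NF H k i = stepF H k (NF H k) i := by
  have h1 : NF H k i = stepF H k (Ns H k i) i := by simp [NF, Ns]
  rw [h1]
  exact stepF_congr H k i (fun j hj => Ns_eq H k i j hj)

/-- the final candidate set. -/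
noncomputable def cand (H : SimpleGraph (Fin n)) (k : ℕ) (i : ℕ) : Set ℕ :=
  candR H (NF H k) i

lemma NF_of_lt {H : SimpleGraph (Fin n)} {k i : ℕ} (h : i < k + 2) :
    NF H k i = {j | j < i} := by
  rw [NF_eq]; unfold stepF; rw [if_pos h]

lemma NF_of_ge {H : SimpleGraph (Fin n)} {k i : ℕ} (h : k + 2 ≤ i) :
    NF H k i = CN H i ∪ {sSup (cand H k i)} := by
  rw [NF_eq]; unfold stepF; rw [if_neg (by omega)]; rfl

lemma cand_bddAbove (H : SimpleGraph (Fin n)) (k i : ℕ) : BddAbove (cand H k i) :=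
  ⟨i, fun v hv => le_of_lt hv.1⟩

lemma mem_NF_lt {H : SimpleGraph (Fin n)} {k i j : ℕ} (hj : j ∈ NF H k i) : j < i := by
  by_cases h : i < k + 2
  · rw [NF_of_lt h] at hj; exact hj
  · rw [NF_of_ge (by omega)] at hj
    rcases hj with hj | hj
    · exact CN_lt hj
    · rw [Set.mem_singleton_iff] at hj
      subst hj
      by_cases hc : (cand H k i).Nonempty
      · exact (Nat.sSup_mem hc (cand_bddAbove H k i)).1
      · rw [Set.not_nonempty_iff_eq_empty] at hc
        rw [hc, csSup_empty]
        show 0 < i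
        omega

/-- The constructed simple `(k+1)`-tree. -/
def G' (H : SimpleGraph (Fin n)) (k : ℕ) : SimpleGraph (Fin n) where
  Adj u v := u ≠ v ∧ (u.val ∈ NF H k v.val ∨ v.val ∈ NF H k u.val)
  symm := ⟨fun u v ⟨h1, h2⟩ => ⟨h1.symm, h2.symm⟩⟩
  loopless := ⟨fun u h => h.1 rfl⟩

lemma G'_adj_of_lt {H : SimpleGraph (Fin n)} {k : ℕ} {u v : Fin n} (h : v < u) :
    (G' H k).Adj u v ↔ v.val ∈ NF H k u.val := by
  constructor
  · rintro ⟨-, h2 | h2⟩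
    · exact absurd (mem_NF_lt h2) (not_lt.mpr (le_of_lt (Fin.lt_def.mp h)))
    · exact h2
  · intro h2
    exact ⟨(ne_of_lt h).symm, Or.inr h2⟩

lemma earlierNbrs_G' (H : SimpleGraph (Fin n)) (k : ℕ) (i : Fin n) :
    earlierNbrs (G' H k) i = {j : Fin n | j.val ∈ NF H k i.val} := by
  ext j
  simp only [earlierNbrs, Set.mem_setOf_eq]
  constructor
  · rintro ⟨hadj, hlt⟩
    exact (G'_adj_of_lt hlt).mp hadj
  · intro hj
    have hlt : j < i := Fin.lt_def.mpr (mem_NF_lt hj)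
    exact ⟨(G'_adj_of_lt hlt).mpr hj, hlt⟩

lemma adj_G' {H : SimpleGraph (Fin n)} {k : ℕ} {u v : Fin n} (h : H.Adj u v) :
    (G' H k).Adj u v := by
  have key : ∀ a b : Fin n, H.Adj a b → b < a → b.val ∈ NF H k a.val := by
    intro a b hab hba
    by_cases ha : a.val < k + 2
    · rw [NF_of_lt ha]
      exact Fin.lt_def.mp hba
    · rw [NF_of_ge (by omega)]
      exact Or.inl ⟨a.isLt, b.isLt, hab, Fin.lt_def.mp hba⟩
  rcases lt_trichotomy v u with hlt | heq | hlt
  · exact ⟨h.ne, Or.inr (key u v h hlt)⟩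
  · exact absurd heq (fun he => h.ne he.symm)
  · exact ⟨h.ne, Or.inl (key v u h.symm hlt)⟩

lemma earlierNbrs_mono {H : SimpleGraph (Fin n)} {k : ℕ} (i : Fin n) :
    earlierNbrs H i ⊆ earlierNbrs (G' H k) i :=
  fun _ hj => ⟨adj_G' hj.1, hj.2⟩

lemma cand_nonempty {H : SimpleGraph (Fin n)} {k : ℕ} (hk : IsKTreeOrder k H)
    {i : ℕ} (hi : k + 2 ≤ i) (hin : i < n) : (cand H k i).Nonempty := by
  -- first, the graph-theoretic core: a vertex outside C adjacent (in H) to all of C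
  set ifin : Fin n := ⟨i, hin⟩ with hifin
  set C := earlierNbrs H ifin with hCdef
  obtain ⟨hC, hCpw⟩ := hk.2.2 ifin (by show k + 1 ≤ i; omega)
  have key : ∃ vf : Fin n, vf.val < i ∧ vf ∉ C ∧ ∀ u ∈ C, H.Adj vf u := by
    by_cases hCe : C = ∅
    · refine ⟨⟨0, by omega⟩, by simp; omega, by simp [hCe], by simp [hCe]⟩
    · have hCne : C.Nonempty := Set.nonempty_iff_ne_empty.mpr hCe
      obtain ⟨m, hm, hmax⟩ := Set.Finite.exists_maximalFor id C (Set.toFinite C) hCne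
      have hmax' : ∀ x ∈ C, x ≤ m := by
        intro x hx
        rcases le_total x m with h | h
        · exact h
        · exact hmax hx h
      have hmi : m.val < i := by
        have := hm.2
        rw [Fin.lt_def] at this
        exact this
      by_cases hml : m.val < k + 1
      · set T : Set (Fin n) := {u | u.val < k + 1} with hTdef
        have hCT : C ⊆ T := fun u hu =>
          lt_of_le_of_lt (Fin.le_def.mp (hmax' u hu)) hml
        have hT : T.ncard = k + 1 := by
          have hrange : T = Set.range (Fin.castLE (show k + 1 ≤ n by omega)) :=
            (Fin.range_castLE _).symm
          rw [hrange, ← Nat.card_coe_set_eq,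
            Nat.card_range_of_injective (Fin.castLE_injective _),
            Nat.card_eq_fintype_card, Fintype.card_fin]
        have hex : ∃ v ∈ T, v ∉ C := by
          by_contra hcon
          push_neg at hcon
          have : T = C := Set.Subset.antisymm hcon hCT
          rw [this, hC] at hT
          omega
        obtain ⟨vf, hvT, hvC⟩ := hex
        refine ⟨vf, by have : vf.val < k + 1 := hvT; omega, hvC, fun u hu => ?_⟩
        exact hk.2.1 vf u hvT (hCT hu) (fun he => hvC (he ▸ hu))
      · obtain ⟨hD, hDpw⟩ := hk.2.2 m (by omega)
        have hsub : C \ {m} ⊆ earlierNbrs H m := by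
          rintro u ⟨huC, hum⟩
          have hne : u ≠ m := by simpa using hum
          have hlt : u < m := lt_of_le_of_ne (hmax' u huC) hne
          exact ⟨hCpw hm huC hne.symm, hlt⟩
        have hk1 : 1 ≤ k := by
          by_contra hcon
          have hk0 : k = 0 := by omega
          have : C = ∅ := (Set.ncard_eq_zero (Set.toFinite C)).mp (by rw [hC, hk0])
          exact hCe this
        have hcd : (C \ {m}).ncard = k - 1 := by
          rw [Set.ncard_diff_singleton_of_mem hm, hC]
        have hex : ∃ v ∈ earlierNbrs H m, v ∉ C \ {m} := by
          by_contra hcon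
          push_neg at hcon
          have heqD : earlierNbrs H m = C \ {m} := Set.Subset.antisymm hcon hsub
          rw [heqD, hcd] at hD
          omega
        obtain ⟨vf, hvD, hvCm⟩ := hex
        have hvm : vf ≠ m := by
          intro he
          have := hvD.2
          rw [he] at this
          exact absurd this (lt_irrefl m)
        have hvC : vf ∉ C := fun h => hvCm ⟨h, by simpa using hvm⟩
        have hvlt : vf.val < i := by
          have h1 : vf < m := hvD.2
          rw [Fin.lt_def] at h1
          omega
        refine ⟨vf, hvlt, hvC, fun u hu => ?_⟩
        by_cases hum : u = m
        · subst hum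
          exact hvD.1.symm
        · have huD : u ∈ earlierNbrs H m := hsub ⟨hu, by simpa using hum⟩
          exact hDpw hvD huD (fun he => hvC (he ▸ hu))
  obtain ⟨vf, hvlt, hvC, hvadj⟩ := key
  refine ⟨vf.val, hvlt, ?_, ?_⟩
  · intro hmem
    obtain ⟨hj, hmem'⟩ := (mem_CN (i := ifin)).mp hmem
    exact hvC hmem'
  · intro u hu
    obtain ⟨hun, humem⟩ := (mem_CN (i := ifin)).mp hu
    have hadj' : (G' H k).Adj vf ⟨u, hun⟩ := adj_G' (hvadj _ humem)
    constructor
    · intro huv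
      exact (G'_adj_of_lt (show (⟨u, hun⟩ : Fin n) < vf from Fin.lt_def.mpr huv)).mp hadj'
    · intro hvu
      exact (G'_adj_of_lt (show vf < (⟨u, hun⟩ : Fin n) from Fin.lt_def.mpr hvu)).mp hadj'.symm

theorem G'_isSimple {H : SimpleGraph (Fin n)} {k : ℕ} (hk : IsKTreeOrder k H)
    (hn : k + 2 ≤ n) : IsSimpleKTreeOrder (k + 1) (G' H k) := by
  constructor
  · refine ⟨hn, ?_, ?_⟩
    · intro i j hi hj hij
      rcases lt_trichotomy j i with h | h | h
      · exact ⟨hij, Or.inr (by rw [NF_of_lt hi]; exact Fin.lt_def.mp h)⟩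
      · exact absurd h.symm hij
      · exact ⟨hij, Or.inl (by rw [NF_of_lt hj]; exact Fin.lt_def.mp h)⟩
    · intro i hi
      have hi2 : k + 2 ≤ i.val := hi
      set vi := sSup (cand H k i.val) with hvidef
      have hvic : vi ∈ cand H k i.val :=
        Nat.sSup_mem (cand_nonempty hk hi2 i.isLt) (cand_bddAbove H k i.val)
      have hvilt : vi < i.val := hvic.1
      have hvin : vi < n := hvilt.trans i.isLt
      set vf : Fin n := ⟨vi, hvin⟩ with hvfdef
      have hvfC : vf ∉ earlierNbrs H i := by
        intro hmem
        exact hvic.2.1 (mem_CN.mpr ⟨hvin, hmem⟩)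
      have hE : earlierNbrs (G' H k) i = insert vf (earlierNbrs H i) := by
        rw [earlierNbrs_G']
        ext j
        simp only [Set.mem_setOf_eq, Set.mem_insert_iff]
        rw [NF_of_ge hi2, Set.mem_union, Set.mem_singleton_iff]
        constructor
        · rintro (hj | hj)
          · obtain ⟨hjn, hmem⟩ := mem_CN.mp hj
            exact Or.inr hmem
          · exact Or.inl (Fin.ext hj)
        · rintro (rfl | hj)
          · exact Or.inr rfl
          · exact Or.inl (mem_CN.mpr ⟨j.isLt, hj⟩)
      have hadjv : ∀ u ∈ earlierNbrs H i, (G' H k).Adj vf u := by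
        intro u hu
        have huCN : u.val ∈ CN H i.val := mem_CN.mpr ⟨u.isLt, hu⟩
        have h3 := hvic.2.2 u.val huCN
        have hne : vf ≠ u := by
          intro he
          exact hvfC (he ▸ hu)
        rcases lt_trichotomy u.val vi with h | h | h
        · exact ⟨hne, Or.inr (h3.1 h)⟩
        · exact absurd (Fin.ext h.symm) hne
        · exact ⟨hne, Or.inl (h3.2 h)⟩
      constructor
      · rw [hE, Set.ncard_insert_of_notMem hvfC (Set.toFinite _),
          (hk.2.2 i (by omega)).1]
      · rw [hE]
        have hpw := (hk.2.2 i (by omega)).2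
        intro a ha b hb hab
        simp only [Set.mem_insert_iff] at ha hb
        rcases ha with rfl | ha <;> rcases hb with rfl | hb
        · exact absurd rfl hab
        · exact hadjv b hb
        · exact (hadjv a ha).symm
        · exact adj_G' (hpw ha hb hab)
  · have key : ∀ a b : Fin n, k + 2 ≤ b.val → a < b →
        earlierNbrs (G' H k) a ≠ earlierNbrs (G' H k) b := by
      intro a b hb hab heq
      set w := sSup (cand H k b.val) with hwdef
      have hwN : w ∈ NF H k b.val := by
        rw [NF_of_ge hb]
        exact Or.inr rfl
      have hwb : w < b.val := mem_NF_lt hwN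
      have hwn : w < n := hwb.trans b.isLt
      have hwS : (⟨w, hwn⟩ : Fin n) ∈ earlierNbrs (G' H k) b := by
        rw [earlierNbrs_G']
        exact hwN
      rw [← heq] at hwS
      have hwa : w < a.val := by
        rw [earlierNbrs_G'] at hwS
        exact mem_NF_lt hwS
      have hacand : a.val ∈ cand H k b.val := by
        refine ⟨Fin.lt_def.mp hab, ?_, ?_⟩
        · intro hmem
          obtain ⟨han, hmem'⟩ := mem_CN.mp hmem
          have h1 : a ∈ earlierNbrs (G' H k) b := earlierNbrs_mono b hmem'
          rw [← heq] at h1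
          exact absurd h1.2 (lt_irrefl a)
        · intro u hu
          obtain ⟨hun, humem⟩ := mem_CN.mp hu
          have h1 : (⟨u, hun⟩ : Fin n) ∈ earlierNbrs (G' H k) b :=
            earlierNbrs_mono b humem
          rw [← heq, earlierNbrs_G'] at h1
          have hua : u < a.val := mem_NF_lt h1
          exact ⟨fun _ => h1, fun h => absurd h (by omega)⟩
      have : a.val ≤ w := le_csSup (cand_bddAbove H k b.val) hacand
      omega
    intro i i' hi hi' hne heq
    rcases lt_trichotomy i i' with h | h | h
    · exact key i i' hi' h heq
    · exact hne h
    · exact key i' i hi h heq.symm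

end STW

/-- For every graph `G`, `tw(G) ≤ stw(G) ≤ tw(G) + 1`. -/
theorem treeWidth_le_simpleTreeWidth_le_succ {V : Type*} [Fintype V]
    (G : SimpleGraph V) :
    treeWidth G ≤ simpleTreeWidth G ∧ simpleTreeWidth G ≤ treeWidth G + 1 := by
  classical
  set Sset := {k | ∃ (n : ℕ) (H : SimpleGraph (Fin n)) (f : V → Fin n),
    IsSimpleKTreeOrder k H ∧ Function.Injective f ∧ ∀ u v, G.Adj u v → H.Adj (f u) (f v)}
    with hSdef
  set Tset := {k | ∃ (n : ℕ) (H : SimpleGraph (Fin n)) (f : V → Fin n),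
    IsKTreeOrder k H ∧ Function.Injective f ∧ ∀ u v, G.Adj u v → H.Adj (f u) (f v)}
    with hTdef
  have hsub : Sset ⊆ Tset := by
    rintro k ⟨n, H, f, hH, hf, ha⟩
    exact ⟨n, H, f, hH.1, hf, ha⟩
  have hSne : Sset.Nonempty := by
    refine ⟨Fintype.card V, Fintype.card V + 1, ⊤,
      fun v => Fin.castSucc ((Fintype.equivFin V) v), ?_, ?_, ?_⟩
    · refine ⟨⟨le_refl _, fun i j _ _ hij => by simpa using hij,
        fun i hi => absurd i.isLt (by omega)⟩,
        fun i i' hi _ _ => absurd i.isLt (by omega)⟩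
    · exact (Fin.castSucc_injective _).comp (Equiv.injective _)
    · intro u v huv
      have hne : Fin.castSucc ((Fintype.equivFin V) u) ≠ Fin.castSucc ((Fintype.equivFin V) v) := by
        intro he
        exact G.ne_of_adj huv (Equiv.injective _ (Fin.castSucc_injective _ he))
      simpa using hne
  have hTne : Tset.Nonempty := ⟨_, hsub hSne.choose_spec⟩
  have htw : treeWidth G = sInf Tset := rfl
  have hstw : simpleTreeWidth G = sInf Sset := rfl
  constructor
  · rw [htw, hstw]
    exact Nat.sInf_le (hsub (Nat.sInf_mem hSne))
  · rw [htw, hstw]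
    obtain ⟨n, H, f, hH, hf, ha⟩ := Nat.sInf_mem hTne
    set k := sInf Tset with hkdef
    apply Nat.sInf_le
    by_cases hn : k + 2 ≤ n
    · exact ⟨n, STW.G' H k, f, STW.G'_isSimple hH hn, hf,
        fun u v h => STW.adj_G' (ha u v h)⟩
    · have hn1 : n = k + 1 := by have := hH.1; omega
      refine ⟨k + 2, ⊤, fun v => Fin.castLE (by omega) (f v), ?_, ?_, ?_⟩
      · refine ⟨⟨le_refl _, fun i j _ _ hij => by simpa using hij,
          fun i hi => absurd i.isLt (by omega)⟩,
          fun i i' hi _ _ => absurd i.isLt (by omega)⟩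
      · exact (Fin.castLE_injective _).comp hf
      · intro u v huv
        have hne : Fin.castLE (show n ≤ k + 2 by omega) (f u) ≠ Fin.castLE (by omega) (f v) := by
          intro he
          exact G.ne_of_adj huv (hf (Fin.castLE_injective _ he))
        simpa using hne
end

section
/- Let G be a graph containing an induced complete bipartite subgraph with parts A (|A| = m) and B (|B| = n), and let φ be a cover of G by caterpillar forests in which every vertex of A has at most s preimages. Let ψ be the restriction of φ obtained by deleting all edges between A and B. Then at least n − 2sm vertices b ∈ B satisfy |ψ⁻¹(b)| ≤ |φ⁻¹(b)| − m. -/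
/-- A vertex is internal in `C` if it has at least two distinct neighbors. -/
def Internal {W : Type*} (C : SimpleGraph W) (x : W) : Prop :=
  ∃ p q, p ≠ q ∧ C.Adj x p ∧ C.Adj x q

/-- A caterpillar forest: a forest each of whose components is a caterpillar, i.e. its
non-leaf vertices form a path. Equivalently, the graph is acyclic and no vertex has
three distinct internal neighbors. -/
def IsCaterpillarForest {W : Type*} (C : SimpleGraph W) : Prop :=
  C.IsAcyclic ∧ ∀ u a b c, C.Adj u a → C.Adj u b → C.Adj u c →
    a ≠ b → a ≠ c → b ≠ c → ¬(Internal C a ∧ Internal C b ∧ Internal C c)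

theorem caterpillar_cover_lemma {V : Type*} [Fintype V] (G : SimpleGraph V)
    (A B : Finset V) (m n : ℕ) (hA : A.card = m) (hB : B.card = n)
    (hAB : Disjoint A B)
    (hbip : ∀ a ∈ A, ∀ b ∈ B, G.Adj a b)
    (hindA : ∀ a ∈ A, ∀ a' ∈ A, ¬ G.Adj a a')
    (hindB : ∀ b ∈ B, ∀ b' ∈ B, ¬ G.Adj b b')
    {ι : Type*} (W : ι → Type*) (C : ∀ i, SimpleGraph (W i))
    [Finite ((i : ι) × W i)]
    (hcat : ∀ i, IsCaterpillarForest (C i))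
    (φ : ((i : ι) × W i) → V)
    (hhom : ∀ (i : ι) (a b : W i), (C i).Adj a b → G.Adj (φ ⟨i, a⟩) (φ ⟨i, b⟩))
    (hsurj : ∀ e ∈ G.edgeSet, ∃ (i : ι) (a b : W i),
      (C i).Adj a b ∧ e = s(φ ⟨i, a⟩, φ ⟨i, b⟩))
    (s : ℕ) (hs : ∀ a ∈ A, Nat.card {x : (i : ι) × W i // φ x = a} ≤ s) :
    n - 2 * s * m ≤
      {b : V | b ∈ B ∧
        Nat.card {x : (i : ι) × W i // φ x = b ∧
          ∃ y : W x.1, (C x.1).Adj x.2 y ∧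
            ¬((φ x ∈ A ∧ φ ⟨x.1, y⟩ ∈ B) ∨ (φ x ∈ B ∧ φ ⟨x.1, y⟩ ∈ A))} + m ≤
        Nat.card {x : (i : ι) × W i // φ x = b}}.ncard := by
  classical
  subst hA hB
  haveI : Fintype ((i : ι) × W i) := Fintype.ofFinite _
  -- Nat.card of a subtype as a filter card
  have hN : ∀ P : ((i : ι) × W i) → Prop, Nat.card {x : (i : ι) × W i // P x} = (Finset.univ.filter P).card := by
    intro P
    rw [Nat.card_eq_fintype_card, Fintype.card_subtype]
  have hN' : ∀ (P : ((i : ι) × W i) → Prop) (inst : DecidablePred P),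
      Nat.card {x : (i : ι) × W i // P x} = (@Finset.filter _ P inst Finset.univ).card := by
    intro P inst
    rw [Nat.card_eq_fintype_card]
    exact @Fintype.card_subtype _ _ P _ inst
  -- the "good" predicate: edge {a,b} is covered with b as a leaf
  set Good : V → V → Prop := fun b a => ∃ i, ∃ x y : W i, (C i).Adj x y ∧
      φ ⟨i, x⟩ = b ∧ φ ⟨i, y⟩ = a ∧ ¬ Internal (C i) x with hGood
  -- every A-B edge is covered
  have hcov : ∀ a ∈ A, ∀ b ∈ B, ∃ i, ∃ x y : W i, (C i).Adj x y ∧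
      φ ⟨i, x⟩ = b ∧ φ ⟨i, y⟩ = a := by
    intro a ha b hb
    obtain ⟨i, x, y, hadj, he⟩ := hsurj s(a, b) ((G.mem_edgeSet).mpr (hbip a ha b hb))
    rw [Sym2.eq_iff] at he
    rcases he with ⟨h1, h2⟩ | ⟨h1, h2⟩
    · exact ⟨i, y, x, hadj.symm, h2.symm, h1.symm⟩
    · exact ⟨i, x, y, hadj, h2.symm, h1.symm⟩
  -- if b is bad for a, there is an internal covering preimage of b
  have hbadwit : ∀ a ∈ A, ∀ b ∈ B, ¬ Good b a → ∃ i, ∃ x y : W i, (C i).Adj x y ∧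
      φ ⟨i, x⟩ = b ∧ φ ⟨i, y⟩ = a ∧ Internal (C i) x := by
    intro a ha b hb hng
    obtain ⟨i, x, y, hadj, hx, hy⟩ := hcov a ha b hb
    by_cases hI : Internal (C i) x
    · exact ⟨i, x, y, hadj, hx, hy, hI⟩
    · exact absurd ⟨i, x, y, hadj, hx, hy, hI⟩ hng
  -- STEP 1: if b is good for every a ∈ A, the cardinality inequality holds
  have step1 : ∀ b ∈ B, (∀ a ∈ A, Good b a) →
      Nat.card {x : (i : ι) × W i // φ x = b ∧
          ∃ y : W x.1, (C x.1).Adj x.2 y ∧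
            ¬((φ x ∈ A ∧ φ ⟨x.1, y⟩ ∈ B) ∨ (φ x ∈ B ∧ φ ⟨x.1, y⟩ ∈ A))} + A.card ≤
        Nat.card {x : (i : ι) × W i // φ x = b} := by
    intro b hb hgood
    set Psi := Finset.univ.filter (fun x : (i : ι) × W i => φ x = b ∧
          ∃ y : W x.1, (C x.1).Adj x.2 y ∧
            ¬((φ x ∈ A ∧ φ ⟨x.1, y⟩ ∈ B) ∨ (φ x ∈ B ∧ φ ⟨x.1, y⟩ ∈ A))) with hPsi
    set Phi := Finset.univ.filter (fun x : (i : ι) × W i => φ x = b) with hPhi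
    have hsub : Psi ⊆ Phi := by
      intro x hx
      simp only [hPsi, hPhi, Finset.mem_filter] at hx ⊢
      exact ⟨hx.1, hx.2.1⟩
    have hgood' : ∀ a : {a // a ∈ A}, ∃ i, ∃ x y : W i, (C i).Adj x y ∧
        φ ⟨i, x⟩ = b ∧ φ ⟨i, y⟩ = (a : V) ∧ ¬ Internal (C i) x := fun a => hgood a.1 a.2
    choose gi gx gy hadj hgx hgy hint using hgood'
    set f : {a // a ∈ A} → ((i : ι) × W i) := fun a => ⟨gi a, gx a⟩ with hf
    have hNb : ∀ a : {a // a ∈ A}, ∃ y : W (f a).1, (C (f a).1).Adj (f a).2 y ∧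
        φ ⟨(f a).1, y⟩ = (a : V) := fun a => ⟨gy a, hadj a, hgy a⟩
    have hNI : ∀ a : {a // a ∈ A}, ¬ Internal (C (f a).1) (f a).2 := hint
    have hmaps : ∀ a ∈ A.attach, f a ∈ Phi \ Psi := by
      intro a _
      rw [Finset.mem_sdiff]
      constructor
      · simp only [hPhi, Finset.mem_filter]
        exact ⟨Finset.mem_univ _, hgx a⟩
      · simp only [hPsi, Finset.mem_filter]
        rintro ⟨-, -, y', hy'adj, hy'⟩
        have huniq : y' = gy a := by
          by_contra hne
          exact hint a ⟨y', gy a, hne, hy'adj, hadj a⟩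
        subst huniq
        exact hy' (Or.inr ⟨(hgx a) ▸ hb, (hgy a) ▸ a.2⟩)
    have hinj : Set.InjOn f A.attach := by
      intro a _ a' _ h
      obtain ⟨y, hy1, hy2⟩ := hNb a
      have h2 := hNb a'
      rw [← h] at h2
      obtain ⟨y', hy1', hy2'⟩ := h2
      have : y = y' := by
        by_contra hne
        exact hNI a ⟨y, y', hne, hy1, hy1'⟩
      subst this
      exact Subtype.ext (hy2 ▸ hy2')
    have hcard : A.card ≤ (Phi \ Psi).card := by
      rw [← Finset.card_attach]
      exact Finset.card_le_card_of_injOn f hmaps hinj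
    have := Finset.card_sdiff_add_card_eq_card hsub
    have e1 : Nat.card {x : (i : ι) × W i // φ x = b ∧
          ∃ y : W x.1, (C x.1).Adj x.2 y ∧
            ¬((φ x ∈ A ∧ φ ⟨x.1, y⟩ ∈ B) ∨ (φ x ∈ B ∧ φ ⟨x.1, y⟩ ∈ A))} = Psi.card := by
      rw [hPsi]; exact hN' _ _
    have e2 : Nat.card {x : (i : ι) × W i // φ x = b} = Phi.card := by
      rw [hPhi]; exact hN' _ _
    rw [e1, e2]
    omega
  -- STEP 2: for each a ∈ A, at most 2s vertices of B are bad for a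
  have step2 : ∀ a ∈ A, (B.filter (fun b => ¬ Good b a)).card ≤ 2 * s := by
    intro a ha
    set T := Finset.univ.filter (fun z : (i : ι) × W i => Internal (C z.1) z.2 ∧
        ∃ w : W z.1, (C z.1).Adj z.2 w ∧ φ ⟨z.1, w⟩ = a) with hT
    set Bad := B.filter (fun b => ¬ Good b a) with hBad
    -- inject Bad into T
    have hwit : ∀ b : {b // b ∈ Bad}, ∃ i, ∃ x y : W i, (C i).Adj x y ∧
        φ ⟨i, x⟩ = (b : V) ∧ φ ⟨i, y⟩ = a ∧ Internal (C i) x := by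
      intro b
      have hb := Finset.mem_filter.mp b.2
      exact hbadwit a ha b.1 hb.1 hb.2
    choose gi gx gy hadj hgx hgy hint using hwit
    set f : {b // b ∈ Bad} → ((i : ι) × W i) := fun b => ⟨gi b, gx b⟩ with hf
    have hmaps : ∀ b ∈ Bad.attach, f b ∈ T := by
      intro b _
      simp only [hT, Finset.mem_filter]
      exact ⟨Finset.mem_univ _, hint b, gy b, hadj b, hgy b⟩
    have hinj : Set.InjOn f Bad.attach := by
      intro b _ b' _ h
      have : φ (f b) = φ (f b') := by rw [h]
      rw [hgx b, hgx b'] at this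
      exact Subtype.ext this
    have hcard1 : Bad.card ≤ T.card := by
      rw [← Finset.card_attach]
      exact Finset.card_le_card_of_injOn f hmaps hinj
    -- map T to preimages of a, with fibers of size ≤ 2
    set Pa := Finset.univ.filter (fun z : (i : ι) × W i => φ z = a) with hPa
    have hTw' : ∀ z : (i : ι) × W i, ∃ w : W z.1, z ∈ T →
        ((C z.1).Adj z.2 w ∧ φ ⟨z.1, w⟩ = a) := by
      intro z
      by_cases hz : z ∈ T
      · obtain ⟨w, hw⟩ := (Finset.mem_filter.mp hz).2.2
        exact ⟨w, fun _ => hw⟩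
      · exact ⟨z.2, fun h => absurd h hz⟩
    choose gw hgw using hTw'
    set g : ((i : ι) × W i) → ((i : ι) × W i) := fun z => ⟨z.1, gw z⟩ with hg
    have key : ∀ z ∈ T, ∃ y : W (g z).1, (C (g z).1).Adj (g z).2 y ∧
        (⟨(g z).1, y⟩ : (i : ι) × W i) = z ∧ Internal (C (g z).1) y := by
      intro z hz
      have hzI : Internal (C z.1) z.2 := (Finset.mem_filter.mp hz).2.1
      exact ⟨z.2, ((hgw z hz).1).symm, Sigma.eta z, hzI⟩
    have hmaps2 : ∀ z ∈ T, g z ∈ Pa := by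
      intro z hz
      simp only [hPa, Finset.mem_filter]
      exact ⟨Finset.mem_univ _, (hgw z hz).2⟩
    have hfib : ∀ w' ∈ Pa, (T.filter (fun z => g z = w')).card ≤ 2 := by
      intro w' _
      by_contra hlt
      push_neg at hlt
      rw [Finset.two_lt_card_iff] at hlt
      obtain ⟨z1, z2, z3, hz1, hz2, hz3, h12, h13, h23⟩ := hlt
      rw [Finset.mem_filter] at hz1 hz2 hz3
      have P1 := key z1 hz1.1; rw [hz1.2] at P1
      have P2 := key z2 hz2.1; rw [hz2.2] at P2
      have P3 := key z3 hz3.1; rw [hz3.2] at P3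
      obtain ⟨y1, hy1a, hy1e, hy1i⟩ := P1
      obtain ⟨y2, hy2a, hy2e, hy2i⟩ := P2
      obtain ⟨y3, hy3a, hy3e, hy3i⟩ := P3
      have d12 : y1 ≠ y2 := fun h => h12 (hy1e ▸ hy2e ▸ (by rw [h]))
      have d13 : y1 ≠ y3 := fun h => h13 (hy1e ▸ hy3e ▸ (by rw [h]))
      have d23 : y2 ≠ y3 := fun h => h23 (hy2e ▸ hy3e ▸ (by rw [h]))
      exact (hcat w'.1).2 w'.2 y1 y2 y3 hy1a hy2a hy3a d12 d13 d23 ⟨hy1i, hy2i, hy3i⟩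
    have hcard2 : T.card ≤ 2 * Pa.card :=
      Finset.card_le_mul_card_image_of_maps_to hmaps2 2 hfib
    have hPas : Pa.card ≤ s := by
      have := hs a ha
      rw [hN (fun x : (i : ι) × W i => φ x = a)] at this
      simpa only [Finset.filter_congr_decidable] using this
    calc Bad.card ≤ T.card := hcard1
      _ ≤ 2 * Pa.card := hcard2
      _ ≤ 2 * s := by omega
  -- combine
  set GoodSet := B.filter (fun b => ∀ a ∈ A, Good b a) with hGS
  have hsplit := Finset.card_filter_add_card_filter_not
    (s := B) (p := fun b => ∀ a ∈ A, Good b a)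
  have hbadsub : B.filter (fun b => ¬ ∀ a ∈ A, Good b a) ⊆
      A.biUnion (fun a => B.filter (fun b => ¬ Good b a)) := by
    intro b hb
    rw [Finset.mem_filter] at hb
    push_neg at hb
    obtain ⟨a, ha, hna⟩ := hb.2
    rw [Finset.mem_biUnion]
    exact ⟨a, ha, Finset.mem_filter.mpr ⟨hb.1, hna⟩⟩
  have hbadcard : (B.filter (fun b => ¬ ∀ a ∈ A, Good b a)).card ≤ 2 * s * A.card := by
    calc (B.filter (fun b => ¬ ∀ a ∈ A, Good b a)).card
        ≤ (A.biUnion (fun a => B.filter (fun b => ¬ Good b a))).card :=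
          Finset.card_le_card hbadsub
      _ ≤ ∑ a ∈ A, (B.filter (fun b => ¬ Good b a)).card := Finset.card_biUnion_le
      _ ≤ ∑ _a ∈ A, 2 * s := Finset.sum_le_sum step2
      _ = 2 * s * A.card := by rw [Finset.sum_const, smul_eq_mul, mul_comm]
  rw [← hGS] at hsplit
  have hGScard : B.card - 2 * s * A.card ≤ GoodSet.card := by omega
  have hGSsub : (GoodSet : Set V) ⊆ {b : V | b ∈ B ∧
      Nat.card {x : (i : ι) × W i // φ x = b ∧
          ∃ y : W x.1, (C x.1).Adj x.2 y ∧
            ¬((φ x ∈ A ∧ φ ⟨x.1, y⟩ ∈ B) ∨ (φ x ∈ B ∧ φ ⟨x.1, y⟩ ∈ A))} + A.card ≤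
        Nat.card {x : (i : ι) × W i // φ x = b}} := by
    intro b hb
    rw [Finset.mem_coe, hGS, Finset.mem_filter] at hb
    exact ⟨hb.1, step1 b hb.1 hb.2⟩
  calc B.card - 2 * s * A.card ≤ GoodSet.card := hGScard
    _ = (GoodSet : Set V).ncard := (Set.ncard_coe_finset _).symm
    _ ≤ _ := Set.ncard_le_ncard hGSsub (Set.toFinite _)
end
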